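/- arXiv:1901.01385 — 5 statements merged into one kernel-verified Lean document; each statement's English description precedes it below -/
import Mathlib

section
/- Let K be an algebraically closed field, n ≥ 1, and let σ be an effective regular action of T_n = (K^×)^n on F_n = FreeAlgebra K (Fin n) such that there is an integer matrix (m_{ij}) ∈ M_n(ℤ) with: for all t and i, the element σ(t)(z_i) − (∏_j t_j^{m_{ij}}) • z_i has all of its homogeneous components in degrees ≥ 2 (in particular each σ(t)(z_i) has zero constant term and diagonal monomial linear part). Then the matrix (m_{ij}) is nonsingular, i.e., its determinant is nonzero. -/
open FreeAlgebra

/-- A torus action `σ` of `(Kˣ)^r` on the free algebra is *regular* if the image of each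
generator depends on `t` as a Laurent polynomial with coefficients in the free algebra. -/
def TorusActionIsRegular {K : Type} [Field K] {n r : ℕ}
    (σ : (Fin r → Kˣ) →* (FreeAlgebra K (Fin n) ≃ₐ[K] FreeAlgebra K (Fin n))) : Prop :=
  ∀ i : Fin n, ∃ a : ((Fin r → ℤ) →₀ FreeAlgebra K (Fin n)),
    ∀ t : Fin r → Kˣ,
      σ t (ι K i) = a.sum fun m c => ((∏ j : Fin r, (t j) ^ (m j) : Kˣ) : K) • c

/-- The submodule of the free algebra consisting of the elements all of whose homogeneous
components (in the standard grading where each generator has degree 1) have degree at least 2. -/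
def FreeAlgebra.higherDegree (K : Type) [Field K] (n : ℕ) :
    Submodule K (FreeAlgebra K (Fin n)) :=
  ⨆ k : {k : ℕ // 2 ≤ k},
    Submodule.span K (Set.range (ι K : Fin n → FreeAlgebra K (Fin n))) ^ (k : ℕ)

open DirectSum

set_option maxHeartbeats 1000000
set_option synthInstance.maxHeartbeats 200000

namespace PMN

variable (K : Type) [Field K] (n : ℕ)

noncomputable section

/-- span of the generators -/
def P : Submodule K (FreeAlgebra K (Fin n)) :=
  Submodule.span K (Set.range (ι K : Fin n → FreeAlgebra K (Fin n)))

/-- the grading submodules -/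
def G : ℕ → Submodule K (FreeAlgebra K (Fin n)) := fun k => P K n ^ k

instance : SetLike.GradedMonoid (G K n) :=
  Submodule.nat_power_gradedMonoid (P K n)

variable {K n}

lemma mem_G1_of_mem_P {x : FreeAlgebra K (Fin n)} (hx : x ∈ P K n) : x ∈ G K n 1 := by
  simpa [G] using hx

lemma ι_mem_P (i : Fin n) : ι K i ∈ P K n :=
  Submodule.subset_span ⟨i, rfl⟩

lemma ι_mem_G1 (i : Fin n) : ι K i ∈ G K n 1 := mem_G1_of_mem_P (ι_mem_P i)

variable (K n)

/-- The decomposition map into the direct sum. -/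
def decompose' : FreeAlgebra K (Fin n) →ₐ[K] ⨁ k : ℕ, ↥(G K n k) :=
  FreeAlgebra.lift K fun i =>
    DirectSum.of (fun k : ℕ => ↥(G K n k)) 1 ⟨ι K i, ι_mem_G1 i⟩

variable {K n}

lemma decompose'_ι (i : Fin n) :
    decompose' K n (ι K i) = DirectSum.of (fun k : ℕ => ↥(G K n k)) 1 ⟨ι K i, ι_mem_G1 i⟩ := by
  simp [decompose']

lemma decompose'_of_mem_P {x : FreeAlgebra K (Fin n)} (hx : x ∈ P K n) :
    decompose' K n x = DirectSum.of (fun k : ℕ => ↥(G K n k)) 1 ⟨x, mem_G1_of_mem_P hx⟩ := by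
  induction hx using Submodule.span_induction with
  | mem x hx =>
    obtain ⟨i, rfl⟩ := hx
    exact decompose'_ι i
  | zero =>
    rw [map_zero]
    exact (map_zero (DirectSum.of (fun k : ℕ => ↥(G K n k)) 1)).symm
  | add x y hx hy ihx ihy =>
    rw [map_add, ihx, ihy, ← map_add]
    rfl
  | smul a x hx ih =>
    rw [map_smul, ih, ← DirectSum.lof_eq_of K, ← map_smul]
    rfl

instance gradedAlgebra : GradedAlgebra (G K n) :=
  GradedAlgebra.ofAlgHom _ (decompose' K n)
    (by
      apply FreeAlgebra.hom_ext
      funext i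
      simp only [Function.comp_apply, AlgHom.comp_apply, AlgHom.id_apply]
      rw [decompose'_ι, DirectSum.coeAlgHom_of])
    (fun i x => by
      obtain ⟨x, hx⟩ := x
      dsimp only
      induction hx using Submodule.pow_induction_on_left' with
      | algebraMap r =>
        rw [AlgHom.commutes, DirectSum.algebraMap_apply]; rfl
      | add x y i hx hy ihx ihy =>
        rw [map_add, ihx, ihy, ← AddMonoidHom.map_add]
        rfl
      | mem_mul m hm i x hx ih =>
        rw [map_mul, ih, decompose'_of_mem_P hm, DirectSum.of_mul_of]
        exact DirectSum.of_eq_of_gradedMonoid_eq (Sigma.subtype_ext (add_comm _ _) rfl))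

variable (K n)

/-- projection onto the degree `c` component -/
def proj (c : ℕ) : FreeAlgebra K (Fin n) →ₗ[K] FreeAlgebra K (Fin n) :=
  GradedAlgebra.proj (G K n) c

/-- the submodule of elements of degree at least `a` -/
def T (a : ℕ) : Submodule K (FreeAlgebra K (Fin n)) :=
  ⨆ k : {k : ℕ // a ≤ k}, G K n k

variable {K n}

lemma higherDegree_eq : FreeAlgebra.higherDegree K n = T K n 2 := rfl

lemma proj_apply (c : ℕ) (x : FreeAlgebra K (Fin n)) :
    proj K n c x = (DirectSum.decompose (G K n) x c : FreeAlgebra K (Fin n)) :=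
  rfl

lemma proj_of_mem_same {c : ℕ} {x : FreeAlgebra K (Fin n)} (hx : x ∈ G K n c) :
    proj K n c x = x := by
  rw [proj_apply, DirectSum.decompose_of_mem_same _ hx]

lemma proj_of_mem_ne {k c : ℕ} {x : FreeAlgebra K (Fin n)} (hx : x ∈ G K n k) (h : k ≠ c) :
    proj K n c x = 0 := by
  rw [proj_apply, DirectSum.decompose_of_mem_ne _ hx h]

lemma proj_ι_ne {c : ℕ} (hc : c ≠ 1) (i : Fin n) : proj K n c (ι K i) = 0 :=
  proj_of_mem_ne (ι_mem_G1 i) fun h => hc h.symm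

lemma proj_ι_one (i : Fin n) : proj K n 1 (ι K i) = ι K i :=
  proj_of_mem_same (ι_mem_G1 i)

lemma G_le_T {a k : ℕ} (h : a ≤ k) : G K n k ≤ T K n a :=
  le_iSup (fun k : {k : ℕ // a ≤ k} => G K n (k : ℕ)) ⟨k, h⟩

lemma T_le_T {a b : ℕ} (h : a ≤ b) : T K n b ≤ T K n a :=
  iSup_le fun k => G_le_T (h.trans k.2)

lemma proj_eq_zero_of_mem_T {a c : ℕ} {x : FreeAlgebra K (Fin n)}
    (hx : x ∈ T K n a) (hc : c < a) : proj K n c x = 0 := by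
  refine Submodule.iSup_induction _ (motive := fun x => proj K n c x = 0) hx ?_ (map_zero _) ?_
  · rintro ⟨k, hk⟩ x hx
    exact proj_of_mem_ne hx (show k ≠ c by omega)
  · intro x y hx hy
    rw [map_add, hx, hy, add_zero]

lemma mem_T_of_proj {a : ℕ} {x : FreeAlgebra K (Fin n)}
    (h : ∀ c < a, proj K n c x = 0) : x ∈ T K n a := by
  classical
  rw [← DirectSum.sum_support_decompose (G K n) x]
  refine Submodule.sum_mem _ fun k _ => ?_
  by_cases hka : a ≤ k
  · exact G_le_T hka (SetLike.coe_mem _)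
  · have h0 := h k (by omega)
    rw [proj_apply] at h0
    rw [h0]
    exact Submodule.zero_mem _

lemma T_mul_T {a b : ℕ} {x y : FreeAlgebra K (Fin n)}
    (hx : x ∈ T K n a) (hy : y ∈ T K n b) : x * y ∈ T K n (a + b) := by
  have hle : T K n a * T K n b ≤ T K n (a + b) := by
    rw [T, Submodule.iSup_mul]
    refine iSup_le fun k => ?_
    rw [T, Submodule.mul_iSup]
    refine iSup_le fun l => ?_
    rw [show G K n (k : ℕ) * G K n (l : ℕ) = G K n ((k : ℕ) + (l : ℕ)) from
      (pow_add (P K n) (k : ℕ) (l : ℕ)).symm]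
    exact G_le_T (add_le_add k.2 l.2)
  exact hle (Submodule.mul_mem_mul hx hy)

lemma proj_ext {x y : FreeAlgebra K (Fin n)}
    (h : ∀ c, proj K n c x = proj K n c y) : x = y := by
  apply (DirectSum.decompose (G K n)).injective
  refine DFinsupp.ext fun c => ?_
  exact Subtype.ext (by simpa [proj_apply] using h c)

lemma zpow_finset_sum {G : Type} [CommGroup G] (a : G) {ι : Type} (s : Finset ι) (f : ι → ℤ) :
    a ^ (∑ i ∈ s, f i) = ∏ i ∈ s, a ^ f i := by
  classical
  induction s using Finset.induction with
  | empty => simp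
  | insert _ _ h ih => rw [Finset.sum_insert h, Finset.prod_insert h, zpow_add, ih]

lemma exists_zpow_ne_one (K : Type) [Field K] [Infinite K] {j : ℤ} (hj : j ≠ 0) :
    ∃ s : Kˣ, s ^ j ≠ 1 := by
  by_contra h
  push_neg at h
  have hN0 : j.natAbs ≠ 0 := Int.natAbs_ne_zero.mpr hj
  have hroot : ∀ s : Kˣ, (s : K) ^ j.natAbs = 1 := by
    intro s
    have h1 : s ^ (j.natAbs : ℤ) = 1 := by
      rcases Int.natAbs_eq j with h' | h'
      · rw [← h']; exact h s
      · have hs := h s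
        rw [h'] at hs
        rw [← inv_eq_one, ← zpow_neg]
        exact hs
    have h2 : s ^ j.natAbs = 1 := by rw [← zpow_natCast]; exact h1
    have := congrArg (Units.val) h2
    simpa using this
  have hinf : {x : K |
      (Polynomial.X ^ j.natAbs - Polynomial.C 1 : Polynomial K).IsRoot x}.Infinite := by
    have h1 : ({0}ᶜ : Set K).Infinite := Set.Finite.infinite_compl (Set.finite_singleton 0)
    refine h1.mono ?_
    intro x hx
    have hx0 : x ≠ 0 := hx
    have := hroot (Units.mk0 x hx0)
    simp only [Units.val_mk0] at this
    simp [Polynomial.IsRoot, this]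
  have h2 := Polynomial.eq_zero_of_infinite_isRoot _ hinf
  have h3 := congrArg (Polynomial.eval 0) h2
  simp [zero_pow hN0] at h3

lemma chi_injective (K : Type) [Field K] [Infinite K] :
    Function.Injective (fun k : ℤ => (Units.coeHom K).comp (zpowGroupHom k)) := by
  intro k k' hkk
  by_contra hne
  obtain ⟨s, hs⟩ := exists_zpow_ne_one K (sub_ne_zero.mpr hne)
  apply hs
  have h1 := DFunLike.congr_fun hkk s
  simp only [MonoidHom.comp_apply, Units.coeHom_apply, zpowGroupHom_apply] at h1
  have h2 : s ^ k = s ^ k' := Units.ext h1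
  rw [zpow_sub, h2]
  simp

end
end PMN

/-- If `σ` is an effective regular action of the `n`-torus on the free algebra on `n` generators
whose linear part is diagonal, given by the integer power matrix `m`, then `m` is nonsingular. -/
theorem power_matrix_nonsingular
    {K : Type} [Field K] [IsAlgClosed K] {n : ℕ} (hn : 1 ≤ n)
    (σ : (Fin n → Kˣ) →* (FreeAlgebra K (Fin n) ≃ₐ[K] FreeAlgebra K (Fin n)))
    (hreg : TorusActionIsRegular σ)
    (heff : Function.Injective σ)
    (m : Matrix (Fin n) (Fin n) ℤ)
    (hdiag : ∀ (t : Fin n → Kˣ) (i : Fin n),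
      σ t (ι K i) - ((∏ j : Fin n, (t j) ^ (m i j) : Kˣ) : K) • ι K i
        ∈ FreeAlgebra.higherDegree K n) :
    m.det ≠ 0 := by
  classical
  intro hdet
  obtain ⟨v, hv0, hvz⟩ := (Matrix.exists_mulVec_eq_zero_iff).mpr hdet
  set t : Kˣ → (Fin n → Kˣ) := fun s j => s ^ v j with ht
  -- the diagonal character is trivial on the one-parameter subgroup `t`
  have hrow : ∀ (s : Kˣ) (i : Fin n), (∏ j, (t s j) ^ (m i j)) = (1 : Kˣ) := by
    intro s i
    have h1 : ∀ j, (t s j) ^ (m i j) = s ^ (m i j * v j) := by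
      intro j
      rw [ht]
      dsimp only
      rw [← zpow_mul, mul_comm]
    calc ∏ j, (t s j) ^ (m i j) = ∏ j, s ^ (m i j * v j) := by
          exact Finset.prod_congr rfl fun j _ => h1 j
      _ = s ^ (∑ j, m i j * v j) := (PMN.zpow_finset_sum s Finset.univ _).symm
      _ = 1 := by
          have hz : (∑ j, m i j * v j) = 0 := by
            have := congrFun hvz i
            simpa [Matrix.mulVec, dotProduct] using this
          rw [hz, zpow_zero]
  have hdiag' : ∀ (s : Kˣ) (i : Fin n),
      σ (t s) (ι K i) - ι K i ∈ PMN.T K n 2 := by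
    intro s i
    have h := hdiag (t s) i
    rw [PMN.higherDegree_eq] at h
    rw [hrow s i] at h
    simpa using h
  -- composition law
  have hcomp : ∀ (s s' : Kˣ) (x : FreeAlgebra K (Fin n)),
      σ (t (s * s')) x = σ (t s) (σ (t s') x) := by
    intro s s' x
    have ht_mul : t (s * s') = t s * t s' := by
      funext j
      simp [ht, mul_zpow]
    rw [ht_mul, map_mul]
    rfl
  -- linear part of the action on the span of the generators is trivial mod higher degree
  have hP2 : ∀ (s : Kˣ) (x : FreeAlgebra K (Fin n)), x ∈ PMN.P K n →
      σ (t s) x - x ∈ PMN.T K n 2 := by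
    intro s x hx
    induction hx using Submodule.span_induction with
    | mem x hx =>
      obtain ⟨i, rfl⟩ := hx
      exact hdiag' s i
    | zero => simpa using Submodule.zero_mem _
    | add x y hx hy ihx ihy =>
      have h : σ (t s) (x + y) - (x + y) = (σ (t s) x - x) + (σ (t s) y - y) := by
        rw [map_add]; abel
      rw [h]; exact add_mem ihx ihy
    | smul a x hx ih =>
      have h : σ (t s) (a • x) - a • x = a • (σ (t s) x - x) := by
        rw [map_smul, smul_sub]
      rw [h]; exact Submodule.smul_mem _ a ih
  -- the action moves homogeneous elements only by higher degree terms
  have hpow : ∀ (s : Kˣ) (e : ℕ) (x : FreeAlgebra K (Fin n)), x ∈ PMN.G K n e →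
      σ (t s) x - x ∈ PMN.T K n (e + 1) := by
    intro s e x hx
    induction hx using Submodule.pow_induction_on_left' with
    | algebraMap r =>
      have h : σ (t s) (algebraMap K (FreeAlgebra K (Fin n)) r)
          - algebraMap K (FreeAlgebra K (Fin n)) r = 0 := by
        rw [AlgEquiv.commutes, sub_self]
      rw [h]; exact Submodule.zero_mem _
    | add x y i hx hy ihx ihy =>
      have h : σ (t s) (x + y) - (x + y) = (σ (t s) x - x) + (σ (t s) y - y) := by
        rw [map_add]; abel
      rw [h]; exact add_mem ihx ihy
    | mem_mul mm hmm i x hx ih =>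
      have hmmG : mm ∈ PMN.G K n 1 := PMN.mem_G1_of_mem_P hmm
      have hxT : σ (t s) x ∈ PMN.T K n i := by
        have h : σ (t s) x = (σ (t s) x - x) + x := by abel
        rw [h]
        exact add_mem (PMN.T_le_T (by omega) ih) (PMN.G_le_T le_rfl hx)
      have key : σ (t s) (mm * x) - mm * x
          = (σ (t s) mm - mm) * (σ (t s) x) + mm * (σ (t s) x - x) := by
        rw [map_mul]; noncomm_ring
      rw [key]
      refine add_mem ?_ ?_
      · exact PMN.T_le_T (by omega) (PMN.T_mul_T (hP2 s mm hmm) hxT)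
      · exact PMN.T_le_T (by omega) (PMN.T_mul_T (PMN.G_le_T le_rfl hmmG) ih)
  have hTstep : ∀ (s : Kˣ) (a : ℕ) (x : FreeAlgebra K (Fin n)), x ∈ PMN.T K n a →
      σ (t s) x - x ∈ PMN.T K n (a + 1) := by
    intro s a x hx
    refine Submodule.iSup_induction _
      (motive := fun x => σ (t s) x - x ∈ PMN.T K n (a + 1)) hx ?_ ?_ ?_
    · rintro ⟨k, hk⟩ x hx
      exact PMN.T_le_T (by omega) (hpow s k x hx)
    · simpa using Submodule.zero_mem _
    · intro x y ihx ihy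
      have h : σ (t s) (x + y) - (x + y) = (σ (t s) x - x) + (σ (t s) y - y) := by
        rw [map_add]; abel
      rw [h]; exact add_mem ihx ihy
  -- main induction: all components of degree `≥ 2` of `σ (t s) (ι K i)` vanish
  have key : ∀ d : ℕ, 2 ≤ d → ∀ (s : Kˣ) (i : Fin n),
      PMN.proj K n d (σ (t s) (ι K i)) = 0 := by
    intro d
    induction d using Nat.strong_induction_on with
    | _ d IH =>
    intro hd s0 i
    set f : Kˣ → FreeAlgebra K (Fin n) :=
      fun s => PMN.proj K n d (σ (t s) (ι K i)) with hfdef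
    have hw : ∀ s : Kˣ, σ (t s) (ι K i) - ι K i ∈ PMN.T K n d := by
      intro s
      apply PMN.mem_T_of_proj
      intro c hc
      rcases lt_or_ge c 2 with h2 | h2
      · exact PMN.proj_eq_zero_of_mem_T (hdiag' s i) h2
      · rw [map_sub, IH c hc h2 s i, PMN.proj_ι_ne (by omega) i, sub_zero]
    have hadd : ∀ s s' : Kˣ, f (s * s') = f s + f s' := by
      intro s s'
      have e1 : σ (t (s * s')) (ι K i)
          = σ (t s) (ι K i) + σ (t s) (σ (t s') (ι K i) - ι K i) := by
        rw [hcomp, ← map_add]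
        congr 1
        abel
      have e2 : PMN.proj K n d (σ (t s) (σ (t s') (ι K i) - ι K i)) = f s' := by
        set w := σ (t s') (ι K i) - ι K i with hwdef2
        have h1 : σ (t s) w - w ∈ PMN.T K n (d + 1) := hTstep s d w (hw s')
        have h3 : σ (t s) w = w + (σ (t s) w - w) := by abel
        rw [h3, map_add, PMN.proj_eq_zero_of_mem_T h1 (lt_add_one d), add_zero,
          hwdef2, map_sub, PMN.proj_ι_ne (by omega) i, sub_zero]
      show PMN.proj K n d (σ (t (s * s')) (ι K i)) = f s + f s'
      rw [e1, map_add, e2]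
    -- Laurent polynomial form of `f`
    obtain ⟨a, ha⟩ := hreg i
    set zk : (Fin n → ℤ) → ℤ := fun mm => ∑ j, v j * mm j with hzk
    have hcoef : ∀ (s : Kˣ) (mm : Fin n → ℤ),
        (∏ j, (t s j) ^ (mm j)) = s ^ zk mm := by
      intro s mm
      have h1 : ∀ j, (t s j) ^ (mm j) = s ^ (v j * mm j) := by
        intro j
        rw [ht]
        dsimp only
        rw [← zpow_mul]
      calc ∏ j, (t s j) ^ (mm j) = ∏ j, s ^ (v j * mm j) :=
            Finset.prod_congr rfl fun j _ => h1 j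
        _ = s ^ zk mm := (PMN.zpow_finset_sum s Finset.univ _).symm
    have hform : ∀ s : Kˣ, f s
        = ∑ mm ∈ a.support, ((s ^ zk mm : Kˣ) : K) • PMN.proj K n d (a mm) := by
      intro s
      have h1 : σ (t s) (ι K i)
          = ∑ mm ∈ a.support, ((s ^ zk mm : Kˣ) : K) • a mm := by
        rw [ha (t s), Finsupp.sum]
        refine Finset.sum_congr rfl fun mm _ => ?_
        rw [hcoef s mm]
      rw [hfdef]
      dsimp only
      rw [h1, map_sum]
      exact Finset.sum_congr rfl fun mm _ => by rw [map_smul]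
    -- conclude that `f s0 = 0` using linear independence of characters
    show f s0 = 0
    rw [← Module.forall_dual_apply_eq_zero_iff K (f s0)]
    intro φ
    set g : Kˣ → K := fun s => φ (f s) with hgdef
    have hgadd : ∀ s s' : Kˣ, g (s * s') = g s + g s' := by
      intro s s'
      rw [hgdef]
      dsimp only
      rw [hadd, map_add]
    set T0 : Finset ℤ := a.support.image zk with hT0
    set w : ℤ → K := fun k =>
      ∑ mm ∈ a.support.filter (fun mm => zk mm = k), φ (PMN.proj K n d (a mm)) with hwdef
    have hgform : ∀ s : Kˣ, g s = ∑ k ∈ T0, ((s ^ k : Kˣ) : K) * w k := by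
      intro s
      have h1 : g s = ∑ mm ∈ a.support, ((s ^ zk mm : Kˣ) : K) * φ (PMN.proj K n d (a mm)) := by
        rw [hgdef]
        dsimp only
        rw [hform s, map_sum]
        exact Finset.sum_congr rfl fun mm _ => by rw [map_smul, smul_eq_mul]
      rw [h1, ← Finset.sum_fiberwise_of_maps_to
        (fun mm hmm => Finset.mem_image_of_mem zk hmm)
        (fun mm => ((s ^ zk mm : Kˣ) : K) * φ (PMN.proj K n d (a mm)))]
      refine Finset.sum_congr rfl fun k _ => ?_
      rw [hwdef]
      dsimp only
      rw [Finset.mul_sum]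
      refine Finset.sum_congr rfl fun mm hmm => ?_
      rw [(Finset.mem_filter.mp hmm).2]
    have hsum : ∀ u : Kˣ, ∑ k ∈ insert 0 T0, ((u ^ k : Kˣ) : K) * w k = g u := by
      intro u
      by_cases h0 : (0 : ℤ) ∈ T0
      · rw [Finset.insert_eq_self.mpr h0, hgform]
      · have hfe : a.support.filter (fun mm => zk mm = 0) = ∅ := by
          refine Finset.filter_eq_empty_iff.mpr fun {mm} hmm hzk0 => ?_
          exact h0 (Finset.mem_image.mpr ⟨mm, hmm, hzk0⟩)
        have w0 : w 0 = 0 := by rw [hwdef]; dsimp only; rw [hfe, Finset.sum_empty]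
        rw [Finset.sum_insert h0, w0, mul_zero, zero_add, hgform]
    set χ : ℤ → (Kˣ →* K) := fun k => (Units.coeHom K).comp (zpowGroupHom k) with hχ
    have hχinj : Function.Injective χ := PMN.chi_injective K
    have li := (linearIndependent_monoidHom Kˣ K).comp χ hχinj
    rw [linearIndependent_iff'] at li
    set c : ℤ → K := fun k =>
      ((s0 ^ k : Kˣ) : K) * w k - w k - (if k = 0 then g s0 else 0) with hc
    have hrel : ∑ k ∈ insert 0 T0, c k • ((fun f : Kˣ →* K => (f : Kˣ → K)) ∘ χ) k = 0 := by
      funext s''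
      rw [Finset.sum_apply]
      simp only [Pi.smul_apply, smul_eq_mul, Function.comp_apply, Pi.zero_apply]
      have hχapp : ∀ k : ℤ, (χ k) s'' = ((s'' ^ k : Kˣ) : K) := fun k => rfl
      have expand : ∀ k ∈ insert 0 T0, c k * (χ k) s''
          = (((s0 * s'') ^ k : Kˣ) : K) * w k - ((s'' ^ k : Kˣ) : K) * w k
            - (if k = 0 then g s0 else 0) * ((s'' ^ k : Kˣ) : K) := by
        intro k _
        rw [hc]
        dsimp only
        rw [hχapp k]
        have hmul : (((s0 * s'') ^ k : Kˣ) : K)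
            = ((s0 ^ k : Kˣ) : K) * ((s'' ^ k : Kˣ) : K) := by
          rw [mul_zpow, Units.val_mul]
        rw [hmul]
        ring
      rw [Finset.sum_congr rfl expand, Finset.sum_sub_distrib, Finset.sum_sub_distrib,
        hsum, hsum]
      have hite : ∑ k ∈ insert 0 T0, (if k = 0 then g s0 else 0) * ((s'' ^ k : Kˣ) : K)
          = g s0 := by
        rw [Finset.sum_eq_single_of_mem 0 (Finset.mem_insert_self 0 T0)]
        · simp
        · intro b _ hb
          simp [hb]
      rw [hite, hgadd]
      ring
    have hc0 := li (insert 0 T0) c hrel 0 (Finset.mem_insert_self 0 T0)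
    rw [hc] at hc0
    simp only [zpow_zero, Units.val_one, one_mul, if_pos rfl, sub_self, zero_sub,
      neg_eq_zero] at hc0
    exact hc0
  -- the one-parameter subgroup acts trivially
  have hfix : ∀ (s : Kˣ) (i : Fin n), σ (t s) (ι K i) = ι K i := by
    intro s i
    apply PMN.proj_ext
    intro c
    rcases lt_or_ge c 2 with h2 | h2
    · have h0 := PMN.proj_eq_zero_of_mem_T (hdiag' s i) h2
      rw [map_sub, sub_eq_zero] at h0
      exact h0
    · rw [key c h2 s i, PMN.proj_ι_ne (by omega) i]
  have hone : ∀ s : Kˣ, t s = 1 := by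
    intro s
    apply heff
    rw [map_one]
    have h := FreeAlgebra.hom_ext (f := (σ (t s) : FreeAlgebra K (Fin n) ≃ₐ[K] _).toAlgHom)
      (g := AlgHom.id K (FreeAlgebra K (Fin n))) (funext fun i => hfix s i)
    apply AlgEquiv.ext
    intro x
    have hx := DFunLike.congr_fun h x
    simpa using hx
  obtain ⟨j0, hj0⟩ := Function.ne_iff.mp hv0
  have hj0' : v j0 ≠ 0 := by simpa using hj0
  obtain ⟨s, hs⟩ := PMN.exists_zpow_ne_one K hj0'
  exact hs (by simpa [ht] using congrFun (hone s) j0)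
end

section
/- Let K be an algebraically closed field, n ≥ 1, and let σ be an effective regular action of T_n = (K^×)^n on F_n = FreeAlgebra K (Fin n). Suppose (m_{ij}) ∈ M_n(ℤ) is a nonsingular integer matrix such that for all t and i the element σ(t)(z_i) − (∏_j t_j^{m_{ij}}) • z_i has all homogeneous components in degrees ≥ 2. Let τ be the linear diagonal action defined by τ(t)(z_i) = (∏_j t_j^{m_{ij}}) • z_i. Then there exists a K-algebra automorphism β of F_n such that σ(t) = β ∘ τ(t) ∘ β⁻¹ for every t ∈ (Kˣ)^n. -/
open FreeAlgebra

namespace TorusAux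

variable {K : Type} [Field K] {n : ℕ}

/-- The character of the torus attached to an integer vector. -/
def chi (mm : Fin n → ℤ) : (Fin n → Kˣ) →* K where
  toFun t := ((∏ j, t j ^ mm j : Kˣ) : K)
  map_one' := by simp
  map_mul' s t := by
    have h : (∏ j, (s * t) j ^ mm j : Kˣ) = (∏ j, s j ^ mm j) * (∏ j, t j ^ mm j) := by
      rw [← Finset.prod_mul_distrib]
      exact Finset.prod_congr rfl fun j _ => by rw [Pi.mul_apply, mul_zpow]
    show ((∏ j, (s * t) j ^ mm j : Kˣ) : K) = _
    rw [h]; exact Units.val_mul _ _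

lemma chi_apply (mm : Fin n → ℤ) (t : Fin n → Kˣ) :
    chi mm t = ((∏ j, t j ^ mm j : Kˣ) : K) := rfl

lemma chi_add (mm mm' : Fin n → ℤ) (t : Fin n → Kˣ) :
    chi (mm + mm') t = chi mm t * chi mm' t := by
  have h : (∏ j, t j ^ (mm + mm') j : Kˣ) = (∏ j, t j ^ mm j) * (∏ j, t j ^ mm' j) := by
    rw [← Finset.prod_mul_distrib]
    exact Finset.prod_congr rfl fun j _ => by rw [Pi.add_apply, zpow_add]
  show ((∏ j, t j ^ (mm + mm') j : Kˣ) : K) = _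
  rw [h]; exact Units.val_mul _ _

lemma chi_zero (t : Fin n → Kˣ) : chi 0 t = 1 := by
  simp [chi_apply]

lemma exists_zpow_ne [Infinite K] {d : ℤ} (hd : d ≠ 0) : ∃ u : Kˣ, u ^ d ≠ 1 := by
  by_contra h
  push_neg at h
  have hN : d.natAbs ≠ 0 := Int.natAbs_ne_zero.mpr hd
  have hfin : {x : K | x ^ d.natAbs - 1 = 0}.Finite := by
    apply Polynomial.finite_setOf_isRoot (p := Polynomial.X ^ d.natAbs - Polynomial.C 1) ?_
      |>.subset
    · intro x hx
      simp only [Set.mem_setOf_eq, Polynomial.IsRoot, Polynomial.eval_sub, Polynomial.eval_pow,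
        Polynomial.eval_X, Polynomial.eval_C]
      exact hx
    · intro hX
      have := Polynomial.natDegree_X_pow_sub_C (n := d.natAbs) (r := (1 : K))
      rw [hX] at this
      simp only [Polynomial.natDegree_zero] at this
      exact hN this.symm
  have hsub : ({0} : Set K)ᶜ ⊆ {x : K | x ^ d.natAbs - 1 = 0} := by
    intro x hx
    have hx0 : x ≠ 0 := by simpa using hx
    have hu : ∀ u : Kˣ, u ^ d.natAbs = 1 := by
      intro u
      rcases Int.natAbs_eq d with he | he
      · have := h u
        rw [he, zpow_natCast] at this
        exact this
      · have := h u⁻¹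
        rw [he] at this
        simpa using this
    have := hu (Units.mk0 x hx0)
    have : x ^ d.natAbs = 1 := by
      have h2 := congrArg Units.val this
      simpa using h2
    simp [this]
  exact (Set.Finite.infinite_compl (Set.finite_singleton 0)) (hfin.subset hsub)

lemma chi_coe_injective [Infinite K] :
    Function.Injective (fun mm : Fin n → ℤ => ⇑(chi (K := K) mm)) := by
  intro a b hab
  funext j
  by_contra hj
  have hd : a j - b j ≠ 0 := sub_ne_zero.mpr hj
  obtain ⟨u, hu⟩ := exists_zpow_ne (K := K) hd
  have := congrFun hab (Function.update (1 : Fin n → Kˣ) j u)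
  simp only [chi_apply] at this
  have ha : ∀ (c : Fin n → ℤ), (∏ k, Function.update (1 : Fin n → Kˣ) j u k ^ c k) = u ^ c j := by
    intro c
    rw [Finset.prod_eq_single j]
    · simp
    · intro k _ hk
      simp [Function.update_of_ne hk]
    · simp
  rw [ha a, ha b] at this
  have hu1 : u ^ a j = u ^ b j := Units.ext this
  apply hu
  rw [show a j - b j = a j + (- b j) by ring, zpow_add, hu1, ← zpow_add]
  simp

/-- Linear independence of characters, in the form we need. -/
lemma chi_indep [Infinite K] {V : Type} [AddCommGroup V] [Module K V]
    (s : Finset (Fin n → ℤ)) (v : (Fin n → ℤ) → V)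
    (h : ∀ t : Fin n → Kˣ, ∑ mm ∈ s, (chi mm t : K) • v mm = 0) :
    ∀ mm ∈ s, v mm = 0 := by
  intro mm hmm
  rw [← Module.forall_dual_apply_eq_zero_iff K]
  intro φ
  have li : LinearIndependent K (fun mm : Fin n → ℤ => ⇑(chi (K := K) mm)) :=
    (linearIndependent_monoidHom (Fin n → Kˣ) K).comp _
      (fun a b hab => chi_coe_injective (congrArg DFunLike.coe hab))
  refine linearIndependent_iff'.mp li s (fun mm => φ (v mm)) ?_ mm hmm
  funext t
  have := congrArg φ (h t)
  simp only [map_sum, map_smul, map_zero, smul_eq_mul] at this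
  simpa [Finset.sum_apply, mul_comm] using this

end TorusAux
section PartB
open TorusAux FreeAlgebra

variable {K : Type} [Field K] {n : ℕ}

namespace TorusAux

/-- The coordinate isomorphism. -/
noncomputable def coo : FreeAlgebra K (Fin n) ≃ₐ[K] MonoidAlgebra K (FreeMonoid (Fin n)) :=
  FreeAlgebra.equivMonoidAlgebraFreeMonoid

lemma coo_ι (i : Fin n) :
    coo (K := K) (ι K i) = MonoidAlgebra.single (FreeMonoid.of i) 1 := by
  simp [coo, FreeAlgebra.equivMonoidAlgebraFreeMonoid, MonoidAlgebra.of_apply]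

/-- The basis word corresponding to `w`. -/
noncomputable def sym (w : FreeMonoid (Fin n)) : FreeAlgebra K (Fin n) :=
  (coo (K := K)).symm (MonoidAlgebra.single w 1)

lemma coo_sym (w : FreeMonoid (Fin n)) :
    coo (K := K) (sym w) = MonoidAlgebra.single w 1 := by
  simp [sym]

lemma sym_one : sym (K := K) (1 : FreeMonoid (Fin n)) = 1 := by
  have : (MonoidAlgebra.single (1 : FreeMonoid (Fin n)) (1 : K)) = 1 := rfl
  rw [sym, this, map_one]

lemma sym_mul (w w' : FreeMonoid (Fin n)) :
    sym (K := K) (w * w') = sym w * sym w' := by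
  rw [sym, sym, sym, ← map_mul]
  congr 1
  rw [MonoidAlgebra.single_mul_single, one_mul]

lemma sym_of (i : Fin n) : sym (K := K) (FreeMonoid.of i) = ι K i := by
  rw [sym, ← coo_ι, AlgEquiv.symm_apply_apply]

/-- Expansion of an element in the word basis. -/
lemma expand (x : FreeAlgebra K (Fin n)) :
    x = ∑ w ∈ (coo x).coeff.support, (coo x).coeff w • sym (K := K) w := by
  apply (coo (K := K)).injective
  rw [map_sum]
  simp only [map_smul, coo_sym]
  conv_lhs => rw [← MonoidAlgebra.sum_coeff_single (coo x)]
  rw [Finsupp.sum]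
  exact Finset.sum_congr rfl fun w _ => by rw [MonoidAlgebra.smul_single', mul_one]

/-- The submodule of elements supported on words of length at least `d`. -/
noncomputable def Fdeg (d : ℕ) : Submodule K (FreeAlgebra K (Fin n)) where
  carrier := {x | ∀ w ∈ (coo x).coeff.support, d ≤ w.length}
  add_mem' {x y} hx hy := by
    classical
    intro w hw
    rw [map_add, MonoidAlgebra.coeff_add] at hw
    rcases Finset.mem_union.mp (Finsupp.support_add hw) with h | h
    · exact hx w h
    · exact hy w h
  zero_mem' := by
    intro w hw
    rw [map_zero] at hw
    simp at hw
  smul_mem' c x hx := by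
    intro w hw
    rw [map_smul, MonoidAlgebra.coeff_smul] at hw
    exact hx w (Finsupp.support_smul hw)

lemma mem_Fdeg {d : ℕ} {x : FreeAlgebra K (Fin n)} :
    x ∈ Fdeg d ↔ ∀ w ∈ (coo x).coeff.support, d ≤ w.length := ⟨fun h => h, fun h => h⟩

lemma Fdeg_mono {a b : ℕ} (h : a ≤ b) : Fdeg (K := K) (n := n) b ≤ Fdeg a :=
  fun _ hx w hw => le_trans h (mem_Fdeg.mp hx w hw)

lemma mul_mem_Fdeg {a b : ℕ} {x y : FreeAlgebra K (Fin n)}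
    (hx : x ∈ Fdeg a) (hy : y ∈ Fdeg b) : x * y ∈ Fdeg (a + b) := by
  classical
  rw [mem_Fdeg] at hx hy ⊢
  intro w hw
  rw [map_mul] at hw
  have := MonoidAlgebra.support_coeff_mul_subset (coo x) (coo y) hw
  rw [Finset.mem_mul] at this
  obtain ⟨u, hu, v, hv, huv⟩ := this
  subst huv
  rw [FreeMonoid.length_mul]
  exact add_le_add (hx u hu) (hy v hv)

lemma sym_mem_Fdeg (w : FreeMonoid (Fin n)) : sym (K := K) w ∈ Fdeg w.length := by
  rw [mem_Fdeg]
  intro w' hw'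
  rw [coo_sym, MonoidAlgebra.coeff_single] at hw'
  have := Finsupp.support_single_subset hw'
  simp only [Finset.mem_singleton] at this
  subst this
  exact le_rfl

lemma ι_mem_Fdeg (i : Fin n) : ι K i ∈ Fdeg (K := K) 1 := by
  have := sym_mem_Fdeg (K := K) (FreeMonoid.of i)
  rwa [sym_of] at this

lemma higherDegree_le_Fdeg : FreeAlgebra.higherDegree K n ≤ Fdeg 2 := by
  apply iSup_le
  rintro ⟨k, hk⟩
  have hpow : ∀ j : ℕ,
      (Submodule.span K (Set.range (ι K : Fin n → FreeAlgebra K (Fin n)))) ^ j ≤ Fdeg j := by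
    intro j
    induction j with
    | zero =>
      rw [pow_zero, Submodule.one_eq_span]
      rw [Submodule.span_le]
      rintro x hx
      simp only [Set.mem_singleton_iff] at hx
      subst hx
      exact mem_Fdeg.mpr fun w hw => Nat.zero_le _
    | succ j ih =>
      rw [pow_succ]
      apply Submodule.mul_le.mpr
      intro x hx y hy
      exact mul_mem_Fdeg (ih hx) (Submodule.span_le.mpr
        (by rintro z ⟨i, rfl⟩; exact ι_mem_Fdeg i) hy)
  exact le_trans (hpow k) (Fdeg_mono hk)

end TorusAux
end PartB
section PartC
open TorusAux FreeAlgebra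

variable {K : Type} [Field K] {n : ℕ}

namespace TorusAux

/-- The weight of a word with respect to the matrix `m` (sum of the rows indexed by letters). -/
def wt (m : Matrix (Fin n) (Fin n) ℤ) (w : FreeMonoid (Fin n)) : Fin n → ℤ :=
  (w.toList.map (fun i => m i)).sum

lemma wt_one (m : Matrix (Fin n) (Fin n) ℤ) : wt m 1 = 0 := rfl

lemma wt_mul (m : Matrix (Fin n) (Fin n) ℤ) (w w' : FreeMonoid (Fin n)) :
    wt m (w * w') = wt m w + wt m w' := by
  simp [wt, FreeMonoid.toList_mul]

lemma wt_of (m : Matrix (Fin n) (Fin n) ℤ) (i : Fin n) : wt m (FreeMonoid.of i) = m i := by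
  simp [wt, FreeMonoid.toList_of]

private lemma list_sum_count (m : Matrix (Fin n) (Fin n) ℤ) (l : List (Fin n)) :
    (l.map (fun i => m i)).sum = ∑ i : Fin n, (l.count i : ℤ) • m i := by
  induction l with
  | nil => simp
  | cons a l ih =>
    rw [List.map_cons, List.sum_cons, ih]
    have hcount : ∀ i : Fin n, ((a :: l).count i : ℤ) = (l.count i : ℤ) + if a = i then 1 else 0 := by
      intro i
      rw [List.count_cons]
      by_cases h : a = i
      · simp [h]
      · simp [h, Ne.symm h]
    simp only [hcount, add_smul, Finset.sum_add_distrib, ite_smul, one_smul, zero_smul,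
      Finset.sum_ite_eq, Finset.mem_univ, if_true]
    rw [Fintype.sum_ite_eq a (fun x => (m x : Fin n → ℤ)), add_comm]

private lemma list_length_count (l : List (Fin n)) :
    l.length = ∑ i : Fin n, l.count i := by
  induction l with
  | nil => simp
  | cons a l ih =>
    have hcount : ∀ i : Fin n, (a :: l).count i = l.count i + if a = i then 1 else 0 := by
      intro i
      rw [List.count_cons]
      by_cases h : a = i
      · simp [h]
      · simp [h, Ne.symm h]
    simp only [hcount, Finset.sum_add_distrib, Finset.sum_ite_eq, Finset.mem_univ, if_true,
      List.length_cons]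
    omega

lemma wt_eq_sum_count (m : Matrix (Fin n) (Fin n) ℤ) (w : FreeMonoid (Fin n)) :
    wt m w = ∑ i : Fin n, (w.toList.count i : ℤ) • m i :=
  list_sum_count m w.toList

lemma wt_determines_length {m : Matrix (Fin n) (Fin n) ℤ} (hm : m.det ≠ 0)
    {w w' : FreeMonoid (Fin n)} (h : wt m w = wt m w') : w.length = w'.length := by
  set c : Fin n → ℤ := fun i => (w.toList.count i : ℤ) - (w'.toList.count i : ℤ) with hc
  have hvm : Matrix.vecMul c m = 0 := by
    funext j
    rw [wt_eq_sum_count, wt_eq_sum_count] at h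
    have h2 := congrFun h j
    simp only [Finset.sum_apply, Pi.smul_apply, smul_eq_mul] at h2
    simp only [Matrix.vecMul, dotProduct, hc, Pi.zero_apply]
    simp only [sub_mul]
    rw [Finset.sum_sub_distrib, h2, sub_self]
  have hc0 : c = 0 := by
    funext i
    have h1 : Matrix.vecMul (Matrix.vecMul c m) m.adjugate i = 0 := by
      rw [hvm]
      simp [Matrix.vecMul, dotProduct]
    rw [Matrix.vecMul_vecMul, Matrix.mul_adjugate] at h1
    simp only [Matrix.vecMul, dotProduct, Matrix.smul_apply, Matrix.one_apply,
      smul_eq_mul, mul_ite, mul_one, mul_zero, Finset.sum_ite_eq', Finset.mem_univ,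
      if_true] at h1
    rcases mul_eq_zero.mp h1 with hh | hh
    · simpa using hh
    · exact absurd hh hm
  have hcount : ∀ i, w.toList.count i = w'.toList.count i := by
    intro i
    have := congrFun hc0 i
    simp only [hc, Pi.zero_apply, sub_eq_zero] at this
    exact_mod_cast this
  show w.toList.length = w'.toList.length
  rw [list_length_count, list_length_count]
  exact Finset.sum_congr rfl fun i _ => hcount i

end TorusAux
end PartC
section PartD
open TorusAux FreeAlgebra

variable {K : Type} [Field K] {n : ℕ}

namespace TorusAux

/-- Keep only the coordinates on words satisfying `p`. -/
noncomputable def fil (p : FreeMonoid (Fin n) → Prop) [DecidablePred p]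
    (x : FreeAlgebra K (Fin n)) : FreeAlgebra K (Fin n) :=
  (coo (K := K)).symm (MonoidAlgebra.ofCoeff ((coo x).coeff.filter p))

variable {p : FreeMonoid (Fin n) → Prop} [DecidablePred p]

lemma coo_fil (x : FreeAlgebra K (Fin n)) (w : FreeMonoid (Fin n)) :
    (coo (fil p x)).coeff w = if p w then (coo x).coeff w else 0 := by
  rw [fil, AlgEquiv.apply_symm_apply, MonoidAlgebra.coeff_ofCoeff, Finsupp.filter_apply]

lemma fil_add (x y : FreeAlgebra K (Fin n)) : fil p (x + y) = fil p x + fil p y := by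
  apply (coo (K := K)).injective
  ext w
  rw [map_add]
  show (coo (fil p (x+y))).coeff w = (coo (fil p x)).coeff w + (coo (fil p y)).coeff w
  simp only [coo_fil, map_add]
  show _ = (if p w then (coo x).coeff w else 0) + (if p w then (coo y).coeff w else 0)
  have : (coo x + coo y).coeff w = (coo x).coeff w + (coo y).coeff w := rfl
  split <;> simp [this]

lemma fil_smul (c : K) (x : FreeAlgebra K (Fin n)) : fil p (c • x) = c • fil p x := by
  apply (coo (K := K)).injective
  ext w
  rw [map_smul]
  show (coo (fil p (c • x))).coeff w = c • (coo (fil p x)).coeff w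
  simp only [coo_fil, map_smul]
  show _ = c • (if p w then (coo x).coeff w else 0)
  have : (c • coo x).coeff w = c • (coo x).coeff w := rfl
  split <;> simp [this]

lemma fil_zero : fil p (0 : FreeAlgebra K (Fin n)) = 0 := by
  apply (coo (K := K)).injective
  ext w
  simp only [map_zero, coo_fil, MonoidAlgebra.coeff_zero, Finsupp.zero_apply]
  split <;> simp

lemma fil_sum {α : Type} (s : Finset α) (f : α → FreeAlgebra K (Fin n)) :
    fil p (∑ a ∈ s, f a) = ∑ a ∈ s, fil p (f a) := by
  classical
  induction s using Finset.induction with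
  | empty => simpa using fil_zero
  | insert _ _ hni ih =>
    rw [Finset.sum_insert hni, Finset.sum_insert hni, fil_add, ih]

lemma fil_eq_self {x : FreeAlgebra K (Fin n)} (h : ∀ w ∈ (coo x).coeff.support, p w) :
    fil p x = x := by
  apply (coo (K := K)).injective
  ext w
  rw [coo_fil]
  by_cases hw : w ∈ (coo x).coeff.support
  · rw [if_pos (h w hw)]
  · rw [Finsupp.notMem_support_iff] at hw
    rw [hw]
    split <;> rfl

lemma fil_eq_zero {x : FreeAlgebra K (Fin n)} (h : ∀ w ∈ (coo x).coeff.support, ¬ p w) :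
    fil p x = 0 := by
  apply (coo (K := K)).injective
  ext w
  rw [coo_fil, map_zero, MonoidAlgebra.coeff_zero, Finsupp.zero_apply]
  by_cases hw : w ∈ (coo x).coeff.support
  · rw [if_neg (h w hw)]
  · rw [Finsupp.notMem_support_iff] at hw
    rw [hw]
    split <;> rfl

lemma sub_fil_support {x : FreeAlgebra K (Fin n)} :
    ∀ w ∈ (coo (x - fil p x)).coeff.support, ¬ p w ∧ w ∈ (coo x).coeff.support := by
  intro w hw
  rw [Finsupp.mem_support_iff, map_sub, MonoidAlgebra.coeff_sub, Finsupp.sub_apply, coo_fil] at hw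
  by_cases hp : p w
  · rw [if_pos hp, sub_self] at hw
    exact absurd rfl hw
  · rw [if_neg hp, sub_zero] at hw
    exact ⟨hp, Finsupp.mem_support_iff.mpr hw⟩

end TorusAux
end PartD
open TorusAux in
/-- If `σ` is an effective regular action of the `n`-torus on the free algebra with diagonal
monomial linear part given by the nonsingular integer matrix `m`, then `σ` is conjugate, by an
algebra automorphism `β`, to the linear diagonal action `τ(t)(z_i) = (∏ j, t_j ^ m i j) • z_i`;
equivalently `σ(t) ∘ β = β ∘ τ(t)` for all `t`. -/
theorem torus_action_conjugate_to_diagonal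
    {K : Type} [Field K] [IsAlgClosed K] {n : ℕ} (hn : 1 ≤ n)
    (σ : (Fin n → Kˣ) →* (FreeAlgebra K (Fin n) ≃ₐ[K] FreeAlgebra K (Fin n)))
    (hreg : TorusActionIsRegular σ)
    (heff : Function.Injective σ)
    (m : Matrix (Fin n) (Fin n) ℤ)
    (hm : m.det ≠ 0)
    (hdiag : ∀ (t : Fin n → Kˣ) (i : Fin n),
      σ t (ι K i) - ((∏ j : Fin n, (t j) ^ (m i j) : Kˣ) : K) • ι K i
        ∈ FreeAlgebra.higherDegree K n) :
    ∃ β : FreeAlgebra K (Fin n) ≃ₐ[K] FreeAlgebra K (Fin n),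
      ∀ (t : Fin n → Kˣ) (i : Fin n),
        σ t (β (ι K i)) = ((∏ j : Fin n, (t j) ^ (m i j) : Kˣ) : K) • β (ι K i) := by
  classical
  haveI hInfK : Infinite K := inferInstance
  have hdiag' : ∀ (t : Fin n → Kˣ) (i : Fin n),
      σ t (ι K i) - (chi (m i) t : K) • ι K i ∈ FreeAlgebra.higherDegree K n := hdiag
  -- general eigenvector extraction from a regular expansion
  have heig : ∀ (x : FreeAlgebra K (Fin n)) (s : Finset (Fin n → ℤ))
      (aa : (Fin n → ℤ) → FreeAlgebra K (Fin n)),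
      (∀ t, σ t x = ∑ mm ∈ s, (chi mm t : K) • aa mm) →
      ∀ mm ∈ s, ∀ u, σ u (aa mm) = (chi mm u : K) • aa mm := by
    intro x s aa hrep mm hmm u
    have h0 : ∀ t, ∑ mm ∈ s, (chi mm t : K) • (σ u (aa mm) - (chi mm u : K) • aa mm) = 0 := by
      intro t
      have e1 : ∑ mm ∈ s, (chi mm t : K) • σ u (aa mm)
          = ∑ mm ∈ s, (chi mm (u * t) : K) • aa mm := by
        have e0 : σ u (σ t x) = σ (u * t) x := by
          rw [← AlgEquiv.mul_apply, ← map_mul]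
        rw [hrep t, map_sum] at e0
        simp only [map_smul] at e0
        rw [hrep (u * t)] at e0
        exact e0
      simp only [smul_sub, Finset.sum_sub_distrib, e1]
      rw [sub_eq_zero]
      refine Finset.sum_congr rfl fun mm' _ => ?_
      rw [map_mul, smul_smul, mul_comm]
    exact sub_eq_zero.mp (chi_indep s _ h0 mm hmm)
  -- expansions of the generators
  have hgen : ∀ i, ∃ (s : Finset (Fin n → ℤ)) (aa : (Fin n → ℤ) → FreeAlgebra K (Fin n)),
      ∀ t, σ t (ι K i) = ∑ mm ∈ s, (chi mm t : K) • aa mm := by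
    intro i
    obtain ⟨a, ha⟩ := hreg i
    exact ⟨a.support, a, fun t => ha t⟩
  choose sgen agen hagen using hgen
  -- filtering infrastructure
  set p1 : FreeMonoid (Fin n) → Prop := fun w => w.length ≤ 1 with hp1
  have hz_ne : ∀ i, (ι K i : FreeAlgebra K (Fin n)) ≠ 0 := by
    intro i h
    have h2 := congrArg (coo (K := K)) h
    rw [coo_ι, map_zero] at h2
    exact one_ne_zero (MonoidAlgebra.single_eq_zero.mp h2)
  have hfil_z : ∀ i, fil p1 (ι K i) = ι K i := by
    intro i
    apply fil_eq_self
    intro w hw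
    rw [coo_ι, MonoidAlgebra.coeff_single] at hw
    have h2 := Finsupp.support_single_subset hw
    simp only [Finset.mem_singleton] at h2
    subst h2
    simp [hp1, FreeMonoid.length_of]
  have hfil_hd : ∀ x ∈ FreeAlgebra.higherDegree K n, fil p1 x = 0 := by
    intro x hx
    apply fil_eq_zero
    intro w hw
    have h2 := mem_Fdeg.mp (higherDegree_le_Fdeg hx) w hw
    simp only [hp1]
    omega
  -- low-degree part of σ t (z i)
  have hkey : ∀ i t, ∑ mm ∈ sgen i, (chi mm t : K) • fil p1 (agen i mm)
      = (chi (m i) t : K) • ι K i := by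
    intro i t
    have h1 : fil p1 (σ t (ι K i)) = ∑ mm ∈ sgen i, (chi mm t : K) • fil p1 (agen i mm) := by
      rw [hagen i t, fil_sum]
      exact Finset.sum_congr rfl fun mm _ => fil_smul _ _
    have h2 : fil p1 (σ t (ι K i)) = (chi (m i) t : K) • ι K i := by
      have hstep : σ t (ι K i)
          = (σ t (ι K i) - (chi (m i) t : K) • ι K i) + (chi (m i) t : K) • ι K i := by
        abel
      rw [hstep, fil_add, hfil_hd _ (hdiag' t i), fil_smul, hfil_z, zero_add]
    rw [← h1, h2]
  -- determine the components of the generators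
  have hcomp : ∀ i, ∀ mm ∈ sgen i ∪ {m i},
      ((if mm ∈ sgen i then fil p1 (agen i mm) else 0)
        - (if mm = m i then ι K i else 0)) = 0 := by
    intro i
    refine chi_indep (K := K) (sgen i ∪ {m i})
      (fun mm => (if mm ∈ sgen i then fil p1 (agen i mm) else 0)
        - (if mm = m i then ι K i else 0)) (fun t => ?_)
    simp only [smul_sub]
    rw [Finset.sum_sub_distrib]
    have e1 : ∑ mm ∈ sgen i ∪ {m i},
        (chi mm t : K) • (if mm ∈ sgen i then fil p1 (agen i mm) else 0)
        = ∑ mm ∈ sgen i, (chi mm t : K) • fil p1 (agen i mm) := by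
      rw [Finset.sum_congr rfl (fun mm _ => show (chi mm t : K) • _
          = if mm ∈ sgen i then (chi mm t : K) • fil p1 (agen i mm) else 0 by
        split <;> simp)]
      rw [Finset.sum_ite_mem, Finset.union_inter_cancel_left]
    have e2 : ∑ mm ∈ sgen i ∪ {m i},
        (chi mm t : K) • (if mm = m i then ι K i else 0)
        = (chi (m i) t : K) • ι K i := by
      rw [Finset.sum_congr rfl (fun mm _ => show (chi mm t : K) • _
          = if mm = m i then (chi mm t : K) • ι K i else 0 by
        split <;> simp)]
      rw [Finset.sum_ite_eq' (sgen i ∪ {m i}) (m i) (fun mm => (chi mm t : K) • ι K i)]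
      rw [if_pos (Finset.mem_union_right _ (Finset.mem_singleton_self _))]
    rw [e1, e2, hkey i t, sub_self]
  have hmi_mem : ∀ i, m i ∈ sgen i := by
    intro i
    by_contra hni
    have h2 := hcomp i (m i) (Finset.mem_union_right _ (Finset.mem_singleton_self _))
    rw [if_neg hni, if_pos rfl, zero_sub, neg_eq_zero] at h2
    exact hz_ne i h2
  set b : Fin n → FreeAlgebra K (Fin n) := fun i => agen i (m i) with hbdef
  have hfil_b : ∀ i, fil p1 (b i) = ι K i := by
    intro i
    have h2 := hcomp i (m i) (Finset.mem_union_right _ (Finset.mem_singleton_self _))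
    rw [if_pos (hmi_mem i), if_pos rfl, sub_eq_zero] at h2
    exact h2
  have hb_wt : ∀ i u, σ u (b i) = (chi (m i) u : K) • b i := fun i u =>
    heig _ _ _ (hagen i) (m i) (hmi_mem i) u
  have hb_dev : ∀ i, b i - ι K i ∈ Fdeg 2 := by
    intro i
    rw [mem_Fdeg]
    intro w hw
    rw [show b i - ι K i = b i - fil p1 (b i) by rw [hfil_b i]] at hw
    obtain ⟨hnp, _⟩ := sub_fil_support w hw
    simp only [hp1] at hnp
    omega
  -- the conjugating homomorphism
  set β0 : FreeAlgebra K (Fin n) →ₐ[K] FreeAlgebra K (Fin n) := FreeAlgebra.lift K b with hβ0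
  have hβ0_ι : ∀ i, β0 (ι K i) = b i := fun i => FreeAlgebra.lift_ι_apply b i
  -- words map to weight vectors
  have hW2 : ∀ (w : FreeMonoid (Fin n)) t,
      σ t (β0 (sym w)) = (chi (wt m w) t : K) • β0 (sym w) := by
    intro w
    induction w using FreeMonoid.recOn with
    | one => intro t; rw [sym_one, map_one, map_one, wt_one, chi_zero, one_smul]
    | of_mul i w ih =>
      intro t
      rw [sym_mul, sym_of, map_mul β0, hβ0_ι, map_mul (σ t), hb_wt, ih, wt_mul, wt_of,
        chi_add, smul_mul_smul_comm]
  -- words deviate by higher degree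
  have hW1 : ∀ w : FreeMonoid (Fin n), β0 (sym w) - sym w ∈ Fdeg (w.length + 1) := by
    intro w
    induction w using FreeMonoid.recOn with
    | one => rw [sym_one, map_one, sub_self]; exact Submodule.zero_mem _
    | of_mul i w ih =>
      rw [sym_mul, sym_of, map_mul, hβ0_ι]
      have hsplit : b i * β0 (sym w) - ι K i * sym w
          = (b i - ι K i) * sym w + (b i - ι K i) * (β0 (sym w) - sym w)
            + ι K i * (β0 (sym w) - sym w) := by
        noncomm_ring
      rw [hsplit]
      have hlen : (FreeMonoid.of i * w).length = w.length + 1 := by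
        rw [FreeMonoid.length_mul, FreeMonoid.length_of]
        omega
      rw [hlen]
      refine Submodule.add_mem _ (Submodule.add_mem _ ?_ ?_) ?_
      · exact Fdeg_mono (by omega) (mul_mem_Fdeg (hb_dev i) (sym_mem_Fdeg w))
      · exact Fdeg_mono (by omega) (mul_mem_Fdeg (hb_dev i) ih)
      · exact Fdeg_mono (by omega) (mul_mem_Fdeg (ι_mem_Fdeg i) ih)
  -- σ acts on words triangularly
  have hS : ∀ (w : FreeMonoid (Fin n)) t,
      σ t (sym w) - (chi (wt m w) t : K) • sym w ∈ Fdeg (w.length + 1) := by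
    intro w
    induction w using FreeMonoid.recOn with
    | one =>
      intro t
      rw [sym_one, map_one, wt_one, chi_zero, one_smul, sub_self]
      exact Submodule.zero_mem _
    | of_mul i w ih =>
      intro t
      have hA : σ t (ι K i) - (chi (m i) t : K) • ι K i ∈ Fdeg 2 :=
        higherDegree_le_Fdeg (hdiag' t i)
      have hB := ih t
      rw [sym_mul, sym_of, map_mul]
      have hsplit : σ t (ι K i) * σ t (sym w)
          - (chi (wt m (FreeMonoid.of i * w)) t : K) • (ι K i * sym w)
          = ((chi (m i) t : K) • ι K i) * (σ t (sym w) - (chi (wt m w) t : K) • sym w)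
            + (σ t (ι K i) - (chi (m i) t : K) • ι K i) * ((chi (wt m w) t : K) • sym w)
            + (σ t (ι K i) - (chi (m i) t : K) • ι K i)
              * (σ t (sym w) - (chi (wt m w) t : K) • sym w) := by
        rw [wt_mul, wt_of, chi_add]
        have : ((chi (m i) t : K) * chi (wt m w) t) • (ι K i * sym w)
            = ((chi (m i) t : K) • ι K i) * ((chi (wt m w) t : K) • sym w) := by
          rw [smul_mul_smul_comm]
        rw [this]
        noncomm_ring
      rw [hsplit]
      have hlen : (FreeMonoid.of i * w).length = w.length + 1 := by
        rw [FreeMonoid.length_mul, FreeMonoid.length_of]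
        omega
      rw [hlen]
      refine Submodule.add_mem _ (Submodule.add_mem _ ?_ ?_) ?_
      · exact Fdeg_mono (by omega)
          (mul_mem_Fdeg (Submodule.smul_mem _ _ (ι_mem_Fdeg i)) hB)
      · exact Fdeg_mono (by omega) (mul_mem_Fdeg hA (Submodule.smul_mem _ _ (sym_mem_Fdeg w)))
      · exact Fdeg_mono (by omega) (mul_mem_Fdeg hA hB)
  -- coordinates of σ t x in the minimal degree
  have hcoord : ∀ (d : ℕ) (x : FreeAlgebra K (Fin n)), x ∈ Fdeg d →
      ∀ w : FreeMonoid (Fin n), w.length = d → ∀ t,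
      (coo (σ t x)).coeff w = (chi (wt m w) t : K) * (coo x).coeff w := by
    intro d x hx w hwlen t
    have hterm : ∀ w' ∈ (coo x).coeff.support,
        (coo (σ t ((coo x).coeff w' • sym w'))).coeff w
          = if w' = w then (chi (wt m w') t : K) * (coo x).coeff w' else 0 := by
      intro w' hw'
      have hres : (coo (σ t (sym w') - (chi (wt m w') t : K) • sym w')).coeff w = 0 := by
        apply Finsupp.notMem_support_iff.mp
        intro hmem
        have h3 := mem_Fdeg.mp (hS w' t) w hmem
        have h4 := mem_Fdeg.mp hx w' hw'
        omega
      have hsig : (coo (σ t (sym w'))).coeff w = (chi (wt m w') t : K) * (coo (sym w')).coeff w := by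
        have : σ t (sym w') = (σ t (sym w') - (chi (wt m w') t : K) • sym w')
            + (chi (wt m w') t : K) • sym w' := by abel
        rw [this, map_add]
        show (coo ((σ t) (sym w') - (chi (wt m w') t : K) • sym w')).coeff w
            + (coo ((chi (wt m w') t : K) • sym w')).coeff w
          = (chi (wt m w') t : K) * (coo (sym w')).coeff w
        rw [hres, zero_add, map_smul]
        rfl
      rw [map_smul, map_smul]
      show (coo x).coeff w' • (coo (σ t (sym w'))).coeff w = _
      rw [smul_eq_mul, hsig, coo_sym]
      rw [MonoidAlgebra.coeff_single, Finsupp.single_apply]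
      split <;> ring
    calc (coo (σ t x)).coeff w
        = ∑ w' ∈ (coo x).coeff.support, (coo (σ t ((coo x).coeff w' • sym w'))).coeff w := by
          conv_lhs => rw [expand (K := K) x]
          rw [map_sum, map_sum, MonoidAlgebra.coeff_sum]
          exact Finset.sum_apply' w
      _ = ∑ w' ∈ (coo x).coeff.support,
            if w' = w then (chi (wt m w') t : K) * (coo x).coeff w' else 0 :=
          Finset.sum_congr rfl hterm
      _ = (chi (wt m w) t : K) * (coo x).coeff w := by
          rw [Finset.sum_ite_eq' ((coo x).coeff.support) w
            (fun w' => (chi (wt m w') t : K) * (coo x).coeff w')]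
          split
          · rfl
          · rw [Finsupp.notMem_support_iff.mp (by assumption), mul_zero]
  -- β0 deviates by higher degree
  have hβdiff : ∀ (d : ℕ) (x : FreeAlgebra K (Fin n)), x ∈ Fdeg d →
      β0 x - x ∈ Fdeg (d + 1) := by
    intro d x hx
    have hrw : β0 x - x = ∑ w' ∈ (coo x).coeff.support, (coo x).coeff w' • (β0 (sym w') - sym w') := by
      conv_lhs => rw [expand (K := K) x]
      rw [map_sum, ← Finset.sum_sub_distrib]
      refine Finset.sum_congr rfl fun w' _ => ?_
      rw [map_smul, smul_sub]
    rw [hrw]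
    refine Submodule.sum_mem _ fun w' hw' => Submodule.smul_mem _ _ ?_
    exact Fdeg_mono (by have := mem_Fdeg.mp hx w' hw'; omega) (hW1 w')
  -- minimal degree of a nonzero element
  have hmin : ∀ x : FreeAlgebra K (Fin n), x ≠ 0 →
      ∃ d, x ∈ Fdeg d ∧ ∃ w0 ∈ (coo x).coeff.support, w0.length = d := by
    intro x hx
    have hne : (coo x).coeff.support.Nonempty := by
      rw [Finsupp.support_nonempty_iff]
      intro h0
      exact hx ((coo (K := K)).injective (by rw [map_zero, ← MonoidAlgebra.coeff_eq_zero]; exact h0))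
    have himg : ((coo x).coeff.support.image FreeMonoid.length).Nonempty := hne.image _
    refine ⟨((coo x).coeff.support.image FreeMonoid.length).min' himg, ?_, ?_⟩
    · rw [mem_Fdeg]
      intro w hw
      exact Finset.min'_le _ _ (Finset.mem_image_of_mem _ hw)
    · obtain ⟨w0, hw0, hl⟩ := Finset.mem_image.mp (Finset.min'_mem _ himg)
      exact ⟨w0, hw0, hl⟩
  -- support of weight vectors in minimal degree
  have hwt_supp : ∀ (mm : Fin n → ℤ) (v : FreeAlgebra K (Fin n)),
      (∀ t, σ t v = (chi mm t : K) • v) →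
      ∀ d, v ∈ Fdeg d → ∀ w ∈ (coo v).coeff.support, w.length = d → wt m w = mm := by
    intro mm v hv d hd w hw hwl
    by_contra hne
    have h1 : ∀ t, (chi (wt m w) t : K) * (coo v).coeff w = (chi mm t : K) * (coo v).coeff w := by
      intro t
      rw [← hcoord d v hd w hwl t, hv t, map_smul]
      rfl
    have hc : (coo v).coeff w ≠ 0 := Finsupp.mem_support_iff.mp hw
    exact hne (chi_coe_injective (funext fun t => mul_right_cancel₀ hc (h1 t)))
  -- every weight vector is in the range of β0
  have hrange : ∀ (mm : Fin n → ℤ) (v : FreeAlgebra K (Fin n)),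
      (∀ t, σ t v = (chi mm t : K) • v) → v ∈ β0.range := by
    intro mm v hv
    by_cases hv0 : v = 0
    · rw [hv0]; exact Subalgebra.zero_mem _
    obtain ⟨d, hvFd, w0, hw0, hw0l⟩ := hmin v hv0
    set lowx := fil (fun w => w.length = d) v with hlowdef
    have hlow_supp : ∀ w ∈ (coo lowx).coeff.support, w ∈ (coo v).coeff.support ∧ w.length = d := by
      intro w hw
      rw [Finsupp.mem_support_iff, coo_fil] at hw
      by_cases hh : w.length = d
      · refine ⟨Finsupp.mem_support_iff.mpr ?_, hh⟩
        rw [if_pos hh] at hw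
        exact hw
      · rw [if_neg hh] at hw
        exact absurd rfl hw
    have hblow : ∀ t, σ t (β0 lowx) = (chi mm t : K) • β0 lowx := by
      intro t
      have hle : β0 lowx = ∑ w ∈ (coo lowx).coeff.support, (coo lowx).coeff w • β0 (sym w) := by
        conv_lhs => rw [expand (K := K) lowx]
        rw [map_sum]
        exact Finset.sum_congr rfl fun w _ => map_smul _ _ _
      rw [hle, map_sum, Finset.smul_sum]
      refine Finset.sum_congr rfl fun w hw => ?_
      obtain ⟨hwv, hwd⟩ := hlow_supp w hw
      have hwt : wt m w = mm := hwt_supp mm v hv d hvFd w hwv hwd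
      rw [map_smul, hW2 w t, hwt, smul_comm]
    have hdiff : v - β0 lowx ∈ Fdeg (d + 1) := by
      have h1 : v - lowx ∈ Fdeg (d + 1) := by
        rw [mem_Fdeg]
        intro w hw
        obtain ⟨hnp, hsupp⟩ := sub_fil_support w hw
        have := mem_Fdeg.mp hvFd w hsupp
        omega
      have h2 : β0 lowx - lowx ∈ Fdeg (d + 1) := by
        apply hβdiff d
        rw [mem_Fdeg]
        intro w hw
        exact (hlow_supp w hw).2 ▸ le_rfl
      have hsplit : v - β0 lowx = (v - lowx) - (β0 lowx - lowx) := by abel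
      rw [hsplit]
      exact Submodule.sub_mem _ h1 h2
    have hwv : ∀ t, σ t (v - β0 lowx) = (chi mm t : K) • (v - β0 lowx) := by
      intro t
      rw [map_sub, hv t, hblow t, smul_sub]
    by_cases h0 : v - β0 lowx = 0
    · rw [show v = β0 lowx from by rwa [sub_eq_zero] at h0]
      exact AlgHom.mem_range_self β0 lowx
    · exfalso
      obtain ⟨d', hFd', w1, hw1, hw1l⟩ := hmin _ h0
      have hwt1 : wt m w1 = mm := hwt_supp mm _ hwv d' hFd' w1 hw1 hw1l
      have hwt0 : wt m w0 = mm := hwt_supp mm v hv d hvFd w0 hw0 hw0l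
      have hlen : w0.length = w1.length := wt_determines_length hm (hwt0.trans hwt1.symm)
      have hge : d + 1 ≤ w1.length := mem_Fdeg.mp hdiff w1 hw1
      omega
  -- injectivity
  have hinj : Function.Injective β0 := by
    rw [injective_iff_map_eq_zero]
    intro x hx0
    by_contra hxne
    obtain ⟨d, hxF, w0, hw0, hw0l⟩ := hmin x hxne
    have hβd := hβdiff d x hxF
    have hzero : (coo (β0 x - x)).coeff w0 = 0 :=
      Finsupp.notMem_support_iff.mp (fun hmem => by
        have h5 := mem_Fdeg.mp hβd w0 hmem
        omega)
    have hco : (coo (β0 x)).coeff w0 = (coo x).coeff w0 := by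
      have hsplit : β0 x = x + (β0 x - x) := by abel
      rw [hsplit, map_add]
      show (coo x).coeff w0 + (coo (β0 x - x)).coeff w0 = (coo x).coeff w0
      rw [hzero, add_zero]
    rw [hx0, map_zero] at hco
    exact Finsupp.mem_support_iff.mp hw0 hco.symm
  -- decomposition of arbitrary elements
  have hdec : ∀ x : FreeAlgebra K (Fin n), ∃ P : (Fin n → ℤ) →₀ FreeAlgebra K (Fin n),
      ∀ t, σ t x = P.sum fun mm c => (chi mm t : K) • c := by
    intro x
    induction x using FreeAlgebra.induction with
    | grade0 r =>
      refine ⟨Finsupp.single 0 (algebraMap K _ r), fun t => ?_⟩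
      rw [Finsupp.sum_single_index (by simp), chi_zero, one_smul, AlgEquiv.commutes]
    | grade1 i =>
      obtain ⟨a, ha⟩ := hreg i
      exact ⟨a, fun t => ha t⟩
    | mul x y hx hy =>
      obtain ⟨P, hP⟩ := hx
      obtain ⟨Q, hQ⟩ := hy
      refine ⟨P.sum fun mm c => Q.sum fun mm' c' => Finsupp.single (mm + mm') (c * c'),
        fun t => ?_⟩
      rw [map_mul, hP t, hQ t]
      rw [Finsupp.sum_sum_index (fun _ => by simp) (fun _ _ _ => by rw [smul_add])]
      rw [Finsupp.sum_mul]
      refine Finsupp.sum_congr fun mm _ => ?_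
      rw [Finsupp.sum_sum_index (fun _ => by simp) (fun _ _ _ => by rw [smul_add])]
      rw [Finsupp.mul_sum]
      refine Finsupp.sum_congr fun mm' _ => ?_
      rw [Finsupp.sum_single_index (by simp), chi_add, smul_mul_smul_comm, mul_smul]
    | add x y hx hy =>
      obtain ⟨P, hP⟩ := hx
      obtain ⟨Q, hQ⟩ := hy
      refine ⟨P + Q, fun t => ?_⟩
      rw [map_add, hP t, hQ t,
        Finsupp.sum_add_index (fun _ _ => by simp) (fun _ _ _ _ => by rw [smul_add])]
  -- surjectivity
  have hsurj : Function.Surjective β0 := by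
    intro x
    suffices hx : x ∈ β0.range from (AlgHom.mem_range β0).mp hx
    obtain ⟨P, hP⟩ := hdec x
    have hx1 : x = ∑ mm ∈ P.support, P mm := by
      have h1 := hP 1
      rw [map_one] at h1
      have h2 : (1 : FreeAlgebra K (Fin n) ≃ₐ[K] FreeAlgebra K (Fin n)) x = x := rfl
      rw [h2] at h1
      rw [h1, Finsupp.sum]
      exact Finset.sum_congr rfl fun mm _ => by rw [map_one, one_smul]
    rw [hx1]
    refine Subalgebra.sum_mem _ fun mm hmm => ?_
    exact hrange mm (P mm) (heig x P.support P (fun t => hP t) mm hmm)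
  refine ⟨AlgEquiv.ofBijective β0 ⟨hinj, hsurj⟩, fun t i => ?_⟩
  show σ t (β0 (ι K i)) = _ • (β0 (ι K i))
  rw [hβ0_ι i]
  exact hb_wt i t
end

section
/- Let K be a field and let φ be a K-algebra automorphism of F_2 = FreeAlgebra K (Fin 2) of the form φ(z_1) = z_1 + f and φ(z_2) = z_2 for some f ∈ F_2. If f ≠ 0, then f does not lie in the commutator ideal, i.e., ε(f) ≠ 0. -/
open FreeAlgebra

/-- The abelianization homomorphism from the free associative algebra to the commutative
polynomial algebra, sending each generator to the corresponding variable.  Its kernel is the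
commutator ideal. -/
noncomputable def abelianization (K : Type) [Field K] (n : ℕ) :
    FreeAlgebra K (Fin n) →ₐ[K] MvPolynomial (Fin n) K :=
  FreeAlgebra.lift K fun i => (MvPolynomial.X i : MvPolynomial (Fin n) K)

namespace TriAux

/-! ### Combinatorics of words over `Fin 2` -/

def val : List (Fin 2) → ℕ := fun l => l.foldl (fun n a => 2 * n + a.val) 0

lemma foldl_val (l : List (Fin 2)) (n : ℕ) :
    l.foldl (fun n a => 2 * n + a.val) n = n * 2 ^ l.length + val l := by
  induction l generalizing n with
  | nil => simp [val]
  | cons a l ih =>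
    simp only [List.foldl_cons, List.length_cons, val] at *
    rw [ih, ih (2 * 0 + a.val)]
    ring

lemma val_cons (a : Fin 2) (l : List (Fin 2)) :
    val (a :: l) = a.val * 2 ^ l.length + val l := by
  show List.foldl _ _ _ = _
  rw [List.foldl_cons, foldl_val]
  ring_nf

lemma val_append (s t : List (Fin 2)) :
    val (s ++ t) = val s * 2 ^ t.length + val t := by
  show List.foldl _ _ _ = _
  rw [List.foldl_append, foldl_val]
  rfl

lemma val_lt (l : List (Fin 2)) : val l < 2 ^ l.length := by
  induction l with
  | nil => simp [val]
  | cons a l ih =>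
    rw [val_cons]
    have : a.val ≤ 1 := by omega
    simp only [List.length_cons, pow_succ]
    nlinarith

lemma val_inj : ∀ (s t : List (Fin 2)), s.length = t.length → val s = val t → s = t := by
  intro s
  induction s with
  | nil => intro t h _; simpa using (List.length_eq_zero_iff.mp h.symm)
  | cons a s ih =>
    intro t h hv
    cases t with
    | nil => simp at h
    | cons b t =>
      simp only [List.length_cons, Nat.add_right_cancel_iff] at h
      rw [val_cons, val_cons, h] at hv
      have hs := val_lt s
      have ht := val_lt t
      have ha : a.val ≤ 1 := by omega
      have hb : b.val ≤ 1 := by omega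
      rw [h] at hs
      have hab : a.val = b.val := by nlinarith [pow_pos (show 0 < 2 by norm_num) t.length]
      have : a = b := Fin.ext hab
      subst this
      have : val s = val t := by omega
      rw [ih t h this]

def subst (w : List (Fin 2)) (l : List (Fin 2)) : List (Fin 2) :=
  (l.map (fun i => if i = 0 then w else [1])).flatten

@[simp] lemma subst_nil (w : List (Fin 2)) : subst w [] = [] := rfl

lemma subst_cons (w : List (Fin 2)) (a : Fin 2) (l : List (Fin 2)) :
    subst w (a :: l) = (if a = 0 then w else [1]) ++ subst w l := by
  simp [subst]

@[simp] lemma subst_cons0 (w : List (Fin 2)) (l : List (Fin 2)) :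
    subst w (0 :: l) = w ++ subst w l := by simp [subst_cons]

@[simp] lemma subst_cons1 (w : List (Fin 2)) (l : List (Fin 2)) :
    subst w (1 :: l) = 1 :: subst w l := by
  rw [subst_cons, if_neg (by decide)]; rfl

def Wt (D : ℕ) (l : List (Fin 2)) : ℕ := (l.map (fun i => if i = 0 then D else 1)).sum

@[simp] lemma Wt_nil (D : ℕ) : Wt D [] = 0 := rfl

lemma Wt_cons (D : ℕ) (a : Fin 2) (l : List (Fin 2)) :
    Wt D (a :: l) = (if a = 0 then D else 1) + Wt D l := by simp [Wt]

lemma length_subst (w : List (Fin 2)) (l : List (Fin 2)) :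
    (subst w l).length = Wt w.length l := by
  induction l with
  | nil => simp
  | cons a l ih =>
    rw [subst_cons, Wt_cons, List.length_append, ih]
    by_cases h : a = 0 <;> simp [h]

lemma nprefix (w : List (Fin 2)) (k : ℕ) (u : List (Fin 2))
    (hw : w = List.replicate k 1 ++ 0 :: u) :
    ∀ (b : List (Fin 2)) (j : ℕ), j < k →
      ¬ (List.replicate j 1 ++ [0]) <+: subst w b := by
  intro b
  induction b with
  | nil =>
    intro j hj h
    have := h.length_le
    simp at this
  | cons a b ih =>
    intro j hj h
    rcases (show a = 0 ∨ a = 1 from by omega) with ha | ha <;> subst ha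
    · rw [subst_cons0] at h
      nth_rewrite 1 [hw] at h
      have hlen : j < (List.replicate j (1:Fin 2) ++ [0]).length := by simp
      have hget := h.getElem hlen
      have h1 : (List.replicate j (1:Fin 2) ++ [0])[j] = 0 := by
        rw [List.getElem_append_right (by simp)]
        simp
      have h2 : ((List.replicate k (1:Fin 2) ++ 0 :: u) ++ subst w b)[j]'(by simp; omega) = 1 := by
        rw [List.getElem_append_left (by simp; omega), List.getElem_append_left (by simpa)]
        simp
      rw [h1, h2] at hget
      exact absurd hget (by decide)
    · rw [subst_cons1] at h
      cases j with
      | zero => simp at h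
      | succ j' =>
        apply ih j' (by omega)
        rw [List.replicate_succ] at h
        simp only [List.cons_append, List.cons_prefix_cons] at h
        exact h.2

lemma subst_injective (w : List (Fin 2)) (k : ℕ) (u : List (Fin 2))
    (hw : w = List.replicate k 1 ++ 0 :: u) :
    ∀ a b : List (Fin 2), subst w a = subst w b → a = b := by
  have key : ∀ a b : List (Fin 2), subst w (0 :: a) = subst w (1 :: b) → False := by
    intro a b h
    rw [subst_cons0, subst_cons1] at h
    cases k with
    | zero =>
      simp only [List.replicate_zero, List.nil_append] at hw
      nth_rewrite 1 [hw] at h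
      exact absurd (List.head_eq_of_cons_eq h) (by decide)
    | succ k' =>
      rw [List.replicate_succ, List.cons_append] at hw
      nth_rewrite 1 [hw] at h
      simp only [List.cons_append] at h
      have h' := List.tail_eq_of_cons_eq h
      have hpre : List.replicate k' (1:Fin 2) ++ [0] <+: subst w b := by
        refine ⟨u ++ subst w a, ?_⟩
        rw [← h']
        simp
      exact nprefix w (k' + 1) u (by rw [hw, List.replicate_succ, List.cons_append])
        b k' (by omega) hpre
  have hne : w ≠ [] := by rw [hw]; simp
  intro a
  induction a with
  | nil =>
    intro b h
    cases b with
    | nil => rfl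
    | cons c bs =>
      exfalso
      rcases (show c = 0 ∨ c = 1 from by omega) with hc | hc <;> subst hc
      · rw [subst_nil, subst_cons0] at h
        exact hne (List.append_eq_nil_iff.mp h.symm).1
      · rw [subst_nil, subst_cons1] at h
        exact List.cons_ne_nil _ _ h.symm
  | cons a as ih =>
    intro b h
    cases b with
    | nil =>
      exfalso
      rcases (show a = 0 ∨ a = 1 from by omega) with hc | hc <;> subst hc
      · rw [subst_nil, subst_cons0] at h
        exact hne (List.append_eq_nil_iff.mp h).1
      · rw [subst_nil, subst_cons1] at h
        exact List.cons_ne_nil _ _ h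
    | cons c bs =>
      rcases (show a = 0 ∨ a = 1 from by omega) with hA | hA <;>
        rcases (show c = 0 ∨ c = 1 from by omega) with hC | hC <;> subst hA <;> subst hC
      · rw [subst_cons0, subst_cons0] at h
        rw [ih bs (List.append_cancel_left h)]
      · exact absurd (key as bs h) (fun x => x)
      · exact absurd (key bs as h.symm) (fun x => x)
      · rw [subst_cons1, subst_cons1] at h
        rw [ih bs (List.tail_eq_of_cons_eq h)]

/-! ### Coefficient computations in the monoid algebra -/

variable {K : Type} [Field K]

instance : DecidableEq (FreeMonoid (Fin 2)) := inferInstanceAs (DecidableEq (List (Fin 2)))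

lemma mulbound (p r : MonoidAlgebra K (FreeMonoid (Fin 2))) (n m : ℕ)
    (hp : ∀ s ∈ p.coeff.support, (FreeMonoid.toList s).length ≤ n)
    (hr : ∀ t ∈ r.coeff.support, (FreeMonoid.toList t).length ≤ m)
    (v : FreeMonoid (Fin 2)) (hv : n + m ≤ (FreeMonoid.toList v).length) :
    (p * r).coeff v = p.coeff (FreeMonoid.ofList ((FreeMonoid.toList v).take n)) *
      r.coeff (FreeMonoid.ofList ((FreeMonoid.toList v).drop n)) := by
  set TK := FreeMonoid.ofList ((FreeMonoid.toList v).take n) with hTK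
  set DR := FreeMonoid.ofList ((FreeMonoid.toList v).drop n) with hDR
  have hTKDR : TK * DR = v := by
    apply FreeMonoid.toList.injective
    rw [FreeMonoid.toList_mul, hTK, hDR, FreeMonoid.toList_ofList, FreeMonoid.toList_ofList,
      List.take_append_drop]
  have key : ∀ s ∈ p.coeff.support, ∀ t ∈ r.coeff.support,
      (if s * t = v then p.coeff s * r.coeff t else 0)
        = if s = TK ∧ t = DR then p.coeff s * r.coeff t else 0 := by
    intro s hs t ht
    by_cases hst : s * t = v
    · have hlens : (FreeMonoid.toList s).length + (FreeMonoid.toList t).length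
        = (FreeMonoid.toList v).length := by
        rw [← hst, FreeMonoid.toList_mul, List.length_append]
      have hsn : (FreeMonoid.toList s).length = n := by
        have := hp s hs; have := hr t ht; omega
      have hsv : s = TK := by
        apply FreeMonoid.toList.injective
        rw [hTK, FreeMonoid.toList_ofList, ← hst, FreeMonoid.toList_mul, ← hsn, List.take_left]
      have htv : t = DR := by
        apply FreeMonoid.toList.injective
        rw [hDR, FreeMonoid.toList_ofList, ← hst, FreeMonoid.toList_mul, ← hsn, List.drop_left]
      rw [if_pos hst, if_pos ⟨hsv, htv⟩]
    · rw [if_neg hst, if_neg]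
      rintro ⟨rfl, rfl⟩
      exact hst hTKDR
  rw [MonoidAlgebra.coeff_mul]
  simp only [Finsupp.sum]
  rw [Finset.sum_congr rfl fun s hs => Finset.sum_congr rfl fun t ht => key s hs t ht]
  simp only [ite_and]
  rw [Finset.sum_comm]
  rw [Finset.sum_congr rfl
    (fun y _ => Finset.sum_ite_eq' p.coeff.support TK
      (fun x => if y = DR then p.coeff x * r.coeff y else 0))]
  by_cases hTKm : TK ∈ p.coeff.support
  · simp only [hTKm, if_true]
    rw [Finset.sum_ite_eq' r.coeff.support DR]
    by_cases hDRm : DR ∈ r.coeff.support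
    · rw [if_pos hDRm]
    · rw [if_neg hDRm, Finsupp.notMem_support_iff.mp hDRm, mul_zero]
  · simp only [hTKm, if_false]
    rw [Finsupp.notMem_support_iff.mp hTKm, zero_mul]
    exact Finset.sum_const_zero

lemma mul_apply_ne_zero (p r : MonoidAlgebra K (FreeMonoid (Fin 2))) (v : FreeMonoid (Fin 2))
    (h : (p * r).coeff v ≠ 0) :
    ∃ s ∈ p.coeff.support, ∃ t ∈ r.coeff.support, s * t = v := by
  by_contra hc
  push_neg at hc
  apply h
  rw [MonoidAlgebra.coeff_mul]
  simp only [Finsupp.sum]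
  apply Finset.sum_eq_zero
  intro s hs
  apply Finset.sum_eq_zero
  intro t ht
  rw [if_neg (hc s hs t ht)]

lemma supp_one (t : FreeMonoid (Fin 2)) (ht : t ∈ (1 : MonoidAlgebra K (FreeMonoid (Fin 2))).coeff.support) :
    t = 1 := by
  have : (1 : MonoidAlgebra K (FreeMonoid (Fin 2))) = MonoidAlgebra.single 1 1 := rfl
  rw [this, MonoidAlgebra.coeff_single] at ht
  have := Finsupp.support_single_subset ht
  simpa using this

lemma supp_prod_bound (P : Fin 2 → MonoidAlgebra K (FreeMonoid (Fin 2))) (wfun : Fin 2 → ℕ)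
    (hP : ∀ i, ∀ s ∈ (P i).coeff.support, (FreeMonoid.toList s).length ≤ wfun i) :
    ∀ l : List (Fin 2), ∀ t ∈ ((l.map P).prod).coeff.support,
      (FreeMonoid.toList t).length ≤ (l.map wfun).sum := by
  intro l
  induction l with
  | nil =>
    intro t ht
    simp only [List.map_nil, List.prod_nil] at ht
    rw [supp_one t ht]
    simp [FreeMonoid.toList_one]
  | cons i l ih =>
    intro t ht
    simp only [List.map_cons, List.prod_cons] at ht
    have := MonoidAlgebra.support_coeff_mul_subset _ _ ht
    rw [Finset.mem_mul] at this
    obtain ⟨a, ha, b, hb, rfl⟩ := this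
    rw [FreeMonoid.toList_mul, List.length_append]
    simp only [List.map_cons, List.sum_cons]
    have := hP i a ha
    have := ih b hb
    omega

lemma supp_prod_eq (P : Fin 2 → MonoidAlgebra K (FreeMonoid (Fin 2))) (wfun : Fin 2 → ℕ)
    (hP : ∀ i, ∀ s ∈ (P i).coeff.support, (FreeMonoid.toList s).length = wfun i) :
    ∀ l : List (Fin 2), ∀ t ∈ ((l.map P).prod).coeff.support,
      (FreeMonoid.toList t).length = (l.map wfun).sum := by
  intro l
  induction l with
  | nil =>
    intro t ht
    simp only [List.map_nil, List.prod_nil] at ht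
    rw [supp_one t ht]
    simp [FreeMonoid.toList_one]
  | cons i l ih =>
    intro t ht
    simp only [List.map_cons, List.prod_cons] at ht
    have := MonoidAlgebra.support_coeff_mul_subset _ _ ht
    rw [Finset.mem_mul] at this
    obtain ⟨a, ha, b, hb, rfl⟩ := this
    rw [FreeMonoid.toList_mul, List.length_append]
    simp only [List.map_cons, List.sum_cons]
    have := hP i a ha
    have := ih b hb
    omega

/-! ### Leading-form analysis -/

noncomputable def Tm (G : MonoidAlgebra K (FreeMonoid (Fin 2))) : Fin 2 → MonoidAlgebra K (FreeMonoid (Fin 2)) :=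
  fun i => if i = 0 then G else MonoidAlgebra.single (FreeMonoid.of 1) 1

def wfun (D : ℕ) : Fin 2 → ℕ := fun i => if i = 0 then D else 1

lemma wfun_sum (D : ℕ) (l : List (Fin 2)) : (l.map (wfun D)).sum = Wt D l := rfl

variable (G : MonoidAlgebra K (FreeMonoid (Fin 2))) (D : ℕ) (w : List (Fin 2))

lemma Tm_supp_len (hG : ∀ s ∈ G.coeff.support, (FreeMonoid.toList s).length = D) :
    ∀ i, ∀ s ∈ (Tm G i).coeff.support, (FreeMonoid.toList s).length = wfun D i := by
  intro i s hs
  rcases (show i = 0 ∨ i = 1 from by omega) with hi | hi <;> subst hi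
  · exact hG s hs
  · simp only [Tm, if_neg (by decide : ¬ (1 : Fin 2) = 0), MonoidAlgebra.coeff_single] at hs
    have := Finsupp.support_single_subset hs
    simp only [Finset.mem_singleton] at this
    subst this
    simp [wfun, FreeMonoid.toList_of]

lemma T_len (hG : ∀ s ∈ G.coeff.support, (FreeMonoid.toList s).length = D) :
    ∀ l : List (Fin 2), ∀ t ∈ ((l.map (Tm G)).prod).coeff.support,
      (FreeMonoid.toList t).length = Wt D l := by
  intro l t ht
  rw [← wfun_sum]
  exact supp_prod_eq (Tm G) (wfun D) (Tm_supp_len G D hG) l t ht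

lemma prod_top (Hm : Fin 2 → MonoidAlgebra K (FreeMonoid (Fin 2)))
    (hG : ∀ s ∈ G.coeff.support, (FreeMonoid.toList s).length = D)
    (hH : ∀ i, ∀ s ∈ (Hm i).coeff.support, (FreeMonoid.toList s).length ≤ wfun D i)
    (htop : ∀ i s, (FreeMonoid.toList s).length = wfun D i → (Hm i).coeff s = (Tm G i).coeff s) :
    ∀ (l : List (Fin 2)) (v : FreeMonoid (Fin 2)), Wt D l ≤ (FreeMonoid.toList v).length →
      ((l.map Hm).prod).coeff v = ((l.map (Tm G)).prod).coeff v := by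
  intro l
  induction l with
  | nil => intro v _; rfl
  | cons i l ih =>
    intro v hv
    rw [Wt_cons] at hv
    have hTb : ∀ s ∈ (Tm G i).coeff.support, (FreeMonoid.toList s).length ≤ wfun D i :=
      fun s hs => le_of_eq (Tm_supp_len G D hG i s hs)
    have hrH := supp_prod_bound Hm (wfun D) hH l
    have hrT : ∀ t ∈ ((l.map (Tm G)).prod).coeff.support, (FreeMonoid.toList t).length ≤ Wt D l :=
      fun t ht => le_of_eq (T_len G D hG l t ht)
    rw [wfun_sum] at hrH
    have hv' : wfun D i + Wt D l ≤ (FreeMonoid.toList v).length := by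
      simpa [wfun] using hv
    simp only [List.map_cons, List.prod_cons]
    rw [mulbound (Hm i) _ (wfun D i) (Wt D l) (hH i) hrH v hv']
    rw [mulbound (Tm G i) _ (wfun D i) (Wt D l) hTb hrT v hv']
    congr 1
    · apply htop
      simp only [FreeMonoid.toList_ofList, List.length_take]
      omega
    · apply ih
      simp only [FreeMonoid.toList_ofList, List.length_drop]
      omega

lemma T_val (hG : ∀ s ∈ G.coeff.support, (FreeMonoid.toList s).length = D)
    (hwD : w.length = D)
    (hval : ∀ s ∈ G.coeff.support, val (FreeMonoid.toList s) ≤ val w) :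
    ∀ (l : List (Fin 2)) (v : FreeMonoid (Fin 2)), ((l.map (Tm G)).prod).coeff v ≠ 0 →
      val (FreeMonoid.toList v) ≤ val (subst w l) := by
  intro l
  induction l with
  | nil =>
    intro v hv
    have : v = 1 := supp_one v (Finsupp.mem_support_iff.mpr (by simpa using hv))
    subst this
    simp [FreeMonoid.toList_one]
  | cons i l ih =>
    intro v hv
    simp only [List.map_cons, List.prod_cons] at hv
    obtain ⟨s, hs, t, ht, hst⟩ := mul_apply_ne_zero _ _ v hv
    have htv : val (FreeMonoid.toList t) ≤ val (subst w l) :=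
      ih t (Finsupp.mem_support_iff.mp ht)
    have htl : (FreeMonoid.toList t).length = Wt D l := T_len G D hG l t ht
    have hvs : FreeMonoid.toList v = FreeMonoid.toList s ++ FreeMonoid.toList t := by
      rw [← hst, FreeMonoid.toList_mul]
    have hsubl : (subst w l).length = Wt D l := by
      rw [length_subst, hwD]
    rcases (show i = 0 ∨ i = 1 from by omega) with hi | hi <;> subst hi
    · simp only [Tm, if_pos rfl] at hs
      have h1 : val (FreeMonoid.toList s) ≤ val w := hval s hs
      rw [hvs, val_append, subst_cons0, val_append, hsubl, htl]
      exact Nat.add_le_add (Nat.mul_le_mul_right _ h1) htv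
    · simp only [Tm, if_neg (by decide : ¬ (1 : Fin 2) = 0), MonoidAlgebra.coeff_single] at hs
      have := Finsupp.support_single_subset hs
      simp only [Finset.mem_singleton] at this
      subst this
      rw [hvs, subst_cons1, FreeMonoid.toList_of]
      rw [show (1 : Fin 2) :: subst w l = [1] ++ subst w l from rfl, val_append, val_append,
        hsubl, htl]
      exact Nat.add_le_add (Nat.mul_le_mul_right _ (le_refl _)) htv

lemma T_substval (hG : ∀ s ∈ G.coeff.support, (FreeMonoid.toList s).length = D)
    (hwD : w.length = D)
    (hGw : G.coeff (FreeMonoid.ofList w) ≠ 0) :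
    ∀ l : List (Fin 2), ((l.map (Tm G)).prod).coeff (FreeMonoid.ofList (subst w l)) ≠ 0 := by
  intro l
  induction l with
  | nil =>
    simp only [subst_nil, List.map_nil, List.prod_nil]
    have : FreeMonoid.ofList ([] : List (Fin 2)) = 1 := rfl
    rw [this]
    show (1 : MonoidAlgebra K (FreeMonoid (Fin 2))).coeff 1 ≠ 0
    rw [show (1 : MonoidAlgebra K (FreeMonoid (Fin 2))) = MonoidAlgebra.single 1 1 from rfl]
    simp
  | cons i l ih =>
    simp only [List.map_cons, List.prod_cons]
    have hTb : ∀ s ∈ (Tm G i).coeff.support, (FreeMonoid.toList s).length ≤ wfun D i :=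
      fun s hs => le_of_eq (Tm_supp_len G D hG i s hs)
    have hrT : ∀ t ∈ ((l.map (Tm G)).prod).coeff.support, (FreeMonoid.toList t).length ≤ Wt D l :=
      fun t ht => le_of_eq (T_len G D hG l t ht)
    have hlensub : (subst w (i :: l)).length = wfun D i + Wt D l := by
      rw [length_subst, hwD, Wt_cons]; rfl
    rw [mulbound (Tm G i) _ (wfun D i) (Wt D l) hTb hrT _
      (by rw [FreeMonoid.toList_ofList, hlensub])]
    rw [FreeMonoid.toList_ofList]
    rcases (show i = 0 ∨ i = 1 from by omega) with hi | hi <;> subst hi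
    · have htake : (subst w (0 :: l)).take (wfun D 0) = w := by
        rw [subst_cons0, show wfun D 0 = D from rfl, ← hwD, List.take_left]
      have hdrop : (subst w (0 :: l)).drop (wfun D 0) = subst w l := by
        rw [subst_cons0, show wfun D 0 = D from rfl, ← hwD, List.drop_left]
      rw [htake, hdrop]
      exact mul_ne_zero (by simpa [Tm] using hGw) ih
    · have htake : (subst w (1 :: l)).take (wfun D 1) = [1] := by
        rw [subst_cons1]; rfl
      have hdrop : (subst w (1 :: l)).drop (wfun D 1) = subst w l := by
        rw [subst_cons1]; rfl
      rw [htake, hdrop]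
      apply mul_ne_zero _ ih
      simp only [Tm, if_neg (by decide : ¬ (1 : Fin 2) = 0)]
      rw [show FreeMonoid.ofList [(1 : Fin 2)] = FreeMonoid.of 1 from rfl]
      simp

/-! ### The abelianization on the monoid algebra -/

noncomputable def cnt (l : List (Fin 2)) : Fin 2 →₀ ℕ := (l.map (fun i => Finsupp.single i 1)).sum

@[simp] lemma cnt_nil : cnt ([] : List (Fin 2)) = 0 := rfl

lemma cnt_cons (a : Fin 2) (l : List (Fin 2)) : cnt (a :: l) = Finsupp.single a 1 + cnt l := by
  simp [cnt]

lemma len_eq_cnt (l : List (Fin 2)) : l.length = cnt l 0 + cnt l 1 := by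
  induction l with
  | nil => simp
  | cons a l ih =>
    rw [List.length_cons, cnt_cons]
    rcases (show a = 0 ∨ a = 1 from by omega) with ha | ha <;> subst ha <;>
      simp [Finsupp.single_apply, ih] <;> omega

lemma cnt_zero_replicate (l : List (Fin 2)) (h : cnt l 0 = 0) :
    l = List.replicate l.length 1 := by
  induction l with
  | nil => simp
  | cons a l ih =>
    rw [cnt_cons] at h
    rcases (show a = 0 ∨ a = 1 from by omega) with ha | ha <;> subst ha
    · simp [Finsupp.single_apply] at h
    · simp only [Finsupp.add_apply, Finsupp.single_apply, if_neg (by decide : ¬(1:Fin 2) = 0)] at h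
      rw [List.length_cons, List.replicate_succ]
      rw [← ih (by omega)]

lemma cnt_small_inj (x y : List (Fin 2)) (hx : x.length ≤ 1) (h : cnt x = cnt y) : x = y := by
  have hlen : x.length = y.length := by
    rw [len_eq_cnt, len_eq_cnt, h]
  match x, y, hlen with
  | [], [], _ => rfl
  | [a], [b], _ =>
    have h2 : cnt [a] b = cnt [b] b := by rw [h]
    by_contra hab
    have hab' : a ≠ b := fun hh => hab (by rw [hh])
    simp [cnt, Finsupp.single_apply, hab'] at h2
  | _ :: _ :: _, _, _ => simp at hx

lemma mon_prod (l : List (Fin 2)) :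
    ((l.map (fun i => (MvPolynomial.X i : MvPolynomial (Fin 2) K))).prod)
      = MvPolynomial.monomial (cnt l) 1 := by
  induction l with
  | nil => simp
  | cons a l ih =>
    rw [List.map_cons, List.prod_cons, ih, cnt_cons, MvPolynomial.X,
      MvPolynomial.monomial_mul, one_mul]

lemma single_eq_prod (l : List (Fin 2)) (c : K) :
    MonoidAlgebra.single (FreeMonoid.ofList l) c
      = c • ((l.map (fun i => (MonoidAlgebra.single (FreeMonoid.of i) 1 :
          MonoidAlgebra K (FreeMonoid (Fin 2))))).prod) := by
  induction l with
  | nil =>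
    simp only [List.map_nil, List.prod_nil]
    rw [show FreeMonoid.ofList ([] : List (Fin 2)) = 1 from rfl,
      show (1 : MonoidAlgebra K (FreeMonoid (Fin 2))) = MonoidAlgebra.single 1 1 from rfl]
    rw [MonoidAlgebra.smul_single, smul_eq_mul, mul_one]
  | cons a l ih =>
    have hof : FreeMonoid.ofList (a :: l) = FreeMonoid.of a * FreeMonoid.ofList l := rfl
    rw [List.map_cons, List.prod_cons, hof, ← one_mul c, ← MonoidAlgebra.single_mul_single, ih]
    rw [mul_smul_comm, one_mul]

lemma E_single (E : MonoidAlgebra K (FreeMonoid (Fin 2)) →ₐ[K] MvPolynomial (Fin 2) K)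
    (hE : ∀ i, E (MonoidAlgebra.single (FreeMonoid.of i) 1) = MvPolynomial.X i)
    (x : FreeMonoid (Fin 2)) (c : K) :
    E (MonoidAlgebra.single x c) = c • MvPolynomial.monomial (cnt (FreeMonoid.toList x)) 1 := by
  have h0 : MonoidAlgebra.single x c
      = MonoidAlgebra.single (FreeMonoid.ofList (FreeMonoid.toList x)) c := by
    rw [FreeMonoid.ofList_toList]
  rw [h0, single_eq_prod, map_smul, map_list_prod, List.map_map]
  congr 1
  rw [show (⇑E ∘ fun i => (MonoidAlgebra.single (FreeMonoid.of i) 1 :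
      MonoidAlgebra K (FreeMonoid (Fin 2))))
      = fun i => (MvPolynomial.X i : MvPolynomial (Fin 2) K) from funext hE]
  exact mon_prod _

lemma exists_other (E : MonoidAlgebra K (FreeMonoid (Fin 2)) →ₐ[K] MvPolynomial (Fin 2) K)
    (hE : ∀ i, E (MonoidAlgebra.single (FreeMonoid.of i) 1) = MvPolynomial.X i)
    (F : MonoidAlgebra K (FreeMonoid (Fin 2))) (hEF : E F = 0)
    (x : FreeMonoid (Fin 2)) (hx : x ∈ F.coeff.support) :
    ∃ y ∈ F.coeff.support, y ≠ x ∧ cnt (FreeMonoid.toList y) = cnt (FreeMonoid.toList x) := by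
  by_contra hc
  push_neg at hc
  have hcoeff : MvPolynomial.coeff (cnt (FreeMonoid.toList x)) (E F) = F.coeff x := by
    conv_lhs => rw [← MonoidAlgebra.sum_coeff_single F]
    rw [map_finsuppSum, Finsupp.sum, MvPolynomial.coeff_sum]
    rw [Finset.sum_eq_single_of_mem x hx]
    · rw [E_single E hE, MvPolynomial.coeff_smul, MvPolynomial.coeff_monomial, if_pos rfl,
        smul_eq_mul, mul_one]
    · intro y hy hyx
      rw [E_single E hE, MvPolynomial.coeff_smul, MvPolynomial.coeff_monomial]
      rw [if_neg (hc y hy hyx), smul_eq_mul, mul_zero]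
  rw [hEF] at hcoeff
  simp only [MvPolynomial.coeff_zero] at hcoeff
  exact Finsupp.mem_support_iff.mp hx hcoeff.symm

lemma equiv_apply_coeff
    (Φ : MonoidAlgebra K (FreeMonoid (Fin 2)) ≃ₐ[K] MonoidAlgebra K (FreeMonoid (Fin 2)))
    (a : MonoidAlgebra K (FreeMonoid (Fin 2))) (v : FreeMonoid (Fin 2)) :
    (Φ a).coeff v = ∑ l ∈ a.coeff.support,
      a.coeff l * ((((FreeMonoid.toList l).map
        (fun i => Φ (MonoidAlgebra.single (FreeMonoid.of i) 1))).prod).coeff v) := by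
  conv_lhs => rw [← MonoidAlgebra.sum_coeff_single a]
  rw [map_finsuppSum, MonoidAlgebra.coeff_finsuppSum, Finsupp.sum_apply, Finsupp.sum]
  apply Finset.sum_congr rfl
  intro l _
  have h0 : MonoidAlgebra.single l (a.coeff l)
      = MonoidAlgebra.single (FreeMonoid.ofList (FreeMonoid.toList l)) (a.coeff l) := by
    rw [FreeMonoid.ofList_toList]
  rw [h0, single_eq_prod, map_smul, map_list_prod, List.map_map, MonoidAlgebra.coeff_smul_apply, smul_eq_mul]
  rfl

lemma w_decomp (w : List (Fin 2)) (h0 : (0 : Fin 2) ∈ w) :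
    ∃ k u, w = List.replicate k 1 ++ 0 :: u := by
  have hd : w.dropWhile (· = 1) ≠ [] := by
    intro h
    rw [List.dropWhile_eq_nil_iff] at h
    have := h 0 h0
    simp at this
  refine ⟨(w.takeWhile (· = 1)).length, (w.dropWhile (· = 1)).tail, ?_⟩
  have h1 : w.takeWhile (· = 1) = List.replicate (w.takeWhile (· = 1)).length 1 := by
    apply List.eq_replicate_of_mem
    intro b hb
    have := List.mem_takeWhile_imp hb
    simpa using this
  have h2 : w.dropWhile (· = 1) = 0 :: (w.dropWhile (· = 1)).tail := by
    have hh := List.head_dropWhile_not (· = 1) (l := w) hd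
    set x := (w.dropWhile (· = 1)).head hd with hx
    have hx0 : x = 0 := by
      simp at hh
      omega
    conv_lhs => rw [← List.cons_head_tail hd, ← hx, hx0]
  conv_lhs => rw [← List.takeWhile_append_dropWhile (p := (· = 1)) (l := w)]
  rw [← h1, ← h2]

lemma Wt_le_one {D : ℕ} (hD : 2 ≤ D) (l : List (Fin 2)) (h : Wt D l ≤ 1) :
    l = [] ∨ l = [1] := by
  match l with
  | [] => exact Or.inl rfl
  | a :: t =>
    right
    rcases (show a = 0 ∨ a = 1 from by omega) with ha | ha <;> subst ha
    · rw [Wt_cons, if_pos rfl] at h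
      omega
    · rw [Wt_cons, if_neg (by decide)] at h
      match t with
      | [] => rfl
      | b :: t' =>
        exfalso
        rw [Wt_cons] at h
        rcases (show b = 0 ∨ b = 1 from by omega) with hb | hb <;> subst hb <;> simp at h <;> omega

lemma cnt_zero_of_not_mem (l : List (Fin 2)) (h : (0 : Fin 2) ∉ l) : cnt l 0 = 0 := by
  induction l with
  | nil => simp
  | cons a t ih =>
    have ha : a = 1 := by
      rcases (show a = 0 ∨ a = 1 from by omega) with ha | ha
      · exact absurd (ha ▸ List.mem_cons_self (a := a) (l := t)) h
      · exact ha
    subst ha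
    rw [cnt_cons, Finsupp.add_apply, Finsupp.single_apply, if_neg (by decide)]
    rw [ih (fun hm => h (List.mem_cons_of_mem _ hm)), add_zero]

end TriAux

/-- If `φ` is an automorphism of the free algebra on two generators of the form
`z₁ ↦ z₁ + f`, `z₂ ↦ z₂` with `f ≠ 0`, then `f` does not lie in the commutator ideal. -/
theorem triangular_automorphism_not_commutator
    {K : Type} [Field K]
    (φ : FreeAlgebra K (Fin 2) ≃ₐ[K] FreeAlgebra K (Fin 2))
    (f : FreeAlgebra K (Fin 2))
    (hφ1 : φ (ι K 0) = ι K 0 + f)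
    (hφ2 : φ (ι K 1) = ι K 1)
    (hf : f ≠ 0) :
    abelianization K 2 f ≠ 0 := by
  classical
  intro habel
  set e := FreeAlgebra.equivMonoidAlgebraFreeMonoid (R := K) (X := Fin 2) with he
  have heι : ∀ i : Fin 2, e (ι K i) = MonoidAlgebra.single (FreeMonoid.of i) 1 := by
    intro i
    simp [he, FreeAlgebra.equivMonoidAlgebraFreeMonoid]
  set F := e f with hFdef
  set Φ := (e.symm.trans φ).trans e with hΦdef
  set X0 : MonoidAlgebra K (FreeMonoid (Fin 2)) := MonoidAlgebra.single (FreeMonoid.of 0) 1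
    with hX0
  set X1 : MonoidAlgebra K (FreeMonoid (Fin 2)) := MonoidAlgebra.single (FreeMonoid.of 1) 1
    with hX1
  have hΦ0 : Φ X0 = X0 + F := by
    rw [hΦdef, AlgEquiv.trans_apply, AlgEquiv.trans_apply, hX0, ← heι 0,
      AlgEquiv.symm_apply_apply, hφ1, map_add, heι 0, hFdef]
  have hΦ1 : Φ X1 = X1 := by
    rw [hΦdef, AlgEquiv.trans_apply, AlgEquiv.trans_apply, hX1, ← heι 1,
      AlgEquiv.symm_apply_apply, hφ2, heι 1]
  set E := (abelianization K 2).comp e.symm.toAlgHom with hEdef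
  have hE : ∀ i, E (MonoidAlgebra.single (FreeMonoid.of i) 1) = MvPolynomial.X i := by
    intro i
    show (abelianization K 2) (e.symm (MonoidAlgebra.single (FreeMonoid.of i) 1))
      = MvPolynomial.X i
    rw [← heι i, AlgEquiv.symm_apply_apply]
    simp [abelianization]
  have hEF : E F = 0 := by
    show (abelianization K 2) (e.symm (e f)) = 0
    rw [AlgEquiv.symm_apply_apply]
    exact habel
  have hF0 : F ≠ 0 := by
    intro h
    apply hf
    have := congrArg e.symm h
    rw [hFdef, AlgEquiv.symm_apply_apply, map_zero] at this
    exact this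
  have hFs : F.coeff.support.Nonempty :=
    Finsupp.support_nonempty_iff.mpr (mt MonoidAlgebra.coeff_eq_zero.mp hF0)
  obtain ⟨dmax, hdmem, hdmax⟩ :=
    F.coeff.support.exists_max_image (fun l => (FreeMonoid.toList l).length) hFs
  set D := (FreeMonoid.toList dmax).length with hD
  set G := MonoidAlgebra.ofCoeff (F.coeff.filter (fun l => (FreeMonoid.toList l).length = D)) with hG
  have hGapp : ∀ s, (FreeMonoid.toList s).length = D → G.coeff s = F.coeff s := by
    intro s hs
    rw [hG, MonoidAlgebra.coeff_ofCoeff, Finsupp.filter_apply, if_pos hs]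
  have hGsupp : ∀ s ∈ G.coeff.support, (FreeMonoid.toList s).length = D := by
    intro s hs
    rw [hG, MonoidAlgebra.coeff_ofCoeff, Finsupp.support_filter, Finset.mem_filter] at hs
    exact hs.2
  have hGsuppF : G.coeff.support ⊆ F.coeff.support := by
    intro s hs
    rw [hG, MonoidAlgebra.coeff_ofCoeff, Finsupp.support_filter, Finset.mem_filter] at hs
    exact hs.1
  have hGs : G.coeff.support.Nonempty := by
    refine ⟨dmax, ?_⟩
    rw [hG, MonoidAlgebra.coeff_ofCoeff, Finsupp.support_filter, Finset.mem_filter]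
    exact ⟨hdmem, rfl⟩
  obtain ⟨wm, hwm, hwmax⟩ :=
    G.coeff.support.exists_max_image (fun l => TriAux.val (FreeMonoid.toList l)) hGs
  set w := FreeMonoid.toList wm with hwdef
  have hwD : w.length = D := hGsupp wm hwm
  have hwmF : wm ∈ F.coeff.support := hGsuppF hwm
  have hw0 : (0 : Fin 2) ∈ w := by
    by_contra h0
    have hc0 : TriAux.cnt w 0 = 0 := TriAux.cnt_zero_of_not_mem w h0
    obtain ⟨y, hy, hyne, hycnt⟩ := TriAux.exists_other E hE F hEF wm hwmF
    have hy0 : TriAux.cnt (FreeMonoid.toList y) 0 = 0 := by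
      rw [hycnt, ← hwdef]
      exact hc0
    have hylen : (FreeMonoid.toList y).length = w.length := by
      rw [TriAux.len_eq_cnt, TriAux.len_eq_cnt (FreeMonoid.toList wm), ← hwdef] at *
      rw [hycnt, ← hwdef]
    have heq : FreeMonoid.toList y = FreeMonoid.toList wm := by
      rw [TriAux.cnt_zero_replicate _ hy0, hylen, ← hwdef,
        ← TriAux.cnt_zero_replicate w hc0]
    exact hyne (FreeMonoid.toList.injective heq)
  have hD2 : 2 ≤ D := by
    obtain ⟨y, hy, hyne, hycnt⟩ := TriAux.exists_other E hE F hEF wm hwmF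
    by_contra hlt
    push_neg at hlt
    have hylen : (FreeMonoid.toList y).length ≤ 1 := by
      rw [TriAux.len_eq_cnt, hycnt, ← TriAux.len_eq_cnt, ← hwdef, hwD]
      omega
    exact hyne (FreeMonoid.toList.injective (TriAux.cnt_small_inj _ _ hylen hycnt))
  have hGw : G.coeff (FreeMonoid.ofList w) ≠ 0 := by
    rw [hwdef, FreeMonoid.ofList_toList, hGapp wm (hGsupp wm hwm)]
    exact Finsupp.mem_support_iff.mp hwmF
  have hbound : ∀ s ∈ F.coeff.support, (FreeMonoid.toList s).length ≤ D := hdmax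
  set q := Φ.symm X0 with hqdef
  have hq : Φ q = X0 := Φ.apply_symm_apply X0
  have hq0 : q ≠ 0 := by
    intro h
    rw [h, map_zero] at hq
    exact one_ne_zero (MonoidAlgebra.single_eq_zero.mp hq.symm)
  have hqs : q.coeff.support.Nonempty :=
    Finsupp.support_nonempty_iff.mpr (mt MonoidAlgebra.coeff_eq_zero.mp hq0)
  obtain ⟨m0, hm0, hm0max⟩ :=
    q.coeff.support.exists_max_image (fun l => TriAux.Wt D (FreeMonoid.toList l)) hqs
  set μ := TriAux.Wt D (FreeMonoid.toList m0) with hμ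
  by_cases hμ1 : μ ≤ 1
  · -- low-weight case : `Φ` fixes `q`, contradiction
    have hsupp_small : ∀ l ∈ q.coeff.support,
        FreeMonoid.toList l = [] ∨ FreeMonoid.toList l = [1] :=
      fun l hl => TriAux.Wt_le_one hD2 _ (le_trans (hm0max l hl) hμ1)
    have hfix : Φ q = q := by
      conv_lhs => rw [← MonoidAlgebra.sum_coeff_single q]
      conv_rhs => rw [← MonoidAlgebra.sum_coeff_single q]
      rw [map_finsuppSum]
      apply Finsupp.sum_congr
      intro l hl
      rcases hsupp_small l hl with h | h
      · have hl1 : l = 1 := by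
          apply FreeMonoid.toList.injective
          rw [h]
          rfl
        subst hl1
        have hsingle : MonoidAlgebra.single (1 : FreeMonoid (Fin 2)) (q.coeff 1)
            = (q.coeff 1) • (1 : MonoidAlgebra K (FreeMonoid (Fin 2))) := by
          rw [show (1 : MonoidAlgebra K (FreeMonoid (Fin 2)))
            = MonoidAlgebra.single 1 1 from rfl, MonoidAlgebra.smul_single, smul_eq_mul, mul_one]
        rw [hsingle, map_smul,
          show Φ (1 : MonoidAlgebra K (FreeMonoid (Fin 2))) = 1 from map_one Φ]
      · have hl1 : l = FreeMonoid.of 1 := by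
          apply FreeMonoid.toList.injective
          rw [h, FreeMonoid.toList_of]
        subst hl1
        have hsingle : MonoidAlgebra.single (FreeMonoid.of (1 : Fin 2)) (q.coeff (FreeMonoid.of 1))
            = (q.coeff (FreeMonoid.of 1)) • X1 := by
          rw [hX1, MonoidAlgebra.smul_single, smul_eq_mul, mul_one]
        rw [hsingle, map_smul, hΦ1]
    rw [hfix] at hq
    have hof0 : FreeMonoid.of (0 : Fin 2) ∉ q.coeff.support := by
      intro hmem
      have hle := hm0max _ hmem
      have : TriAux.Wt D (FreeMonoid.toList (FreeMonoid.of (0 : Fin 2))) = D := by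
        rw [FreeMonoid.toList_of, TriAux.Wt_cons, if_pos rfl, TriAux.Wt_nil]
        omega
      rw [this] at hle
      omega
    have hq00 : q.coeff (FreeMonoid.of 0) = 0 := Finsupp.notMem_support_iff.mp hof0
    have := congrArg (fun g : MonoidAlgebra K (FreeMonoid (Fin 2)) => g.coeff (FreeMonoid.of 0)) hq
    simp only [hX0] at this
    rw [hq00, MonoidAlgebra.coeff_single, Finsupp.single_apply, if_pos rfl] at this
    exact one_ne_zero this.symm
  · -- high-weight case : leading-form argument
    push_neg at hμ1
    obtain ⟨k, u, hku⟩ := TriAux.w_decomp w hw0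
    obtain ⟨mh, hmhmem, hmhmax⟩ :=
      (q.coeff.support.filter (fun l => TriAux.Wt D (FreeMonoid.toList l) = μ)).exists_max_image
        (fun l => TriAux.val (TriAux.subst w (FreeMonoid.toList l)))
        ⟨m0, by rw [Finset.mem_filter]; exact ⟨hm0, rfl⟩⟩
    rw [Finset.mem_filter] at hmhmem
    obtain ⟨hmhq, hmhW⟩ := hmhmem
    set v := FreeMonoid.ofList (TriAux.subst w (FreeMonoid.toList mh)) with hv
    have hvlen : (FreeMonoid.toList v).length = μ := by
      rw [hv, FreeMonoid.toList_ofList, TriAux.length_subst, hwD, hmhW]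
    have hH : ∀ i, ∀ s ∈ (Φ (MonoidAlgebra.single (FreeMonoid.of i) 1)).coeff.support,
        (FreeMonoid.toList s).length ≤ TriAux.wfun D i := by
      intro i s hs
      rcases (show i = 0 ∨ i = 1 from by omega) with hi | hi <;> subst hi
      · rw [show MonoidAlgebra.single (FreeMonoid.of (0 : Fin 2)) (1 : K) = X0 from hX0.symm,
          hΦ0, MonoidAlgebra.coeff_add] at hs
        have := Finsupp.support_add hs
        rw [Finset.mem_union] at this
        rcases this with h | h
        · have := Finsupp.support_single_subset
              (by rw [hX0, MonoidAlgebra.coeff_single] at h; exact h)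
          simp only [Finset.mem_singleton] at this
          subst this
          rw [FreeMonoid.toList_of]
          show 1 ≤ TriAux.wfun D 0
          rw [show TriAux.wfun D 0 = D from rfl]
          omega
        · show _ ≤ TriAux.wfun D 0
          rw [show TriAux.wfun D 0 = D from rfl]
          exact hbound s h
      · rw [show MonoidAlgebra.single (FreeMonoid.of (1 : Fin 2)) (1 : K) = X1 from hX1.symm,
          hΦ1] at hs
        have := Finsupp.support_single_subset
            (by rw [hX1, MonoidAlgebra.coeff_single] at hs; exact hs)
        simp only [Finset.mem_singleton] at this
        subst this
        rw [FreeMonoid.toList_of]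
        exact le_refl _
    have htop : ∀ i s, (FreeMonoid.toList s).length = TriAux.wfun D i →
        (Φ (MonoidAlgebra.single (FreeMonoid.of i) 1)).coeff s = (TriAux.Tm G i).coeff s := by
      intro i s hlen
      rcases (show i = 0 ∨ i = 1 from by omega) with hi | hi <;> subst hi
      · rw [show MonoidAlgebra.single (FreeMonoid.of (0 : Fin 2)) (1 : K) = X0 from hX0.symm,
          hΦ0]
        rw [show TriAux.wfun D 0 = D from rfl] at hlen
        have hX0s : X0.coeff s = 0 := by
          rw [hX0, MonoidAlgebra.coeff_single, Finsupp.single_apply, if_neg]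
          intro hcontra
          rw [← hcontra, FreeMonoid.toList_of] at hlen
          simp at hlen
          omega
        rw [MonoidAlgebra.coeff_add, Finsupp.add_apply, hX0s, zero_add]
        rw [show TriAux.Tm G 0 = G from by simp [TriAux.Tm]]
        exact (hGapp s hlen).symm
      · rw [show MonoidAlgebra.single (FreeMonoid.of (1 : Fin 2)) (1 : K) = X1 from hX1.symm,
          hΦ1, hX1]
        rw [show TriAux.Tm G 1 = MonoidAlgebra.single (FreeMonoid.of 1) 1 from by
          simp [TriAux.Tm, if_neg (by decide : ¬ (1 : Fin 2) = 0)]]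
    have hsum := TriAux.equiv_apply_coeff Φ q v
    rw [hq] at hsum
    have hX0v : X0.coeff v = 0 := by
      rw [hX0, MonoidAlgebra.coeff_single, Finsupp.single_apply, if_neg]
      intro hcontra
      have := congrArg (fun t => (FreeMonoid.toList t).length) hcontra
      simp only [FreeMonoid.toList_of, List.length_singleton] at this
      rw [hvlen] at this
      omega
    rw [hX0v] at hsum
    have hterm : ∀ l ∈ q.coeff.support, l ≠ mh →
        q.coeff l * ((((FreeMonoid.toList l).map
          (fun i => Φ (MonoidAlgebra.single (FreeMonoid.of i) 1))).prod).coeff v) = 0 := by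
      intro l hl hlne
      have hWl : TriAux.Wt D (FreeMonoid.toList l) ≤ μ := hm0max l hl
      rw [TriAux.prod_top G D _ hGsupp hH htop (FreeMonoid.toList l) v
        (by rw [hvlen]; exact hWl)]
      by_cases hz : (((FreeMonoid.toList l).map (TriAux.Tm G)).prod).coeff v = 0
      · rw [hz, mul_zero]
      · exfalso
        have hlenv := TriAux.T_len G D hGsupp (FreeMonoid.toList l) v
          (Finsupp.mem_support_iff.mpr hz)
        have hWeq : TriAux.Wt D (FreeMonoid.toList l) = μ := by
          rw [← hlenv, hvlen]
        have hval1 := TriAux.T_val G D w hGsupp hwD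
          (fun s hs => hwmax s hs) (FreeMonoid.toList l) v hz
        have hval2 : TriAux.val (TriAux.subst w (FreeMonoid.toList l))
            ≤ TriAux.val (TriAux.subst w (FreeMonoid.toList mh)) := by
          apply hmhmax
          rw [Finset.mem_filter]
          exact ⟨hl, hWeq⟩
        have hvv : TriAux.val (FreeMonoid.toList v)
            = TriAux.val (TriAux.subst w (FreeMonoid.toList mh)) := by
          rw [hv, FreeMonoid.toList_ofList]
        have hveq : TriAux.val (TriAux.subst w (FreeMonoid.toList l))
            = TriAux.val (TriAux.subst w (FreeMonoid.toList mh)) := by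
          rw [hvv] at hval1
          omega
        have hsublen : (TriAux.subst w (FreeMonoid.toList l)).length
            = (TriAux.subst w (FreeMonoid.toList mh)).length := by
          rw [TriAux.length_subst, TriAux.length_subst, hwD, hWeq, hmhW]
        have hsubeq := TriAux.val_inj _ _ hsublen hveq
        have := TriAux.subst_injective w k u hku _ _ hsubeq
        exact hlne (FreeMonoid.toList.injective this)
    rw [Finset.sum_eq_single_of_mem mh hmhq hterm] at hsum
    rw [TriAux.prod_top G D _ hGsupp hH htop (FreeMonoid.toList mh) v
      (by rw [hvlen, hmhW])] at hsum
    have hT := TriAux.T_substval G D w hGsupp hwD hGw (FreeMonoid.toList mh)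
    rw [← hv] at hT
    exact mul_ne_zero (Finsupp.mem_support_iff.mp hmhq) hT hsum.symm
end

section
/- Let K be an algebraically closed field of characteristic zero, n, r ≥ 1, and let σ be a regular action of T_r = (K^×)^r on F_n = FreeAlgebra K (Fin n) with positive roots: there are integers k_{ij} ≥ 1 (1 ≤ i ≤ n, 1 ≤ j ≤ r) such that for every t and i, the element σ(t)(z_i) − (∏_j t_j^{k_{ij}}) • z_i has all of its homogeneous components in degrees ≥ 2. Then σ is linearizable. -/
open FreeAlgebra

/-- A torus action on the free algebra is *linearizable* if some algebra automorphism `β`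
conjugates it into an action mapping each generator into the linear span of the generators. -/
def TorusActionIsLinearizable {K : Type} [Field K] {n r : ℕ}
    (σ : (Fin r → Kˣ) →* (FreeAlgebra K (Fin n) ≃ₐ[K] FreeAlgebra K (Fin n))) : Prop :=
  ∃ β : FreeAlgebra K (Fin n) ≃ₐ[K] FreeAlgebra K (Fin n),
    ∀ (t : Fin r → Kˣ) (i : Fin n),
      β.symm (σ t (β (ι K i))) ∈
        Submodule.span K (Set.range (ι K : Fin n → FreeAlgebra K (Fin n)))

/-- The character of the torus attached to an integer vector `m`. -/
def TAchar (K : Type) [Field K] (r : ℕ) (m : Fin r → ℤ) : (Fin r → Kˣ) →* K where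
  toFun t := ((∏ j : Fin r, (t j) ^ (m j) : Kˣ) : K)
  map_one' := by simp
  map_mul' s t := by
    push_cast
    simp [Pi.mul_apply, mul_zpow, Finset.prod_mul_distrib]

lemma TAchar_injective (K : Type) [Field K] [CharZero K] (r : ℕ) :
    Function.Injective (TAchar K r) := by
  intro m m' h
  funext j
  have h2 : ((2:ℚ):K) ≠ 0 := by norm_num
  set u : Kˣ := Units.mk0 ((2:ℚ):K) h2 with hu
  have := congrArg (fun f => f (fun j' => if j' = j then u else 1)) h
  simp only [TAchar, MonoidHom.coe_mk, OneHom.coe_mk] at this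
  rw [Finset.prod_eq_single j (by intro b _ hb; simp [hb]) (by simp),
    Finset.prod_eq_single j (by intro b _ hb; simp [hb]) (by simp)] at this
  simp only [if_true, Units.val_zpow_eq_zpow_val, hu, Units.val_mk0] at this
  have hq : ((2:ℚ) ^ (m j) : ℚ) = ((2:ℚ) ^ (m' j) : ℚ) := by
    apply Rat.cast_injective (α := K)
    push_cast
    norm_num at this ⊢; exact this
  exact zpow_right_injective₀ (by norm_num) (by norm_num) hq

lemma TAchar_scalar_indep {K : Type} [Field K] [CharZero K] {r : ℕ}
    (S : Finset (Fin r → ℤ)) (c : (Fin r → ℤ) → K)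
    (h : ∀ t : Fin r → Kˣ, ∑ m ∈ S, TAchar K r m t * c m = 0) :
    ∀ m ∈ S, c m = 0 := by
  have li : LinearIndependent K (fun m : (Fin r → ℤ) => ⇑(TAchar K r m)) :=
    (linearIndependent_monoidHom (Fin r → Kˣ) K).comp (TAchar K r) (TAchar_injective K r)
  have := linearIndependent_iff'.mp li S c ?_
  · exact this
  · funext t
    simpa [Finset.sum_apply, mul_comm] using h t

lemma TAchar_vector_indep {K : Type} [Field K] [CharZero K] {r : ℕ}
    {V : Type} [AddCommGroup V] [Module K V]
    (S : Finset (Fin r → ℤ)) (v : (Fin r → ℤ) → V)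
    (h : ∀ t : Fin r → Kˣ, ∑ m ∈ S, TAchar K r m t • v m = 0) :
    ∀ m ∈ S, v m = 0 := by
  intro m hm
  rw [← Module.forall_dual_apply_eq_zero_iff K]
  intro φ
  refine TAchar_scalar_indep S (fun m => φ (v m)) (fun t => ?_) m hm
  have := congrArg φ (h t)
  simpa [map_sum, mul_comm] using this

noncomputable abbrev TAbasis (K : Type) [Field K] (n : ℕ) :
    Module.Basis (FreeMonoid (Fin n)) K (FreeAlgebra K (Fin n)) :=
  FreeAlgebra.basisFreeMonoid K (Fin n)

lemma TAbasis_apply {K : Type} [Field K] {n : ℕ} (w : FreeMonoid (Fin n)) :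
    TAbasis K n w =
      FreeAlgebra.equivMonoidAlgebraFreeMonoid.symm (MonoidAlgebra.single w (1:K)) := by
  simp [TAbasis, FreeAlgebra.basisFreeMonoid]

lemma TAbasis_one {K : Type} [Field K] {n : ℕ} :
    TAbasis K n (1 : FreeMonoid (Fin n)) = 1 := by
  rw [TAbasis_apply]
  exact map_one _

lemma TAbasis_mul {K : Type} [Field K] {n : ℕ} (w w' : FreeMonoid (Fin n)) :
    TAbasis K n (w * w') = TAbasis K n w * TAbasis K n w' := by
  rw [TAbasis_apply, TAbasis_apply, TAbasis_apply, ← map_mul]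
  congr 1
  rw [MonoidAlgebra.single_mul_single, one_mul]

lemma TAbasis_of {K : Type} [Field K] {n : ℕ} (i : Fin n) :
    TAbasis K n (FreeMonoid.of i) = FreeAlgebra.ι K i := by
  rw [TAbasis_apply]
  apply (FreeAlgebra.equivMonoidAlgebraFreeMonoid (R := K) (X := Fin n)).injective
  simp only [AlgEquiv.apply_symm_apply]
  rw [show (FreeAlgebra.equivMonoidAlgebraFreeMonoid (R := K) (X := Fin n))
      (FreeAlgebra.ι K i) = MonoidAlgebra.of K (FreeMonoid (Fin n)) (FreeMonoid.of i) from ?_]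
  · rfl
  · simp [FreeAlgebra.equivMonoidAlgebraFreeMonoid]

/-- Span of monomials of length at least `d`. -/
noncomputable def TAWd (K : Type) [Field K] (n : ℕ) (d : ℕ) :
    Submodule K (FreeAlgebra K (Fin n)) :=
  Submodule.span K (TAbasis K n '' {w | d ≤ w.length})

/-- Span of monomials of length at most `D`. -/
noncomputable def TALd (K : Type) [Field K] (n : ℕ) (D : ℕ) :
    Submodule K (FreeAlgebra K (Fin n)) :=
  Submodule.span K (TAbasis K n '' {w | w.length ≤ D})

lemma mem_TAWd_iff {K : Type} [Field K] {n : ℕ} {d : ℕ} {x : FreeAlgebra K (Fin n)} :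
    x ∈ TAWd K n d ↔ ∀ w : FreeMonoid (Fin n), w.length < d → (TAbasis K n).repr x w = 0 := by
  rw [TAWd, Module.Basis.mem_span_image]
  constructor
  · intro h w hw
    by_contra h0
    exact absurd (h (Finsupp.mem_support_iff.mpr h0)) (by simpa using hw)
  · intro h w hw
    simp only [Set.mem_setOf_eq]
    by_contra h0
    exact (Finsupp.mem_support_iff.mp hw) (h w (by omega))

lemma mem_TALd_iff {K : Type} [Field K] {n : ℕ} {D : ℕ} {x : FreeAlgebra K (Fin n)} :
    x ∈ TALd K n D ↔ ∀ w : FreeMonoid (Fin n), D < w.length → (TAbasis K n).repr x w = 0 := by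
  rw [TALd, Module.Basis.mem_span_image]
  constructor
  · intro h w hw
    by_contra h0
    exact absurd (h (Finsupp.mem_support_iff.mpr h0)) (by simpa using hw)
  · intro h w hw
    simp only [Set.mem_setOf_eq]
    by_contra h0
    exact (Finsupp.mem_support_iff.mp hw) (h w (by omega))

lemma TAWd_antitone {K : Type} [Field K] {n : ℕ} {d d' : ℕ} (h : d ≤ d') :
    TAWd K n d' ≤ TAWd K n d :=
  Submodule.span_mono (Set.image_mono (fun w hw => le_trans h hw))

lemma TAWd_zero {K : Type} [Field K] {n : ℕ} (x : FreeAlgebra K (Fin n)) :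
    x ∈ TAWd K n 0 := mem_TAWd_iff.mpr (fun w hw => absurd hw (by omega))

lemma TAbasis_mem_TAWd {K : Type} [Field K] {n : ℕ} {d : ℕ} {w : FreeMonoid (Fin n)}
    (h : d ≤ w.length) : TAbasis K n w ∈ TAWd K n d :=
  Submodule.subset_span ⟨w, h, rfl⟩

lemma mul_mem_TAWd {K : Type} [Field K] {n : ℕ} {a b : ℕ} {x y : FreeAlgebra K (Fin n)}
    (hx : x ∈ TAWd K n a) (hy : y ∈ TAWd K n b) : x * y ∈ TAWd K n (a + b) := by
  have : TAWd K n a * TAWd K n b ≤ TAWd K n (a + b) := by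
    rw [TAWd, TAWd, Submodule.span_mul_span]
    refine Submodule.span_le.mpr ?_
    rintro z hz
    rw [Set.mem_mul] at hz
    obtain ⟨u, hu, v, hv, rfl⟩ := hz
    obtain ⟨w, hw, rfl⟩ := hu
    obtain ⟨w', hw', rfl⟩ := hv
    rw [← TAbasis_mul]
    exact Submodule.subset_span ⟨w * w', by
      simp only [Set.mem_setOf_eq, FreeMonoid.length_mul]; exact Nat.add_le_add hw hw', rfl⟩
  exact this (Submodule.mul_mem_mul hx hy)

lemma span_iota_le_TAWd {K : Type} [Field K] {n : ℕ} :
    Submodule.span K (Set.range (FreeAlgebra.ι K : Fin n → FreeAlgebra K (Fin n)))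
      ≤ TAWd K n 1 := by
  refine Submodule.span_le.mpr ?_
  rintro _ ⟨i, rfl⟩
  rw [← TAbasis_of]
  exact TAbasis_mem_TAWd (by simp [FreeMonoid.length_of])

lemma pow_span_iota_le_TAWd {K : Type} [Field K] {n : ℕ} (s : ℕ) (hs : 1 ≤ s) :
    Submodule.span K (Set.range (FreeAlgebra.ι K : Fin n → FreeAlgebra K (Fin n))) ^ s
      ≤ TAWd K n s := by
  induction s with
  | zero => omega
  | succ s ih =>
    rcases Nat.eq_or_lt_of_le hs with h1 | h1
    · rw [← h1, pow_one]
      exact span_iota_le_TAWd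
    · rw [pow_succ]
      refine Submodule.mul_le.mpr (fun x hx y hy => ?_)
      exact mul_mem_TAWd (ih (by omega) hx) (span_iota_le_TAWd hy)

lemma higherDegree_le_TAWd {K : Type} [Field K] {n : ℕ} :
    FreeAlgebra.higherDegree K n ≤ TAWd K n 2 := by
  refine iSup_le (fun kk => ?_)
  exact le_trans (pow_span_iota_le_TAWd kk (by omega)) (TAWd_antitone (kk.2))

section Action

variable {K : Type} [Field K] {n r : ℕ}
  (σ : (Fin r → Kˣ) →* (FreeAlgebra K (Fin n) ≃ₐ[K] FreeAlgebra K (Fin n)))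

/-- The eigenspace (weight space) of the torus action attached to weight `m`. -/
def TAeig (m : Fin r → ℤ) : Submodule K (FreeAlgebra K (Fin n)) where
  carrier := {x | ∀ t, σ t x = TAchar K r m t • x}
  add_mem' := by
    intro x y hx hy t
    rw [map_add, hx t, hy t, smul_add]
  zero_mem' := by intro t; rw [map_zero, smul_zero]
  smul_mem' := by
    intro c x hx t
    rw [map_smul, hx t, smul_comm]

lemma mem_TAeig_iff {m : Fin r → ℤ} {x : FreeAlgebra K (Fin n)} :
    x ∈ TAeig σ m ↔ ∀ t, σ t x = TAchar K r m t • x := Iff.rfl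

lemma TAchar_add {K : Type} [Field K] {r : ℕ} (m m' : Fin r → ℤ) (t : Fin r → Kˣ) :
    TAchar K r (m + m') t = TAchar K r m t * TAchar K r m' t := by
  simp only [TAchar, MonoidHom.coe_mk, OneHom.coe_mk, Pi.add_apply, zpow_add]
  push_cast
  rw [Finset.prod_mul_distrib]

lemma TAeig_mul {m m' : Fin r → ℤ} {x y : FreeAlgebra K (Fin n)}
    (hx : x ∈ TAeig σ m) (hy : y ∈ TAeig σ m') : x * y ∈ TAeig σ (m + m') := by
  intro t
  rw [map_mul, hx t, hy t, TAchar_add, smul_mul_assoc, mul_smul_comm, smul_smul]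

lemma TAeig_one : (1 : FreeAlgebra K (Fin n)) ∈ TAeig σ 0 := by
  intro t
  simp [TAchar]

end Action

section Phi

variable {K : Type} [Field K] {n r : ℕ}

lemma TArepr_sum {x : FreeAlgebra K (Fin n)} :
    x = ∑ w ∈ ((TAbasis K n).repr x).support,
      ((TAbasis K n).repr x) w • TAbasis K n w := by
  conv_lhs => rw [← (TAbasis K n).linearCombination_repr x]
  rw [Finsupp.linearCombination_apply, Finsupp.sum]

variable (A : Fin n → FreeAlgebra K (Fin n))

/-- The candidate linearizing endomorphism. -/
noncomputable def TAphi : FreeAlgebra K (Fin n) →ₐ[K] FreeAlgebra K (Fin n) :=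
  FreeAlgebra.lift K A

lemma TAphi_diff_monomial (hA : ∀ i, A i - FreeAlgebra.ι K i ∈ TAWd K n 2)
    (w : FreeMonoid (Fin n)) :
    TAphi A (TAbasis K n w) - TAbasis K n w ∈ TAWd K n (w.length + 1) := by
  induction w using FreeMonoid.recOn with
  | one =>
    rw [TAbasis_one, map_one, sub_self]
    exact Submodule.zero_mem _
  | of_mul i w ih =>
    rw [TAbasis_mul, map_mul, TAbasis_of]
    have key : TAphi A (FreeAlgebra.ι K i) * TAphi A (TAbasis K n w)
        - FreeAlgebra.ι K i * TAbasis K n w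
        = FreeAlgebra.ι K i * (TAphi A (TAbasis K n w) - TAbasis K n w)
          + ((A i - FreeAlgebra.ι K i) * TAbasis K n w
          + (A i - FreeAlgebra.ι K i) * (TAphi A (TAbasis K n w) - TAbasis K n w)) := by
      rw [TAphi, FreeAlgebra.lift_ι_apply]
      noncomm_ring
    rw [key]
    have hlen : (FreeMonoid.of i * w).length = w.length + 1 := by
      rw [FreeMonoid.length_mul, FreeMonoid.length_of]; omega
    rw [hlen]
    refine Submodule.add_mem _ ?_ (Submodule.add_mem _ ?_ ?_)
    · have := mul_mem_TAWd (K := K) (n := n) (a := 1) (b := w.length + 1)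
        (span_iota_le_TAWd (Submodule.subset_span ⟨i, rfl⟩)) ih
      exact TAWd_antitone (by omega) this
    · have := mul_mem_TAWd (hA i) (TAbasis_mem_TAWd (le_refl w.length))
      exact TAWd_antitone (by omega) this
    · have := mul_mem_TAWd (hA i) ih
      exact TAWd_antitone (by omega) this

lemma TAphi_diff (hA : ∀ i, A i - FreeAlgebra.ι K i ∈ TAWd K n 2)
    {d : ℕ} {x : FreeAlgebra K (Fin n)} (hx : x ∈ TAWd K n d) :
    TAphi A x - x ∈ TAWd K n (d + 1) := by
  have hx' := mem_TAWd_iff.mp hx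
  set c := (TAbasis K n).repr x with hc
  have ex : ∑ w ∈ c.support, c w • TAbasis K n w = x := (TArepr_sum (x := x)).symm
  rw [← ex, map_sum, ← Finset.sum_sub_distrib]
  refine Submodule.sum_mem _ (fun w hw => ?_)
  rw [map_smul, ← smul_sub]
  refine Submodule.smul_mem _ _ ?_
  have hlw : d ≤ w.length := by
    by_contra h
    exact Finsupp.mem_support_iff.mp hw (hx' w (by omega))
  exact TAWd_antitone (by omega) (TAphi_diff_monomial A hA w)

lemma TAphi_injective (hA : ∀ i, A i - FreeAlgebra.ι K i ∈ TAWd K n 2) :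
    Function.Injective (TAphi A) := by
  rw [injective_iff_map_eq_zero]
  intro x hx0
  by_contra hx
  have hrepr : (TAbasis K n).repr x ≠ 0 := fun h => hx (by
    have := congrArg ((TAbasis K n).repr.symm) h
    simpa using this)
  have hsupp : ((TAbasis K n).repr x).support.Nonempty := by
    rw [Finsupp.support_nonempty_iff]; exact hrepr
  obtain ⟨w₀, hw₀, hmin⟩ := Finset.exists_min_image _ (fun w => w.length) hsupp
  have hxW : x ∈ TAWd K n w₀.length := by
    rw [mem_TAWd_iff]
    intro w hw
    by_contra h0
    exact absurd (hmin w (Finsupp.mem_support_iff.mpr h0)) (by omega)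
  have hd := TAphi_diff A hA hxW
  rw [hx0, zero_sub] at hd
  have := mem_TAWd_iff.mp hd w₀ (by omega)
  rw [map_neg] at this
  simp only [Finsupp.coe_neg, Pi.neg_apply, neg_eq_zero] at this
  exact Finsupp.mem_support_iff.mp hw₀ this

end Phi

section Invariance

variable {K : Type} [Field K] {n r : ℕ}
  (σ : (Fin r → Kˣ) →* (FreeAlgebra K (Fin n) ≃ₐ[K] FreeAlgebra K (Fin n)))

lemma sigma_monomial_mem_TAWd
    (hW1 : ∀ (t : Fin r → Kˣ) (i : Fin n), σ t (FreeAlgebra.ι K i) ∈ TAWd K n 1)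
    (t : Fin r → Kˣ) (w : FreeMonoid (Fin n)) :
    σ t (TAbasis K n w) ∈ TAWd K n w.length := by
  induction w using FreeMonoid.recOn with
  | one =>
    rw [TAbasis_one, map_one]
    exact TAWd_zero 1
  | of_mul i w ih =>
    rw [TAbasis_mul, TAbasis_of, map_mul]
    have := mul_mem_TAWd (hW1 t i) ih
    rw [show (FreeMonoid.of i * w).length = 1 + w.length by
      rw [FreeMonoid.length_mul, FreeMonoid.length_of]]
    exact this

lemma sigma_mem_TAWd
    (hW1 : ∀ (t : Fin r → Kˣ) (i : Fin n), σ t (FreeAlgebra.ι K i) ∈ TAWd K n 1)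
    (t : Fin r → Kˣ) {d : ℕ} {x : FreeAlgebra K (Fin n)} (hx : x ∈ TAWd K n d) :
    σ t x ∈ TAWd K n d := by
  have hx' := mem_TAWd_iff.mp hx
  set c := (TAbasis K n).repr x with hc
  have ex : ∑ w ∈ c.support, c w • TAbasis K n w = x := (TArepr_sum (x := x)).symm
  rw [← ex, map_sum]
  refine Submodule.sum_mem _ (fun w hw => ?_)
  rw [map_smul]
  refine Submodule.smul_mem _ _ ?_
  have hlw : d ≤ w.length := by
    by_contra h
    exact Finsupp.mem_support_iff.mp hw (hx' w (by omega))
  exact TAWd_antitone hlw (sigma_monomial_mem_TAWd σ hW1 t w)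

/-- The weight components of an element of `TAWd e` lie in `TAWd e`. -/
lemma eig_component_mem_TAWd [CharZero K]
    (hW1 : ∀ (t : Fin r → Kˣ) (i : Fin n), σ t (FreeAlgebra.ι K i) ∈ TAWd K n 1)
    (g : (Fin r → ℤ) →₀ FreeAlgebra K (Fin n))
    (hg : ∀ m, g m ∈ TAeig σ m) {e : ℕ}
    (hsum : (g.sum fun _ x => x) ∈ TAWd K n e) :
    ∀ m, g m ∈ TAWd K n e := by
  intro m₀
  by_cases hm₀ : m₀ ∈ g.support
  swap
  · rw [Finsupp.notMem_support_iff.mp hm₀]; exact Submodule.zero_mem _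
  rw [mem_TAWd_iff]
  intro w hw
  refine TAchar_vector_indep (K := K) (r := r) (V := K) g.support
    (fun m => ((TAbasis K n).repr (g m)) w) (fun t => ?_) m₀ hm₀
  have h1 : σ t (g.sum fun _ x => x) ∈ TAWd K n e := sigma_mem_TAWd σ hW1 t hsum
  have h2 : σ t (g.sum fun _ x => x) = ∑ m ∈ g.support, TAchar K r m t • g m := by
    rw [Finsupp.sum, map_sum]
    exact Finset.sum_congr rfl (fun m _ => hg m t)
  have h3 := mem_TAWd_iff.mp h1 w hw
  rw [h2] at h3
  calc ∑ m ∈ g.support, TAchar K r m t • ((TAbasis K n).repr (g m)) w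
      = ((TAbasis K n).repr (∑ m ∈ g.support, TAchar K r m t • g m)) w := by
        rw [map_sum]
        rw [Finsupp.finset_sum_apply]
        refine Finset.sum_congr rfl (fun m _ => ?_)
        rw [map_smul]
        rfl
    _ = 0 := h3

end Invariance

section Weights

variable {K : Type} [Field K] {n r : ℕ}

/-- The weight of a monomial: the sum of the root vectors of its letters. -/
def TAwt (k : Fin n → Fin r → ℤ) (w : FreeMonoid (Fin n)) : Fin r → ℤ :=
  fun j => (w.toList.map (fun i => k i j)).sum

lemma TAwt_one (k : Fin n → Fin r → ℤ) : TAwt k (1 : FreeMonoid (Fin n)) = 0 := by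
  funext j; simp [TAwt]

lemma TAwt_of_mul (k : Fin n → Fin r → ℤ) (i : Fin n) (w : FreeMonoid (Fin n)) :
    TAwt k (FreeMonoid.of i * w) = k i + TAwt k w := by
  funext j; simp [TAwt]

lemma TAwt_length_le (k : Fin n → Fin r → ℤ) (hpos : ∀ i j, 1 ≤ k i j)
    (w : FreeMonoid (Fin n)) (j : Fin r) : (w.length : ℤ) ≤ TAwt k w j := by
  induction w using FreeMonoid.recOn with
  | one => simp [TAwt_one]
  | of_mul i w ih =>
    rw [TAwt_of_mul, FreeMonoid.length_mul, FreeMonoid.length_of]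
    have := hpos i j
    simp only [Pi.add_apply]
    push_cast
    omega

variable (σ : (Fin r → Kˣ) →* (FreeAlgebra K (Fin n) ≃ₐ[K] FreeAlgebra K (Fin n)))
  (k : Fin n → Fin r → ℤ) (A : Fin n → FreeAlgebra K (Fin n))

lemma TAphi_monomial_eig (hA_eig : ∀ i, A i ∈ TAeig σ (k i)) (w : FreeMonoid (Fin n)) :
    TAphi A (TAbasis K n w) ∈ TAeig σ (TAwt k w) := by
  induction w using FreeMonoid.recOn with
  | one =>
    rw [TAbasis_one, map_one, TAwt_one]
    exact TAeig_one σ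
  | of_mul i w ih =>
    rw [TAbasis_mul, TAbasis_of, map_mul, TAwt_of_mul]
    have hAi : TAphi A (FreeAlgebra.ι K i) = A i := FreeAlgebra.lift_ι_apply _ _
    rw [hAi]
    exact TAeig_mul σ (hA_eig i) ih

end Weights

section Approx

variable {K : Type} [Field K] [CharZero K] {n r : ℕ}
  (σ : (Fin r → Kˣ) →* (FreeAlgebra K (Fin n) ≃ₐ[K] FreeAlgebra K (Fin n)))
  (k : Fin n → Fin r → ℤ) (A : Fin n → FreeAlgebra K (Fin n))

/-- The span of the images under `TAphi A` of the monomials of weight `m`. -/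
noncomputable def TABm (m : Fin r → ℤ) : Submodule K (FreeAlgebra K (Fin n)) :=
  Submodule.span K ((fun w => TAphi A (TAbasis K n w)) '' {w | TAwt k w = m})

lemma TAeig_approx
    (hA_eig : ∀ i, A i ∈ TAeig σ (k i))
    (hA_w : ∀ i, A i - FreeAlgebra.ι K i ∈ TAWd K n 2)
    (hW1 : ∀ (t : Fin r → Kˣ) (i : Fin n), σ t (FreeAlgebra.ι K i) ∈ TAWd K n 1)
    (m : Fin r → ℤ) (x : FreeAlgebra K (Fin n)) (hx : x ∈ TAeig σ m) (d : ℕ) :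
    ∃ p ∈ TABm k A m, x - p ∈ TAeig σ m ∧ x - p ∈ TAWd K n d := by
  induction d with
  | zero =>
    exact ⟨0, Submodule.zero_mem _, by simpa using hx, TAWd_zero _⟩
  | succ d ih =>
    obtain ⟨p, hp, hy_eig, hy_w⟩ := ih
    set y := x - p with hy
    set c := (TAbasis K n).repr y with hc
    have ex : ∑ w ∈ c.support, c w • TAbasis K n w = y := (TArepr_sum (x := y)).symm
    set G : (Fin r → ℤ) →₀ FreeAlgebra K (Fin n) :=
      ∑ w ∈ c.support, Finsupp.single (TAwt k w) (c w • TAphi A (TAbasis K n w)) with hG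
    have hGsum : (G.sum fun _ z => z)
        = ∑ w ∈ c.support, c w • TAphi A (TAbasis K n w) := by
      have : (G.sum fun _ z => z) = (Finsupp.lsum K (fun _ => (LinearMap.id : FreeAlgebra K (Fin n) →ₗ[K] FreeAlgebra K (Fin n)))) G := rfl
      rw [this, hG, map_sum]
      refine Finset.sum_congr rfl (fun w _ => ?_)
      simp
    have hGm : ∀ m', G m' ∈ TAeig σ m' := by
      intro m'
      rw [hG, Finsupp.finset_sum_apply]
      refine Submodule.sum_mem _ (fun w _ => ?_)
      rw [Finsupp.single_apply]
      split
      · next h =>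
        rw [← h]
        exact Submodule.smul_mem _ _ (TAphi_monomial_eig σ k A hA_eig w)
      · exact Submodule.zero_mem _
    have hGb : ∀ m', G m' ∈ TABm k A m' := by
      intro m'
      rw [hG, Finsupp.finset_sum_apply]
      refine Submodule.sum_mem _ (fun w _ => ?_)
      rw [Finsupp.single_apply]
      split
      · next h =>
        exact Submodule.smul_mem _ _ (Submodule.subset_span ⟨w, h, rfl⟩)
      · exact Submodule.zero_mem _
    have hlen : ∀ w ∈ c.support, d ≤ w.length := by
      intro w hw
      by_contra h
      exact Finsupp.mem_support_iff.mp hw (mem_TAWd_iff.mp hy_w w (by omega))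
    have hyq : y - (G.sum fun _ z => z) ∈ TAWd K n (d + 1) := by
      rw [hGsum, ← ex, ← Finset.sum_sub_distrib]
      refine Submodule.sum_mem _ (fun w hw => ?_)
      rw [← smul_sub]
      refine Submodule.smul_mem _ _ ?_
      have : TAbasis K n w - TAphi A (TAbasis K n w)
          = -(TAphi A (TAbasis K n w) - TAbasis K n w) := by abel
      rw [this]
      refine Submodule.neg_mem _ ?_
      exact TAWd_antitone (by have := hlen w hw; omega) (TAphi_diff_monomial A hA_w w)
    set G' : (Fin r → ℤ) →₀ FreeAlgebra K (Fin n) := Finsupp.single m y - G with hG'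
    have hG'm : ∀ m', G' m' ∈ TAeig σ m' := by
      intro m'
      rw [hG', Finsupp.sub_apply]
      refine Submodule.sub_mem _ ?_ (hGm m')
      rw [Finsupp.single_apply]
      split
      · next h => rw [← h]; exact hy_eig
      · exact Submodule.zero_mem _
    have hG'sum : (G'.sum fun _ z => z) = y - (G.sum fun _ z => z) := by
      have e1 : ∀ H : (Fin r → ℤ) →₀ FreeAlgebra K (Fin n),
          (H.sum fun _ z => z) = (Finsupp.lsum K (fun _ => (LinearMap.id : FreeAlgebra K (Fin n) →ₗ[K] FreeAlgebra K (Fin n)))) H := fun _ => rfl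
      rw [e1, e1, hG', map_sub]
      congr 1
      simp
    have hG'w : G' m ∈ TAWd K n (d + 1) := by
      refine eig_component_mem_TAWd σ hW1 G' hG'm ?_ m
      rw [hG'sum]
      exact hyq
    have hG'me : G' m = y - G m := by
      rw [hG', Finsupp.sub_apply, Finsupp.single_apply, if_pos rfl]
    refine ⟨p + G m, Submodule.add_mem _ hp (hGb m), ?_, ?_⟩
    · have : x - (p + G m) = y - G m := by rw [hy]; abel
      rw [this]
      exact Submodule.sub_mem _ hy_eig (hGm m)
    · have : x - (p + G m) = G' m := by rw [hG'me, hy]; abel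
      rw [this]
      exact hG'w

end Approx

section Finiteness

variable {K : Type} [Field K] {n r : ℕ}

lemma TALd_mono {D D' : ℕ} (h : D ≤ D') : TALd K n D ≤ TALd K n D' :=
  Submodule.span_mono (Set.image_mono (fun w hw => le_trans hw h))

/-- Every element lies in the span of the monomials of length at most the largest
length appearing in its support. -/
lemma mem_TALd_maxdeg (x : FreeAlgebra K (Fin n)) :
    x ∈ TALd K n (((TAbasis K n).repr x).support.sup FreeMonoid.length) := by
  rw [mem_TALd_iff]
  intro w hw
  by_contra h0
  have := Finset.le_sup (f := FreeMonoid.length) (Finsupp.mem_support_iff.mpr h0)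
  omega

lemma TALd_inter_TAWd {D : ℕ} {x : FreeAlgebra K (Fin n)}
    (h1 : x ∈ TALd K n D) (h2 : x ∈ TAWd K n (D + 1)) : x = 0 := by
  have : (TAbasis K n).repr x = 0 := by
    ext w
    rcases le_or_gt w.length D with h | h
    · exact mem_TAWd_iff.mp h2 w (by omega)
    · exact mem_TALd_iff.mp h1 w h
  have := congrArg ((TAbasis K n).repr.symm) this
  simpa using this

lemma TAwt_words_finite (hr : 1 ≤ r) (k : Fin n → Fin r → ℤ) (hpos : ∀ i j, 1 ≤ k i j)
    (m : Fin r → ℤ) : {w : FreeMonoid (Fin n) | TAwt k w = m}.Finite := by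
  have : {w : FreeMonoid (Fin n) | TAwt k w = m}
      ⊆ {w : FreeMonoid (Fin n) | w.length ≤ (m ⟨0, hr⟩).toNat} := by
    intro w hw
    have := TAwt_length_le k hpos w ⟨0, hr⟩
    rw [Set.mem_setOf_eq.mp hw] at this
    simp only [Set.mem_setOf_eq]
    omega
  exact Set.Finite.subset (List.finite_length_le (α := Fin n) (n := (m ⟨0, hr⟩).toNat)) this

lemma TABm_le_TALd (hr : 1 ≤ r) (k : Fin n → Fin r → ℤ) (hpos : ∀ i j, 1 ≤ k i j)
    (A : Fin n → FreeAlgebra K (Fin n)) (m : Fin r → ℤ) :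
    ∃ D, TABm k A m ≤ TALd K n D := by
  set Wfin := (TAwt_words_finite hr k hpos m).toFinset with hWfin
  refine ⟨Wfin.sup (fun w => (((TAbasis K n).repr (TAphi A (TAbasis K n w))).support.sup
    FreeMonoid.length)), ?_⟩
  refine Submodule.span_le.mpr ?_
  rintro _ ⟨w, hw, rfl⟩
  refine TALd_mono ?_ (mem_TALd_maxdeg (TAphi A (TAbasis K n w)))
  exact Finset.le_sup (f := fun w => (((TAbasis K n).repr (TAphi A (TAbasis K n w))).support.sup
    FreeMonoid.length)) ((TAwt_words_finite hr k hpos m).mem_toFinset.mpr hw)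

end Finiteness

section Range

variable {K : Type} [Field K] [CharZero K] {n r : ℕ}
  (σ : (Fin r → Kˣ) →* (FreeAlgebra K (Fin n) ≃ₐ[K] FreeAlgebra K (Fin n)))
  (k : Fin n → Fin r → ℤ) (A : Fin n → FreeAlgebra K (Fin n))

lemma TAeig_le_range (hr : 1 ≤ r) (hpos : ∀ i j, 1 ≤ k i j)
    (hA_eig : ∀ i, A i ∈ TAeig σ (k i))
    (hA_w : ∀ i, A i - FreeAlgebra.ι K i ∈ TAWd K n 2)
    (hW1 : ∀ (t : Fin r → Kˣ) (i : Fin n), σ t (FreeAlgebra.ι K i) ∈ TAWd K n 1)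
    (m : Fin r → ℤ) (x : FreeAlgebra K (Fin n)) (hx : x ∈ TAeig σ m) :
    ∃ z, TAphi A z = x := by
  obtain ⟨D1, hD1⟩ := TABm_le_TALd hr k hpos A m
  set Dx := ((TAbasis K n).repr x).support.sup FreeMonoid.length with hDx
  obtain ⟨p, hp, _, hpw⟩ :=
    TAeig_approx σ k A hA_eig hA_w hW1 m x hx (max D1 Dx + 1)
  have hxin : x - p ∈ TALd K n (max D1 Dx) := by
    refine Submodule.sub_mem _ ?_ ?_
    · exact TALd_mono (le_max_right _ _) (mem_TALd_maxdeg x)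
    · exact TALd_mono (le_max_left _ _) (hD1 hp)
  have hzero : x - p = 0 := TALd_inter_TAWd hxin hpw
  have hxp : x = p := by
    have := sub_eq_zero.mp hzero
    exact this
  have : TABm k A m ≤ LinearMap.range (TAphi A).toLinearMap := by
    refine Submodule.span_le.mpr ?_
    rintro _ ⟨w, _, rfl⟩
    exact ⟨TAbasis K n w, rfl⟩
  obtain ⟨z, hz⟩ := this (hxp ▸ hp)
  exact ⟨z, hz⟩

end Range

section Esup

variable {K : Type} [Field K] {n r : ℕ}
  (σ : (Fin r → Kˣ) →* (FreeAlgebra K (Fin n) ≃ₐ[K] FreeAlgebra K (Fin n)))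

lemma mul_mem_TAesup {x y : FreeAlgebra K (Fin n)}
    (hx : x ∈ ⨆ m : Fin r → ℤ, TAeig σ m) (hy : y ∈ ⨆ m : Fin r → ℤ, TAeig σ m) :
    x * y ∈ ⨆ m : Fin r → ℤ, TAeig σ m := by
  rw [Submodule.mem_iSup_iff_exists_finsupp] at hx hy
  obtain ⟨f, hf, hfs⟩ := hx
  obtain ⟨g, hg, hgs⟩ := hy
  rw [← hfs, ← hgs, Finsupp.sum, Finsupp.sum, Finset.sum_mul_sum]
  refine Submodule.sum_mem _ (fun m _ => Submodule.sum_mem _ (fun m' _ => ?_))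
  exact le_iSup (fun m => TAeig σ m) (m + m') (TAeig_mul σ (hf m) (hg m'))

lemma top_le_TAesup (hz : ∀ i, FreeAlgebra.ι K i ∈ ⨆ m : Fin r → ℤ, TAeig σ m)
    (x : FreeAlgebra K (Fin n)) : x ∈ ⨆ m : Fin r → ℤ, TAeig σ m := by
  have hb : ∀ w : FreeMonoid (Fin n), TAbasis K n w ∈ ⨆ m : Fin r → ℤ, TAeig σ m := by
    intro w
    induction w using FreeMonoid.recOn with
    | one =>
      rw [TAbasis_one]
      exact le_iSup (fun m => TAeig σ m) 0 (TAeig_one σ)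
    | of_mul i w ih =>
      rw [TAbasis_mul, TAbasis_of]
      exact mul_mem_TAesup σ (hz i) ih
  have : Submodule.span K (Set.range (TAbasis K n)) ≤ ⨆ m : Fin r → ℤ, TAeig σ m := by
    refine Submodule.span_le.mpr ?_
    rintro _ ⟨w, rfl⟩
    exact hb w
  exact this (by rw [Module.Basis.span_eq]; trivial)

end Esup

/-- Every regular torus action with positive roots on the free associative algebra over an
algebraically closed field of characteristic zero is linearizable. -/
theorem positive_root_torus_action_linearizable
    {K : Type} [Field K] [IsAlgClosed K] [CharZero K] {n r : ℕ}
    (hn : 1 ≤ n) (hr : 1 ≤ r)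
    (σ : (Fin r → Kˣ) →* (FreeAlgebra K (Fin n) ≃ₐ[K] FreeAlgebra K (Fin n)))
    (hreg : TorusActionIsRegular σ)
    (k : Fin n → Fin r → ℤ)
    (hpos : ∀ (i : Fin n) (j : Fin r), 1 ≤ k i j)
    (hroots : ∀ (t : Fin r → Kˣ) (i : Fin n),
      σ t (ι K i) - ((∏ j : Fin r, (t j) ^ (k i j) : Kˣ) : K) • ι K i
        ∈ FreeAlgebra.higherDegree K n) :
    TorusActionIsLinearizable σ := by
  classical
  choose a ha using hreg
  -- restate regularity via `TAchar`
  have ha' : ∀ (i : Fin n) (t : Fin r → Kˣ),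
      σ t (ι K i) = ∑ m ∈ (a i).support, TAchar K r m t • a i m := by
    intro i t
    rw [ha i t]
    rfl
  -- restate the root condition via `TAWd`
  have hroots' : ∀ (t : Fin r → Kˣ) (i : Fin n),
      σ t (ι K i) - TAchar K r (k i) t • ι K i ∈ TAWd K n 2 := by
    intro t i
    exact higherDegree_le_TAWd (hroots t i)
  have hi1 : ∀ i : Fin n, (ι K i : FreeAlgebra K (Fin n)) ∈ TAWd K n 1 := by
    intro i
    rw [← TAbasis_of]
    exact TAbasis_mem_TAWd (by simp [FreeMonoid.length_of])
  have hW1 : ∀ (t : Fin r → Kˣ) (i : Fin n), σ t (ι K i) ∈ TAWd K n 1 := by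
    intro t i
    have h2 := hroots' t i
    have : σ t (ι K i) = (σ t (ι K i) - TAchar K r (k i) t • ι K i)
        + TAchar K r (k i) t • ι K i := by abel
    rw [this]
    exact Submodule.add_mem _ (TAWd_antitone (by omega) h2)
      (Submodule.smul_mem _ _ (hi1 i))
  -- each `a i m` is an eigenvector of weight `m`
  have h_eig : ∀ (i : Fin n) (m' : Fin r → ℤ), a i m' ∈ TAeig σ m' := by
    intro i m' s
    by_cases hm' : m' ∈ (a i).support
    swap
    · rw [Finsupp.notMem_support_iff.mp hm', map_zero, smul_zero]
    · have key : ∀ t : Fin r → Kˣ, ∑ m ∈ (a i).support,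
          TAchar K r m t • (σ s (a i m) - TAchar K r m s • a i m) = 0 := by
        intro t
        have A1 : σ s (σ t (ι K i)) = ∑ m ∈ (a i).support,
            TAchar K r m t • σ s (a i m) := by
          rw [ha' i t, map_sum]
          exact Finset.sum_congr rfl (fun m _ => map_smul _ _ _)
        have A2 : σ s (σ t (ι K i)) = ∑ m ∈ (a i).support,
            TAchar K r m t • (TAchar K r m s • a i m) := by
          rw [← AlgEquiv.mul_apply, ← map_mul σ, ha' i (s * t)]
          refine Finset.sum_congr rfl (fun m _ => ?_)
          rw [map_mul, smul_smul, mul_comm]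
        calc ∑ m ∈ (a i).support,
              TAchar K r m t • (σ s (a i m) - TAchar K r m s • a i m)
            = ∑ m ∈ (a i).support, (TAchar K r m t • σ s (a i m)
              - TAchar K r m t • (TAchar K r m s • a i m)) := by
              refine Finset.sum_congr rfl (fun m _ => ?_)
              rw [smul_sub]
          _ = 0 := by rw [Finset.sum_sub_distrib, ← A1, ← A2, sub_self]
      have := TAchar_vector_indep (K := K) (r := r) (a i).support
        (fun m => σ s (a i m) - TAchar K r m s • a i m) key m' hm'
      have h0 := sub_eq_zero.mp this
      exact h0
  -- the sum of the `a i m` is the generator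
  have h_sum : ∀ i : Fin n, ∑ m ∈ (a i).support, a i m = ι K i := by
    intro i
    have := ha' i 1
    rw [map_one σ] at this
    simp only [AlgEquiv.one_apply, map_one, one_smul] at this
    exact this.symm
  -- coordinates of the `a i m` in low degrees
  have h_coord : ∀ (i : Fin n) (w : FreeMonoid (Fin n)), w.length < 2 →
      ∀ m', ((TAbasis K n).repr (a i m')) w
        = (if m' = k i then ((TAbasis K n).repr (ι K i)) w else 0) := by
    intro i w hw m'
    set S' : Finset (Fin r → ℤ) := insert (k i) (a i).support with hS'
    have key : ∀ t : Fin r → Kˣ, ∑ m ∈ S', TAchar K r m t *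
        (((TAbasis K n).repr (a i m)) w
          - (if m = k i then ((TAbasis K n).repr (ι K i)) w else 0)) = 0 := by
      intro t
      have E3 : ((TAbasis K n).repr (σ t (ι K i))) w
          = TAchar K r (k i) t * ((TAbasis K n).repr (ι K i)) w := by
        have h2 := mem_TAWd_iff.mp (hroots' t i) w hw
        rw [map_sub, Finsupp.sub_apply, sub_eq_zero] at h2
        rw [h2, map_smul]
        rfl
      have E1 : ∑ m ∈ S', TAchar K r m t * ((TAbasis K n).repr (a i m)) w
          = ((TAbasis K n).repr (σ t (ι K i))) w := by
        rw [ha' i t, map_sum, Finsupp.finset_sum_apply]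
        rw [Finset.sum_subset (Finset.subset_insert (k i) (a i).support)]
        · refine Finset.sum_congr rfl (fun m _ => ?_)
          rw [map_smul]
          rfl
        · intro m _ hm
          simp [Finsupp.notMem_support_iff.mp hm]
      have E2 : ∑ m ∈ S', TAchar K r m t *
          (if m = k i then ((TAbasis K n).repr (ι K i)) w else 0)
          = TAchar K r (k i) t * ((TAbasis K n).repr (ι K i)) w := by
        simp only [mul_ite, mul_zero]
        rw [Finset.sum_ite_eq' S' (k i)
          (fun m => TAchar K r m t * ((TAbasis K n).repr (ι K i)) w)]
        rw [if_pos (Finset.mem_insert_self _ _)]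
      calc ∑ m ∈ S', TAchar K r m t *
            (((TAbasis K n).repr (a i m)) w
              - (if m = k i then ((TAbasis K n).repr (ι K i)) w else 0))
          = ∑ m ∈ S', (TAchar K r m t * ((TAbasis K n).repr (a i m)) w
            - TAchar K r m t *
              (if m = k i then ((TAbasis K n).repr (ι K i)) w else 0)) := by
            refine Finset.sum_congr rfl (fun m _ => ?_)
            rw [mul_sub]
        _ = 0 := by rw [Finset.sum_sub_distrib, E1, E2, E3, sub_self]
    by_cases hm' : m' ∈ S'
    · have := TAchar_scalar_indep (K := K) (r := r) S'
        (fun m => ((TAbasis K n).repr (a i m)) w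
          - (if m = k i then ((TAbasis K n).repr (ι K i)) w else 0)) key m' hm'
      exact sub_eq_zero.mp this
    · have h1 : m' ∉ (a i).support := fun h => hm' (Finset.mem_insert_of_mem h)
      have h2 : m' ≠ k i := fun h => hm' (h ▸ Finset.mem_insert_self _ _)
      rw [Finsupp.notMem_support_iff.mp h1, if_neg h2, map_zero]
      rfl
  -- the candidate images of the generators
  set A : Fin n → FreeAlgebra K (Fin n) := fun i => a i (k i) with hA
  have hA_eig : ∀ i, A i ∈ TAeig σ (k i) := fun i => h_eig i (k i)
  have hA_w : ∀ i, A i - ι K i ∈ TAWd K n 2 := by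
    intro i
    rw [mem_TAWd_iff]
    intro w hw
    rw [map_sub, Finsupp.sub_apply, hA]
    rw [h_coord i w hw (k i), if_pos rfl, sub_self]
  have hz : ∀ i : Fin n, (ι K i : FreeAlgebra K (Fin n)) ∈ ⨆ m : Fin r → ℤ, TAeig σ m := by
    intro i
    rw [← h_sum i]
    exact Submodule.sum_mem _ (fun m _ => le_iSup (fun m => TAeig σ m) m (h_eig i m))
  have hinj : Function.Injective (TAphi A) := TAphi_injective A hA_w
  have hsurj : Function.Surjective (TAphi A) := by
    intro x
    have hx := top_le_TAesup σ hz x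
    rw [Submodule.mem_iSup_iff_exists_finsupp] at hx
    obtain ⟨f, hf, hfs⟩ := hx
    have : x ∈ LinearMap.range (TAphi A).toLinearMap := by
      rw [← hfs, Finsupp.sum]
      refine Submodule.sum_mem _ (fun m _ => ?_)
      obtain ⟨z, hz'⟩ := TAeig_le_range σ k A hr hpos hA_eig hA_w hW1 m (f m) (hf m)
      exact ⟨z, hz'⟩
    obtain ⟨z, hz'⟩ := this
    exact ⟨z, hz'⟩
  set β : FreeAlgebra K (Fin n) ≃ₐ[K] FreeAlgebra K (Fin n) :=
    AlgEquiv.ofBijective (TAphi A) ⟨hinj, hsurj⟩ with hβdef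
  refine ⟨β, fun t i => ?_⟩
  have hβ : β (ι K i) = A i := by
    rw [hβdef]
    show TAphi A (ι K i) = A i
    rw [TAphi, FreeAlgebra.lift_ι_apply]
  rw [hβ, hA_eig i t]
  have hsmul : β.symm (TAchar K r (k i) t • A i)
      = TAchar K r (k i) t • β.symm (A i) :=
    β.symm.toLinearEquiv.map_smul _ _
  rw [hsmul, ← hβ, AlgEquiv.symm_apply_apply]
  exact Submodule.smul_mem _ _ (Submodule.subset_span ⟨i, rfl⟩)
end

section
/- Let K be an algebraically closed field of characteristic zero, n, r ≥ 1, and let σ be a regular action of T_r = (K^×)^r on F_n = FreeAlgebra K (Fin n) with negative roots: there are integers k_{ij} ≤ −1 (1 ≤ i ≤ n, 1 ≤ j ≤ r) such that for every t and i, the element σ(t)(z_i) − (∏_j t_j^{k_{ij}}) • z_i has all of its homogeneous components in degrees ≥ 2. Then σ is linearizable. -/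
open FreeAlgebra

open FreeAlgebra

noncomputable section TorusAux

variable {K : Type} [Field K] {n r : ℕ}

/-- The character of the torus attached to an integer vector. -/
def chiU (m : Fin r → ℤ) (t : Fin r → Kˣ) : Kˣ := ∏ j, t j ^ m j

def chi (m : Fin r → ℤ) (t : Fin r → Kˣ) : K := ((chiU m t : Kˣ) : K)

lemma chiU_mul (m : Fin r → ℤ) (s t : Fin r → Kˣ) :
    chiU m (s * t) = chiU m s * chiU m t := by
  simp only [chiU, Pi.mul_apply, mul_zpow, Finset.prod_mul_distrib]

lemma chi_mul (m : Fin r → ℤ) (s t : Fin r → Kˣ) :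
    (chi m (s * t) : K) = chi m s * chi m t := by
  simp [chi, chiU_mul]

lemma chiU_one (m : Fin r → ℤ) : chiU m (1 : Fin r → Kˣ) = 1 := by
  simp [chiU]

lemma chi_one (m : Fin r → ℤ) : (chi m (1 : Fin r → Kˣ) : K) = 1 := by
  simp [chi, chiU_one]

lemma chi_add (m m' : Fin r → ℤ) (t : Fin r → Kˣ) :
    (chi (m + m') t : K) = chi m t * chi m' t := by
  simp [chi, chiU, Pi.add_apply, zpow_add, Finset.prod_mul_distrib]

lemma chi_zero (t : Fin r → Kˣ) : (chi (0 : Fin r → ℤ) t : K) = 1 := by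
  simp [chi, chiU]

lemma chi_ne_zero (m : Fin r → ℤ) (t : Fin r → Kˣ) : (chi m t : K) ≠ 0 :=
  Units.ne_zero _

/-- `chi` as a monoid hom. -/
def chiHom (m : Fin r → ℤ) : (Fin r → Kˣ) →* K where
  toFun := chi m
  map_one' := chi_one m
  map_mul' := chi_mul m

lemma upow_inj [CharZero K] (p q : ℤ)
    (h : (Units.mk0 (2 : K) two_ne_zero) ^ p = (Units.mk0 (2 : K) two_ne_zero) ^ q) :
    p = q := by
  set u : Kˣ := Units.mk0 (2 : K) two_ne_zero with hu
  by_contra hpq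
  have hd : u ^ (p - q) = 1 := by
    rw [zpow_sub, h, mul_inv_cancel]
  set d : ℤ := p - q with hdd
  have hd0 : d ≠ 0 := sub_ne_zero.2 hpq
  have hna : u ^ ((d.natAbs : ℤ)) = 1 := by
    rcases Int.natAbs_eq d with h1 | h1
    · rw [← h1, hd]
    · rw [← neg_neg ((d.natAbs : ℤ)), ← h1, zpow_neg, hd, inv_one]
  rw [zpow_natCast] at hna
  have hK : ((2 : K)) ^ d.natAbs = 1 := by
    have := congrArg (Units.val) hna
    simpa [hu] using this
  have h2 : (((2 ^ d.natAbs : ℕ) : K)) = ((1 : ℕ) : K) := by push_cast; simpa using hK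
  have := Nat.cast_injective (R := K) h2
  have : d.natAbs = 0 := by
    have h21 : (2 : ℕ) ^ d.natAbs = 1 := this
    by_contra hN
    have := Nat.pow_eq_one.1 h21
    omega
  exact hd0 (Int.natAbs_eq_zero.1 this)

lemma chi_inj [CharZero K] (hr : 0 < r) {m m' : Fin r → ℤ}
    (h : ∀ t : Fin r → Kˣ, (chi m t : K) = chi m' t) : m = m' := by
  funext j
  set u : Kˣ := Units.mk0 (2 : K) two_ne_zero with hu
  have ht := h (Function.update (1 : Fin r → Kˣ) j u)
  have hprod : ∀ m'' : Fin r → ℤ,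
      chiU m'' (Function.update (1 : Fin r → Kˣ) j u) = u ^ m'' j := by
    intro m''
    rw [chiU]
    rw [Fintype.prod_eq_single j]
    · rw [Function.update_self]
    · intro j' hj'
      rw [Function.update_of_ne hj', Pi.one_apply, one_zpow]
  have : (↑(u ^ m j) : K) = (↑(u ^ m' j) : K) := by
    simpa [chi, hprod] using ht
  exact upow_inj _ _ (Units.ext this)

/-- Uniqueness of Laurent expansions with coefficients in a `K`-vector space. -/
lemma laurent_unique [CharZero K] (hr : 0 < r) {Q : Type} [AddCommGroup Q] [Module K Q]
    (a : (Fin r → ℤ) →₀ Q)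
    (h : ∀ t : Fin r → Kˣ, (a.sum fun m q => (chi m t : K) • q) = 0) :
    a = 0 := by
  ext m0
  rw [Finsupp.coe_zero, Pi.zero_apply]
  by_contra hne
  classical
  set b := Module.Basis.ofVectorSpace K Q with hb
  have hrepr : b.repr (a m0) ≠ 0 := by
    simpa using (b.repr.map_eq_zero_iff).not.2 hne
  obtain ⟨ix, hix⟩ : ∃ ix, b.repr (a m0) ix ≠ 0 := by
    by_contra hc
    push_neg at hc
    exact hrepr (Finsupp.ext hc)
  set l : (Fin r → ℤ) →₀ K := a.mapRange (fun q => b.repr q ix) (by simp) with hl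
  have hLI : LinearIndependent K (fun m : Fin r → ℤ =>
      ((chiHom m : (Fin r → Kˣ) →* K) : (Fin r → Kˣ) → K)) := by
    refine (linearIndependent_monoidHom (Fin r → Kˣ) K).comp chiHom ?_
    intro m m' hmm
    exact chi_inj hr (fun t => congrFun (congrArg (fun f : (Fin r → Kˣ) →* K => (f : (Fin r → Kˣ) → K)) hmm) t)
  have hcomb : Finsupp.linearCombination K
      (fun m : Fin r → ℤ => ((chiHom m : (Fin r → Kˣ) →* K) : (Fin r → Kˣ) → K)) l = 0 := by
    rw [Finsupp.linearCombination_apply]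
    funext t
    have h1 : (l.sum fun m c => c • ((chiHom m : (Fin r → Kˣ) →* K) : (Fin r → Kˣ) → K)) t
        = l.sum fun m c => c * chi m t := by
      rw [Finsupp.sum, Finsupp.sum, Finset.sum_apply]
      refine Finset.sum_congr rfl fun m _ => ?_
      simp [chiHom]
    have h2 : (l.sum fun m c => c * chi m t)
        = a.sum fun m q => (b.repr q ix) * chi m t := by
      rw [hl]
      exact Finsupp.sum_mapRange_index (by simp)
    have h3 : (a.sum fun m q => (b.repr q ix) * chi m t) = 0 := by
      have h0 : b.repr (a.sum fun m q => (chi m t : K) • q) ix = 0 := by rw [h t]; simp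
      rw [map_finsuppSum, Finsupp.sum_apply] at h0
      rw [← h0, Finsupp.sum, Finsupp.sum]
      refine Finset.sum_congr rfl fun m _ => ?_
      rw [map_smul, Finsupp.smul_apply, smul_eq_mul, mul_comm]
    rw [Pi.zero_apply, h1, h2, h3]
  have hl0 : l = 0 := linearIndependent_iff.1 hLI l hcomb
  have : l m0 = 0 := by rw [hl0]; rfl
  rw [hl, Finsupp.mapRange_apply] at this
  exact hix this

end TorusAux

open FreeAlgebra


noncomputable section Grading

variable {K : Type} [Field K] {n : ℕ}

/-- The canonical algebra isomorphism with the monoid algebra on words. -/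
def EA (K : Type) [Field K] (n : ℕ) :
    FreeAlgebra K (Fin n) ≃ₐ[K] MonoidAlgebra K (FreeMonoid (Fin n)) :=
  equivMonoidAlgebraFreeMonoid

/-- Elements of the monoid algebra supported in words of length at least `e`. -/
def MSub (K : Type) [Field K] (n e : ℕ) :
    Submodule K (MonoidAlgebra K (FreeMonoid (Fin n))) where
  carrier := {f | ∀ u : FreeMonoid (Fin n), f.coeff u ≠ 0 → e ≤ u.length}
  add_mem' := by
    intro f g hf hg u hu
    rw [MonoidAlgebra.coeff_add, Finsupp.add_apply] at hu
    rcases ne_or_eq (f.coeff u) 0 with h | h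
    · exact hf u h
    · refine hg u fun h' => hu ?_
      rw [h, h', add_zero]
  zero_mem' := by intro u hu; simp at hu
  smul_mem' := by
    intro c f hf u hu
    rw [MonoidAlgebra.coeff_smul, Finsupp.smul_apply] at hu
    exact hf u fun h' => hu (by rw [h', smul_zero])

/-- Elements of the free algebra whose components all have degree at least `e`. -/
def SD (K : Type) [Field K] (n : ℕ) (e : ℕ) : Submodule K (FreeAlgebra K (Fin n)) :=
  (MSub K n e).comap (EA K n).toLinearMap

lemma mem_SD {e : ℕ} {x : FreeAlgebra K (Fin n)} :
    x ∈ SD K n e ↔ ∀ u : FreeMonoid (Fin n), (EA K n x).coeff u ≠ 0 → e ≤ u.length := by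
  rw [SD, Submodule.mem_comap]
  exact Iff.rfl

lemma SD_antitone {e e' : ℕ} (h : e ≤ e') : SD K n e' ≤ SD K n e := by
  intro x hx
  rw [mem_SD] at hx ⊢
  exact fun u hu => le_trans h (hx u hu)

lemma mem_SD_zero (x : FreeAlgebra K (Fin n)) : x ∈ SD K n 0 := by
  rw [mem_SD]
  exact fun u _ => Nat.zero_le _

lemma mul_mem_SD {a b : ℕ} {x y : FreeAlgebra K (Fin n)}
    (hx : x ∈ SD K n a) (hy : y ∈ SD K n b) : x * y ∈ SD K n (a + b) := by
  classical
  rw [mem_SD] at hx hy ⊢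
  intro u hu
  have hu' : u ∈ (EA K n (x * y)).coeff.support := Finsupp.mem_support_iff.2 hu
  rw [map_mul] at hu'
  obtain ⟨u1, hu1, u2, hu2, huu⟩ := Finset.mem_mul.1 (MonoidAlgebra.support_coeff_mul_subset _ _ hu')
  subst huu
  rw [FreeMonoid.length_mul]
  exact Nat.add_le_add (hx u1 (Finsupp.mem_support_iff.1 hu1)) (hy u2 (Finsupp.mem_support_iff.1 hu2))

lemma E_ι (i : Fin n) :
    EA K n (ι K i) = MonoidAlgebra.single (FreeMonoid.of i) (1 : K) := by
  show (FreeAlgebra.lift K fun x : Fin n =>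
      (MonoidAlgebra.of K (FreeMonoid (Fin n))) (FreeMonoid.of x)) (ι K i) = _
  rw [lift_ι_apply, MonoidAlgebra.of_apply]

lemma ι_mem_SD1 (i : Fin n) : ι K i ∈ SD K n 1 := by
  rw [mem_SD]
  intro u hu
  rw [E_ι] at hu
  have : u = FreeMonoid.of i := by
    by_contra hc
    exact hu (Finsupp.single_eq_of_ne' (Ne.symm hc))
  subst this
  simp [FreeMonoid.length_of]

/-- The word-product monoid hom into the free algebra. -/
def wp (K : Type) [Field K] (n : ℕ) : FreeMonoid (Fin n) →* FreeAlgebra K (Fin n) :=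
  FreeMonoid.lift (ι K)

lemma wp_of (i : Fin n) : wp K n (FreeMonoid.of i) = ι K i := rfl

lemma E_wp (u : FreeMonoid (Fin n)) :
    EA K n (wp K n u) = MonoidAlgebra.single u (1 : K) := by
  have : ((EA K n : FreeAlgebra K (Fin n) ≃* MonoidAlgebra K (FreeMonoid (Fin n))) :
      FreeAlgebra K (Fin n) →* MonoidAlgebra K (FreeMonoid (Fin n))).comp (wp K n)
      = MonoidAlgebra.of K (FreeMonoid (Fin n)) := by
    apply FreeMonoid.hom_eq
    intro i
    show (EA K n) (wp K n (FreeMonoid.of i)) = _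
    rw [wp_of, E_ι, MonoidAlgebra.of_apply]
  have h2 := DFunLike.congr_fun this u
  rw [MonoidAlgebra.of_apply] at h2
  exact h2

lemma E_symm_single (u : FreeMonoid (Fin n)) (c : K) :
    (EA K n).symm (MonoidAlgebra.single u c) = c • wp K n u := by
  apply (EA K n).injective
  rw [AlgEquiv.apply_symm_apply, map_smul, E_wp, MonoidAlgebra.smul_single', mul_one]

/-- Every element of the free algebra is the sum of its word components. -/
lemma rep (x : FreeAlgebra K (Fin n)) :
    x = ∑ u ∈ (EA K n x).coeff.support, (EA K n x).coeff u • wp K n u := by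
  apply (EA K n).injective
  rw [map_sum]
  have : ∀ u ∈ (EA K n x).coeff.support,
      EA K n ((EA K n x).coeff u • wp K n u) = MonoidAlgebra.single u ((EA K n x).coeff u) := by
    intro u _
    rw [map_smul, E_wp, MonoidAlgebra.smul_single', mul_one]
  rw [Finset.sum_congr rfl this]
  exact (MonoidAlgebra.sum_coeff_single (EA K n x)).symm

lemma wp_mem_SD (u : FreeMonoid (Fin n)) : wp K n u ∈ SD K n u.length := by
  rw [mem_SD]
  intro u' hu'
  rw [E_wp] at hu'
  have : u' = u := by
    by_contra hc
    exact hu' (Finsupp.single_eq_of_ne' (Ne.symm hc))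
  subst this
  exact le_refl _

lemma SD_step {e : ℕ} {x : FreeAlgebra K (Fin n)} (hx : x ∈ SD K n e)
    (h : ∀ u : FreeMonoid (Fin n), u.length = e → (EA K n x).coeff u = 0) :
    x ∈ SD K n (e + 1) := by
  rw [mem_SD] at hx ⊢
  intro u hu
  have h1 := hx u hu
  rcases Nat.lt_or_ge e u.length with h2 | h2
  · exact h2
  · have : u.length = e := le_antisymm h2 h1
    exact absurd (h u this) hu

lemma eq_zero_of_mem_all_SD {x : FreeAlgebra K (Fin n)} (h : ∀ e, x ∈ SD K n e) : x = 0 := by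
  have : EA K n x = 0 := by
    ext u
    by_contra hc
    have := (mem_SD.1 (h (u.length + 1))) u hc
    omega
  have := congrArg (EA K n).symm this
  rw [AlgEquiv.symm_apply_apply] at this
  simpa using this

lemma higherDegree_le_SD2 : FreeAlgebra.higherDegree K n ≤ SD K n 2 := by
  rw [FreeAlgebra.higherDegree]
  refine iSup_le fun kk => ?_
  obtain ⟨kv, hkv⟩ := kk
  have hspan : Submodule.span K (Set.range (ι K : Fin n → FreeAlgebra K (Fin n))) ≤ SD K n 1 := by
    rw [Submodule.span_le]
    rintro x ⟨i, rfl⟩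
    exact ι_mem_SD1 i
  have hpow : ∀ kv' : ℕ,
      Submodule.span K (Set.range (ι K : Fin n → FreeAlgebra K (Fin n))) ^ (kv' + 1)
        ≤ SD K n (kv' + 1) := by
    intro kv'
    induction kv' with
    | zero => simpa using hspan
    | succ kv'' ih =>
      rw [pow_succ]
      refine Submodule.mul_le.2 fun x hx y hy => ?_
      exact mul_mem_SD (ih hx) (hspan hy)
  obtain ⟨kv2, rfl⟩ : ∃ kv2, kv = kv2 + 2 := ⟨kv - 2, by omega⟩
  refine le_trans (hpow (kv2 + 1)) (SD_antitone ?_)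
  omega

end Grading

noncomputable section Pair

open FreeAlgebra

variable {K : Type} [Field K] {n r : ℕ}

/-- Sum of the weights of the letters of a word. -/
def ksum (k : Fin n → Fin r → ℤ) (u : FreeMonoid (Fin n)) : Fin r → ℤ :=
  ((FreeMonoid.toList u).map k).sum

lemma ksum_one (k : Fin n → Fin r → ℤ) : ksum k (1 : FreeMonoid (Fin n)) = 0 := rfl

lemma ksum_of (k : Fin n → Fin r → ℤ) (i : Fin n) : ksum k (FreeMonoid.of i) = k i := by
  simp [ksum]

lemma ksum_mul (k : Fin n → Fin r → ℤ) (u v : FreeMonoid (Fin n)) :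
    ksum k (u * v) = ksum k u + ksum k v := by
  simp [ksum, FreeMonoid.toList_mul]

lemma ksum_le (k : Fin n → Fin r → ℤ) (hneg : ∀ i j, k i j ≤ -1)
    (u : FreeMonoid (Fin n)) (j : Fin r) : ksum k u j ≤ -(u.length : ℤ) := by
  refine FreeMonoid.inductionOn u ?_ ?_ ?_
  · simp [ksum_one]
  · intro i
    rw [ksum_of]
    simpa [FreeMonoid.length_of] using hneg i j
  · intro x y hx hy
    rw [ksum_mul, FreeMonoid.length_mul, Pi.add_apply]
    push_cast
    omega

/-- Two algebra endomorphisms that agree to first order on generators agree to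
"one higher degree" on all elements of `SD e`. -/
lemma pair_wp (φ ψ : FreeAlgebra K (Fin n) →ₐ[K] FreeAlgebra K (Fin n))
    (h1 : ∀ i, φ (ι K i) - ψ (ι K i) ∈ SD K n 2) (h2 : ∀ i, ψ (ι K i) ∈ SD K n 1)
    (u : FreeMonoid (Fin n)) :
    ψ (wp K n u) ∈ SD K n u.length ∧ φ (wp K n u) ∈ SD K n u.length ∧
      φ (wp K n u) - ψ (wp K n u) ∈ SD K n (u.length + 1) := by
  have h2' : ∀ i, φ (ι K i) ∈ SD K n 1 := by
    intro i
    have := Submodule.add_mem _ (SD_antitone (by omega) (h1 i)) (h2 i)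
    simpa using this
  refine FreeMonoid.inductionOn u ?_ ?_ ?_
  · refine ⟨?_, ?_, ?_⟩ <;> simp [mem_SD_zero, map_one]
  · intro i
    simp only [wp_of, FreeMonoid.length_of]
    exact ⟨h2 i, h2' i, h1 i⟩
  · intro x y hx hy
    obtain ⟨hx1, hx2, hx3⟩ := hx
    obtain ⟨hy1, hy2, hy3⟩ := hy
    rw [map_mul (wp K n)]  -- wp (x*y) = wp x * wp y
    constructor
    · rw [map_mul, FreeMonoid.length_mul]
      exact mul_mem_SD hx1 hy1
    constructor
    · rw [map_mul, FreeMonoid.length_mul]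
      exact mul_mem_SD hx2 hy2
    · rw [map_mul, map_mul, FreeMonoid.length_mul]
      have key : φ (wp K n x) * φ (wp K n y) - ψ (wp K n x) * ψ (wp K n y)
          = (φ (wp K n x) - ψ (wp K n x)) * φ (wp K n y)
            + ψ (wp K n x) * (φ (wp K n y) - ψ (wp K n y)) := by noncomm_ring
      rw [key]
      refine Submodule.add_mem _ ?_ ?_
      · have := mul_mem_SD hx3 hy2
        exact SD_antitone (by omega) this
      · have := mul_mem_SD hx1 hy3
        exact SD_antitone (by omega) this

lemma pair_SD (φ ψ : FreeAlgebra K (Fin n) →ₐ[K] FreeAlgebra K (Fin n))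
    (h1 : ∀ i, φ (ι K i) - ψ (ι K i) ∈ SD K n 2) (h2 : ∀ i, ψ (ι K i) ∈ SD K n 1)
    {e : ℕ} {x : FreeAlgebra K (Fin n)} (hx : x ∈ SD K n e) :
    φ x - ψ x ∈ SD K n (e + 1) := by
  rw [rep x, map_sum, map_sum, ← Finset.sum_sub_distrib]
  refine Submodule.sum_mem _ fun u hu => ?_
  rw [map_smul, map_smul, ← smul_sub]
  refine Submodule.smul_mem _ _ ?_
  have hlen : e ≤ u.length := mem_SD.1 hx u (Finsupp.mem_support_iff.1 hu)
  exact SD_antitone (by omega) (pair_wp φ ψ h1 h2 u).2.2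

/-- The diagonal linear substitution attached to `t`. -/
def Tt (k : Fin n → Fin r → ℤ) (t : Fin r → Kˣ) :
    FreeAlgebra K (Fin n) →ₐ[K] FreeAlgebra K (Fin n) :=
  FreeAlgebra.lift K fun i => (chi (k i) t : K) • ι K i

lemma Tt_ι (k : Fin n → Fin r → ℤ) (t : Fin r → Kˣ) (i : Fin n) :
    Tt k t (ι K i) = (chi (k i) t : K) • ι K i := lift_ι_apply _ _

lemma Tt_wp (k : Fin n → Fin r → ℤ) (t : Fin r → Kˣ) (u : FreeMonoid (Fin n)) :
    Tt k t (wp K n u) = (chi (ksum k u) t : K) • wp K n u := by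
  refine FreeMonoid.inductionOn u ?_ ?_ ?_
  · simp [ksum_one, chi_zero, map_one]
  · intro i
    simp [wp_of, Tt_ι, ksum_of]
  · intro x y hx hy
    rw [map_mul (wp K n), map_mul, hx, hy, ksum_mul, chi_add, smul_mul_smul_comm]

lemma Tt_coeff (k : Fin n → Fin r → ℤ) (t : Fin r → Kˣ) (v : FreeAlgebra K (Fin n))
    (u : FreeMonoid (Fin n)) :
    (EA K n (Tt k t v)).coeff u = (EA K n v).coeff u * (chi (ksum k u) t : K) := by
  classical
  conv_lhs => rw [rep v]
  rw [map_sum, map_sum, MonoidAlgebra.coeff_sum, Finsupp.finset_sum_apply]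
  have hterm : ∀ u' : FreeMonoid (Fin n),
      (EA K n (Tt k t ((EA K n v).coeff u' • wp K n u'))).coeff u
        = (if u' = u then (EA K n v).coeff u' * (chi (ksum k u) t : K) else 0) := by
    intro u'
    rw [map_smul, Tt_wp, map_smul, map_smul, E_wp]
    rw [smul_smul, MonoidAlgebra.coeff_smul, Finsupp.smul_apply, MonoidAlgebra.single_apply]
    split_ifs with h
    · subst h; simp [mul_comm]
    · simp
  rw [Finset.sum_congr rfl fun u' _ => hterm u']
  rw [Finset.sum_ite_eq' ((EA K n v).coeff.support) u (fun u' => (EA K n v).coeff u' * (chi (ksum k u) t : K))]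
  split_ifs with h
  · rfl
  · rw [Finsupp.notMem_support_iff.1 h, zero_mul]

end Pair

noncomputable section Main

open FreeAlgebra

variable {K : Type} [Field K] {n r : ℕ}

lemma reg_decomp [CharZero K] (hr : 0 < r)
    (σ : (Fin r → Kˣ) →* (FreeAlgebra K (Fin n) ≃ₐ[K] FreeAlgebra K (Fin n)))
    (k : Fin n → Fin r → ℤ)
    (hroots : ∀ t i, σ t (ι K i) - (chi (k i) t : K) • ι K i ∈ FreeAlgebra.higherDegree K n)
    (i : Fin n)
    (a : (Fin r → ℤ) →₀ FreeAlgebra K (Fin n))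
    (ha : ∀ t, σ t (ι K i) = a.sum fun m c => (chi m t : K) • c) :
    (ι K i = ∑ m ∈ a.support, a m) ∧
    (∀ m t, σ t (a m) = (chi m t : K) • a m) ∧
    (∀ m, m ≠ k i → a m ∈ FreeAlgebra.higherDegree K n) ∧
    (a (k i) - ι K i ∈ FreeAlgebra.higherDegree K n) := by
  have hdecomp : ι K i = ∑ m ∈ a.support, a m := by
    have h1 := ha 1
    rw [map_one σ, AlgEquiv.one_apply] at h1
    rw [h1, Finsupp.sum]
    refine Finset.sum_congr rfl fun m _ => ?_
    rw [chi_one, one_smul]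
  have hequiv : ∀ m s, σ s (a m) = (chi m s : K) • a m := by
    intro m0 s
    set b : (Fin r → ℤ) →₀ FreeAlgebra K (Fin n) :=
      ⟨a.support, fun m => (chi m s : K) • a m, by
        intro m
        simp [Finsupp.mem_support_iff, smul_eq_zero, chi_ne_zero m s]⟩ with hb
    have hbapp : ∀ m, b m = (chi m s : K) • a m := fun m => rfl
    set g := a.mapRange (fun x => σ s x) (map_zero _) - b with hg
    have hgsum : ∀ t, (g.sum fun m q => (chi m t : K) • q) = 0 := by
      intro t
      rw [hg, Finsupp.sum_sub_index (fun m q1 q2 => smul_sub _ _ _)]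
      have hA : ((a.mapRange (fun x => σ s x) (map_zero _)).sum fun m q => (chi m t : K) • q)
          = σ s (σ t (ι K i)) := by
        rw [Finsupp.sum_mapRange_index (by simp)]
        rw [ha t, map_finsuppSum]
        refine Finsupp.sum_congr fun m _ => ?_
        rw [map_smul]
      have hB : (b.sum fun m q => (chi m t : K) • q) = σ s (σ t (ι K i)) := by
        have hst : σ s (σ t (ι K i)) = σ (s * t) (ι K i) := by
          rw [map_mul σ, AlgEquiv.mul_apply]
        rw [hst, ha (s * t), Finsupp.sum, Finsupp.sum]
        refine Finset.sum_congr rfl fun m _ => ?_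
        rw [hbapp, smul_smul, chi_mul, mul_comm]
      rw [hA, hB, sub_self]
    have hg0 : g = 0 := laurent_unique hr g hgsum
    have : a.mapRange (fun x => σ s x) (map_zero _) = b := by
      rwa [sub_eq_zero] at hg0
    have := DFunLike.congr_fun this m0
    rwa [Finsupp.mapRange_apply, hbapp] at this
  have hH : ∀ m, (if m = k i then a m - ι K i else a m) ∈ FreeAlgebra.higherDegree K n := by
    intro m0
    set π := (FreeAlgebra.higherDegree K n).mkQ with hπ
    set g := a.mapRange (fun x => π x) (map_zero _) - Finsupp.single (k i) (π (ι K i)) with hg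
    have hgsum : ∀ t, (g.sum fun m q => (chi m t : K) • q) = 0 := by
      intro t
      rw [hg, Finsupp.sum_sub_index (fun m q1 q2 => smul_sub _ _ _)]
      have hA : ((a.mapRange (fun x => π x) (map_zero _)).sum fun m q => (chi m t : K) • q)
          = π (σ t (ι K i)) := by
        rw [Finsupp.sum_mapRange_index (by simp)]
        rw [ha t, map_finsuppSum]
        refine Finsupp.sum_congr fun m _ => ?_
        rw [map_smul]
      have hB : ((Finsupp.single (k i) (π (ι K i))).sum fun m q => (chi m t : K) • q)
          = (chi (k i) t : K) • π (ι K i) := by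
        rw [Finsupp.sum_single_index (by simp)]
      rw [hA, hB, ← map_smul, ← map_sub]
      rw [hπ, Submodule.mkQ_apply, Submodule.Quotient.mk_eq_zero]
      exact hroots t i
    have hg0 : g = 0 := laurent_unique hr g hgsum
    rw [hg] at hg0
    have hmr : a.mapRange (fun x => π x) (map_zero _)
        = Finsupp.single (k i) (π (ι K i)) := sub_eq_zero.1 hg0
    have hall : ∀ m, π (a m) = Finsupp.single (k i) (π (ι K i)) m := by
      intro m
      have h1 := DFunLike.congr_fun hmr m
      rwa [Finsupp.mapRange_apply] at h1
    split_ifs with hmk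
    · subst hmk
      have h1 := hall (k i)
      rw [Finsupp.single_eq_same] at h1
      have h2 : π (a (k i) - ι K i) = 0 := by rw [map_sub, h1, sub_self]
      rwa [hπ, Submodule.mkQ_apply, Submodule.Quotient.mk_eq_zero] at h2
    · have h1 := hall m0
      rw [Finsupp.single_eq_of_ne' (Ne.symm hmk)] at h1
      rw [hπ, Submodule.mkQ_apply, Submodule.Quotient.mk_eq_zero] at h1
      exact h1
  refine ⟨hdecomp, hequiv, fun m hm => ?_, ?_⟩
  · have := hH m
    rwa [if_neg hm] at this
  · have := hH (k i)
    rwa [if_pos rfl] at this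

end Main

noncomputable section Main2

open FreeAlgebra

variable {K : Type} [Field K] {n r : ℕ}

/-- Equivariance of word products in the `w` generators. -/
lemma sigma_WW
    (σ : (Fin r → Kˣ) →* (FreeAlgebra K (Fin n) ≃ₐ[K] FreeAlgebra K (Fin n)))
    (k : Fin n → Fin r → ℤ) (w : Fin n → FreeAlgebra K (Fin n))
    (hw : ∀ t i, σ t (w i) = (chi (k i) t : K) • w i)
    (t : Fin r → Kˣ) (u : FreeMonoid (Fin n)) :
    σ t (FreeMonoid.lift w u) = (chi (ksum k u) t : K) • FreeMonoid.lift w u := by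
  refine FreeMonoid.inductionOn u ?_ ?_ ?_
  · simp [ksum_one, chi_zero, map_one]
  · intro i
    simp [FreeMonoid.lift_eval_of, ksum_of, hw t i]
  · intro x y hx hy
    rw [map_mul (FreeMonoid.lift w), map_mul, hx, hy, ksum_mul, chi_add, smul_mul_smul_comm]

lemma WW_eq_B (w : Fin n → FreeAlgebra K (Fin n)) (u : FreeMonoid (Fin n)) :
    FreeMonoid.lift w u = (FreeAlgebra.lift K w) (wp K n u) := by
  have : (((FreeAlgebra.lift K w : FreeAlgebra K (Fin n) →ₐ[K] FreeAlgebra K (Fin n)) :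
      FreeAlgebra K (Fin n) →* FreeAlgebra K (Fin n))).comp (wp K n) = FreeMonoid.lift w := by
    apply FreeMonoid.hom_eq
    intro i
    show (FreeAlgebra.lift K w) (wp K n (FreeMonoid.of i)) = _
    rw [wp_of, lift_ι_apply, FreeMonoid.lift_eval_of]
  exact (DFunLike.congr_fun this u).symm

/-- The key eigen-coordinate fact: the degree-`e` component of a weight vector is
supported on words of weight `m`. -/
lemma eig [CharZero K] (hr : 0 < r)
    (σ : (Fin r → Kˣ) →* (FreeAlgebra K (Fin n) ≃ₐ[K] FreeAlgebra K (Fin n)))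
    (k : Fin n → Fin r → ℤ)
    (hroots : ∀ t i, σ t (ι K i) - (chi (k i) t : K) • ι K i ∈ FreeAlgebra.higherDegree K n)
    (m : Fin r → ℤ) (v : FreeAlgebra K (Fin n)) (e : ℕ)
    (hv : ∀ t, σ t v = (chi m t : K) • v) (hve : v ∈ SD K n e)
    (u : FreeMonoid (Fin n)) (hu : u.length = e) (hc : (EA K n v).coeff u ≠ 0) :
    ksum k u = m := by
  have hpair : ∀ t : Fin r → Kˣ, σ t v - Tt k t v ∈ SD K n (e + 1) := by
    intro t
    refine pair_SD (σ t).toAlgHom (Tt k t) ?_ ?_ hve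
    · intro i
      rw [Tt_ι]
      exact higherDegree_le_SD2 (hroots t i)
    · intro i
      rw [Tt_ι]
      exact Submodule.smul_mem _ _ (ι_mem_SD1 i)
  have hcoeff : ∀ t : Fin r → Kˣ, (chi m t : K) = (chi (ksum k u) t : K) := by
    intro t
    have h0 : (EA K n (σ t v - Tt k t v)).coeff u = 0 := by
      by_contra hne
      have := mem_SD.1 (hpair t) u hne
      omega
    rw [map_sub, MonoidAlgebra.coeff_sub, Finsupp.sub_apply, sub_eq_zero] at h0
    have hL : (EA K n (σ t v)).coeff u = (chi m t : K) * (EA K n v).coeff u := by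
      rw [hv t, map_smul, MonoidAlgebra.coeff_smul, Finsupp.smul_apply, smul_eq_mul]
    have hR : (EA K n (Tt k t v)).coeff u = (EA K n v).coeff u * (chi (ksum k u) t : K) :=
      Tt_coeff k t v u
    rw [hL, hR, mul_comm ((EA K n v).coeff u)] at h0
    exact mul_right_cancel₀ hc h0
  exact (chi_inj hr hcoeff).symm

end Main2

noncomputable section Main3

open FreeAlgebra

variable {K : Type} [Field K] {n r : ℕ}

lemma weight_mem_range [CharZero K] (hr : 0 < r)
    (σ : (Fin r → Kˣ) →* (FreeAlgebra K (Fin n) ≃ₐ[K] FreeAlgebra K (Fin n)))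
    (k : Fin n → Fin r → ℤ) (hneg : ∀ i j, k i j ≤ -1)
    (hroots : ∀ t i, σ t (ι K i) - (chi (k i) t : K) • ι K i ∈ FreeAlgebra.higherDegree K n)
    (w : Fin n → FreeAlgebra K (Fin n))
    (hw_eq : ∀ t i, σ t (w i) = (chi (k i) t : K) • w i)
    (hw_hd : ∀ i, w i - ι K i ∈ SD K n 2)
    (m : Fin r → ℤ) (v : FreeAlgebra K (Fin n))
    (hv : ∀ t, σ t v = (chi m t : K) • v) (hv1 : v ∈ SD K n 1) :
    v ∈ (FreeAlgebra.lift K w).range := by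
  classical
  set B := FreeAlgebra.lift K w with hB
  have hpairB : ∀ u : FreeMonoid (Fin n),
      B (wp K n u) ∈ SD K n u.length ∧
      B (wp K n u) - wp K n u ∈ SD K n (u.length + 1) := by
    intro u
    have h := pair_wp B (AlgHom.id K _)
      (fun i => by
        rw [AlgHom.id_apply, hB, lift_ι_apply]
        exact hw_hd i)
      (fun i => by rw [AlgHom.id_apply]; exact ι_mem_SD1 i) u
    exact ⟨h.2.1, by simpa using h.2.2⟩
  set j0 : Fin r := ⟨0, hr⟩ with hj0
  set E0 : ℕ := (-(m j0)).toNat + 1 with hE0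
  have key : ∀ d e (v' : FreeAlgebra K (Fin n)), 1 ≤ e → E0 ≤ e + d →
      (∀ t, σ t v' = (chi m t : K) • v') → v' ∈ SD K n e → v' ∈ B.range := by
    intro d
    induction d with
    | zero =>
      intro e v' he hE hv' hve
      have hall : ∀ e', e ≤ e' → v' ∈ SD K n e' := by
        intro e' he'
        refine Nat.le_induction hve ?_ e' he'
        intro e'' he'' ih
        refine SD_step ih ?_
        intro u hu
        by_contra hc
        have hk := eig hr σ k hroots m v' e'' hv' ih u hu hc
        have h1 : ksum k u j0 ≤ -(u.length : ℤ) := ksum_le k hneg u j0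
        rw [hk, hu] at h1
        have h2 : (-(m j0)) ≤ ((-(m j0)).toNat : ℤ) := Int.self_le_toNat _
        omega
      have hv0 : v' = 0 := eq_zero_of_mem_all_SD (fun e' => by
        rcases le_total e' e with h | h
        · exact SD_antitone h hve
        · exact hall e' h)
      rw [hv0]
      exact Subalgebra.zero_mem _
    | succ d ih =>
      intro e v' he hE hv' hve
      set f := (EA K n v').coeff.support.filter (fun u => u.length = e) with hf
      set c := ∑ u ∈ f, (EA K n v').coeff u • FreeMonoid.lift w u with hc
      have hmemf : ∀ u ∈ f, u.length = e ∧ (EA K n v').coeff u ≠ 0 := by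
        intro u hu
        rw [hf, Finset.mem_filter] at hu
        exact ⟨hu.2, Finsupp.mem_support_iff.1 hu.1⟩
      have hksum : ∀ u ∈ f, ksum k u = m := by
        intro u hu
        obtain ⟨h1, h2⟩ := hmemf u hu
        exact eig hr σ k hroots m v' e hv' hve u h1 h2
      have hc_range : c ∈ B.range := by
        refine Subalgebra.sum_mem _ fun u _ => Subalgebra.smul_mem _ ?_ _
        exact ⟨wp K n u, (WW_eq_B w u).symm⟩
      have hc_weight : ∀ t, σ t c = (chi m t : K) • c := by
        intro t
        rw [hc, map_sum, Finset.smul_sum]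
        refine Finset.sum_congr rfl fun u hu => ?_
        rw [map_smul, sigma_WW σ k w hw_eq t u, hksum u hu, smul_comm]
      have hc_SD : c ∈ SD K n e := by
        refine Submodule.sum_mem _ fun u hu => Submodule.smul_mem _ _ ?_
        rw [WW_eq_B w u]
        have h1 := (hpairB u).1
        rw [(hmemf u hu).1] at h1
        exact h1
      have hcoeff : ∀ u', u'.length = e → (EA K n c).coeff u' = (EA K n v').coeff u' := by
        intro u' hu'
        have hterm : ∀ u ∈ f, (EA K n ((EA K n v').coeff u • FreeMonoid.lift w u)).coeff u'
            = (if u = u' then (EA K n v').coeff u else 0) := by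
          intro u hu
          rw [map_smul, MonoidAlgebra.coeff_smul, Finsupp.smul_apply]
          have hWsplit : (EA K n (FreeMonoid.lift w u)).coeff u' = (if u = u' then (1:K) else 0) := by
            have hdiff := (hpairB u).2
            have h0 : (EA K n (B (wp K n u) - wp K n u)).coeff u' = 0 := by
              by_contra hne
              have hle := mem_SD.1 hdiff u' hne
              have := (hmemf u hu).1
              omega
            rw [map_sub, MonoidAlgebra.coeff_sub, Finsupp.sub_apply, sub_eq_zero] at h0
            rw [WW_eq_B w u, ← hB, h0, E_wp, MonoidAlgebra.single_apply]
          rw [hWsplit]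
          split_ifs with h
          · rw [smul_eq_mul, mul_one]
          · rw [smul_zero]
        rw [hc, map_sum, MonoidAlgebra.coeff_sum, Finsupp.finset_sum_apply, Finset.sum_congr rfl hterm,
          Finset.sum_ite_eq' f u' (fun u => (EA K n v').coeff u)]
        split_ifs with h
        · rfl
        · by_contra hne
          refine h ?_
          rw [hf, Finset.mem_filter]
          refine ⟨Finsupp.mem_support_iff.2 fun h' => hne ?_, hu'⟩
          rw [h']
      have hsub_SD : v' - c ∈ SD K n (e + 1) := by
        refine SD_step (Submodule.sub_mem _ hve hc_SD) ?_
        intro u' hu'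
        rw [map_sub, MonoidAlgebra.coeff_sub, Finsupp.sub_apply, hcoeff u' hu', sub_self]
      have hsub_w : ∀ t, σ t (v' - c) = (chi m t : K) • (v' - c) := by
        intro t
        rw [map_sub, hv' t, hc_weight t, smul_sub]
      have hrec := ih (e + 1) (v' - c) (by omega) (by omega) hsub_w hsub_SD
      have := Subalgebra.add_mem _ hrec hc_range
      simpa using this
  exact key E0 1 v (le_refl 1) (by omega) hv hv1

lemma B_injective (w : Fin n → FreeAlgebra K (Fin n))
    (hw_hd : ∀ i, w i - ι K i ∈ SD K n 2) :
    Function.Injective (FreeAlgebra.lift K w) := by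
  set B := FreeAlgebra.lift K w with hB
  refine (injective_iff_map_eq_zero B).2 fun v hv0 => ?_
  have hall : ∀ e, v ∈ SD K n e := by
    intro e
    induction e with
    | zero => exact mem_SD_zero v
    | succ e ihe =>
      have hd := pair_SD B (AlgHom.id K _)
        (fun i => by
          rw [AlgHom.id_apply, hB, lift_ι_apply]
          exact hw_hd i)
        (fun i => by rw [AlgHom.id_apply]; exact ι_mem_SD1 i) ihe
      rw [AlgHom.id_apply, hv0, zero_sub] at hd
      simpa using Submodule.neg_mem _ hd
  exact eq_zero_of_mem_all_SD hall

end Main3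

/-- Every regular torus action with negative roots on the free associative algebra over an
algebraically closed field of characteristic zero is linearizable. -/
theorem negative_root_torus_action_linearizable
    {K : Type} [Field K] [IsAlgClosed K] [CharZero K] {n r : ℕ}
    (hn : 1 ≤ n) (hr : 1 ≤ r)
    (σ : (Fin r → Kˣ) →* (FreeAlgebra K (Fin n) ≃ₐ[K] FreeAlgebra K (Fin n)))
    (hreg : TorusActionIsRegular σ)
    (k : Fin n → Fin r → ℤ)
    (hneg : ∀ (i : Fin n) (j : Fin r), k i j ≤ -1)
    (hroots : ∀ (t : Fin r → Kˣ) (i : Fin n),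
      σ t (ι K i) - ((∏ j : Fin r, (t j) ^ (k i j) : Kˣ) : K) • ι K i
        ∈ FreeAlgebra.higherDegree K n) :
    TorusActionIsLinearizable σ := by
  classical
  have hr0 : 0 < r := hr
  have hroots' : ∀ (t : Fin r → Kˣ) (i : Fin n),
      σ t (ι K i) - (chi (k i) t : K) • ι K i ∈ FreeAlgebra.higherDegree K n := hroots
  set a : Fin n → ((Fin r → ℤ) →₀ FreeAlgebra K (Fin n)) :=
    fun i => Classical.choose (hreg i) with ha
  have haspec : ∀ i (t : Fin r → Kˣ),
      σ t (ι K i) = (a i).sum fun m c => (chi m t : K) • c :=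
    fun i t => Classical.choose_spec (hreg i) t
  have hdec := fun i => reg_decomp hr0 σ k hroots' i (a i) (haspec i)
  set w : Fin n → FreeAlgebra K (Fin n) := fun i => a i (k i) with hw
  have hw_eq : ∀ (t : Fin r → Kˣ) i, σ t (w i) = (chi (k i) t : K) • w i :=
    fun t i => (hdec i).2.1 (k i) t
  have hw_hd2 : ∀ i, w i - ι K i ∈ SD K n 2 :=
    fun i => higherDegree_le_SD2 (hdec i).2.2.2
  set B := FreeAlgebra.lift K w with hB
  have hinj : Function.Injective B := B_injective w hw_hd2
  have hrange : ∀ x, x ∈ B.range := by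
    intro x
    induction x using FreeAlgebra.induction with
    | grade0 r' => exact Subalgebra.algebraMap_mem _ r'
    | mul x y hx hy => exact Subalgebra.mul_mem _ hx hy
    | add x y hx hy => exact Subalgebra.add_mem _ hx hy
    | grade1 i =>
      rw [(hdec i).1]
      refine Subalgebra.sum_mem _ fun m _ => ?_
      refine weight_mem_range hr0 σ k hneg hroots' w hw_eq hw_hd2 m (a i m)
        (fun t => (hdec i).2.1 m t) ?_
      by_cases hmk : m = k i
      · subst hmk
        show w i ∈ SD K n 1
        have h1 := Submodule.add_mem _ (SD_antitone (by omega) (hw_hd2 i)) (ι_mem_SD1 i)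
        simpa using h1
      · exact SD_antitone (by omega) (higherDegree_le_SD2 ((hdec i).2.2.1 m hmk))
  have hsurj : Function.Surjective B := fun y => (AlgHom.mem_range B).1 (hrange y)
  set β := AlgEquiv.ofBijective B ⟨hinj, hsurj⟩ with hβ
  refine ⟨β, fun t i => ?_⟩
  have hβι : β (ι K i) = w i := by
    show B (ι K i) = w i
    rw [hB, lift_ι_apply]
  have hβsymm : β.symm (w i) = ι K i := by
    apply β.injective
    rw [AlgEquiv.apply_symm_apply, hβι]
  rw [hβι, hw_eq t i, map_smul, hβsymm]
  exact Submodule.smul_mem _ _ (Submodule.subset_span ⟨i, rfl⟩)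
end
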